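/- arXiv:2404.11679 — 5 statements merged into one kernel-verified Lean document; each statement's English description precedes it below -/
import Mathlib

section
/- Let (X,d,μ) be a complete, geodesic metric measure space with μ a C-doubling measure, diam(X)=1 and μ(X)=1, equipped with a multiresolution family 𝓑 with constant A ≥ 1. Then for every ε > 0 there exists a constant K > 0, depending only on ε, C and A (and not on the set E), such that for every set E ⊆ X, the sum of μ(B) over all balls B ∈ 𝓑 satisfying B ∩ E ≠ ∅ and sparse(E,B) ≥ ε is at most K. -/
open Metric MeasureTheory
open scoped Classical ENNReal

noncomputable section

/-- The sparsity of a set `E` in the closed ball `B(c,r)`: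
`sparse(E,B) = sup { dist(x, E ∩ B) : x ∈ B } / r`. -/
def sparseIn {X : Type*} [MetricSpace X] (E : Set X) (c : X) (r : ℝ) : ℝ :=
  (⨆ x : (Metric.closedBall c r), Metric.infDist (x : X) (E ∩ Metric.closedBall c r)) / r

/-- A metric space is geodesic if every pair of points is joined by an isometric
embedding of the interval `[0, d(x,y)]`. -/
def IsGeodesicSpace (X : Type*) [MetricSpace X] : Prop :=
  ∀ x y : X, ∃ f : ℝ → X, f 0 = x ∧ f (dist x y) = y ∧
    ∀ s ∈ Set.Icc (0 : ℝ) (dist x y), ∀ t ∈ Set.Icc (0 : ℝ) (dist x y),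
      dist (f s) (f t) = |s - t|

/-- A `C`-doubling measure: nonzero, finite on balls, and doubling with constant `C`. -/
def IsDoubling {X : Type*} [MetricSpace X] [MeasurableSpace X]
    (μ : MeasureTheory.Measure X) (C : ℝ) : Prop :=
  μ ≠ 0 ∧ (∀ (x : X) (r : ℝ), μ (Metric.closedBall x r) < ⊤) ∧
    ∀ (x : X) (r : ℝ),
      μ (Metric.closedBall x (2 * r)) ≤ ENNReal.ofReal C * μ (Metric.closedBall x r)

/-- An `s`-net: `s`-separated and every point of `X` is within distance `< s` of it. -/
def IsNet {X : Type*} [MetricSpace X] (s : ℝ) (N : Set X) : Prop :=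
  (∀ x ∈ N, ∀ y ∈ N, x ≠ y → s ≤ dist x y) ∧ ∀ z : X, ∃ x ∈ N, dist z x < s

/-- Iterated doubling. -/
lemma dbl_pow {X : Type*} [MetricSpace X] [MeasurableSpace X] {μ : Measure X} {C : ℝ}
    (hd : ∀ (x : X) (r : ℝ), μ (closedBall x (2 * r)) ≤ ENNReal.ofReal C * μ (closedBall x r))
    (x : X) (R : ℝ) (n : ℕ) :
    μ (closedBall x (2 ^ n * R)) ≤ (ENNReal.ofReal C) ^ n * μ (closedBall x R) := by
  induction n with
  | zero => simp
  | succ n ih =>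
      have h2 : (2 : ℝ) ^ (n + 1) * R = 2 * (2 ^ n * R) := by ring
      rw [h2]
      calc μ (closedBall x (2 * (2 ^ n * R)))
          ≤ ENNReal.ofReal C * μ (closedBall x (2 ^ n * R)) := hd x _
        _ ≤ ENNReal.ofReal C * ((ENNReal.ofReal C) ^ n * μ (closedBall x R)) := by
            exact mul_le_mul_right ih _
        _ = (ENNReal.ofReal C) ^ (n + 1) * μ (closedBall x R) := by ring

lemma dbl_le {X : Type*} [MetricSpace X] [MeasurableSpace X] {μ : Measure X} {C : ℝ}
    (hd : ∀ (x : X) (r : ℝ), μ (closedBall x (2 * r)) ≤ ENNReal.ofReal C * μ (closedBall x r))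
    (x : X) {R R' : ℝ} (n : ℕ) (h : R' ≤ 2 ^ n * R) :
    μ (closedBall x R') ≤ (ENNReal.ofReal C) ^ n * μ (closedBall x R) :=
  le_trans (measure_mono (closedBall_subset_closedBall h)) (dbl_pow hd x R n)

set_option maxHeartbeats 2000000 in
theorem key (C A ε : ℝ) (hC : 0 < C) (hA : 1 ≤ A) (hε : 0 < ε) (hε1 : ε ≤ 1) :
    ∃ K : ℝ, 0 < K ∧
      ∀ (X : Type) [MetricSpace X] [CompleteSpace X] [MeasurableSpace X] [BorelSpace X]
        (μ : MeasureTheory.Measure X) (N : ℕ → Set X),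
        IsGeodesicSpace X →
        IsDoubling μ C →
        Metric.diam (Set.univ : Set X) = 1 →
        μ Set.univ = 1 →
        (∀ k : ℕ, IsNet ((2 : ℝ) ^ (-(k : ℤ))) (N k)) →
        (∀ k : ℕ, N k ⊆ N (k + 1)) →
        ∀ E : Set X,
          (∑' (k : ℕ) (c : N k),
              if (Metric.closedBall (c : X) (A * 2 ^ (-(k : ℤ))) ∩ E).Nonempty ∧
                  ε ≤ sparseIn E (c : X) (A * 2 ^ (-(k : ℤ)))
                then μ (Metric.closedBall (c : X) (A * 2 ^ (-(k : ℤ))))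
                else 0) ≤ ENNReal.ofReal K := by
  -- choose the integer constants
  obtain ⟨m, hm⟩ : ∃ m : ℕ, 32 / ε ≤ 2 ^ m := (pow_unbounded_of_one_lt (32 / ε) one_lt_two).imp
    fun n h => h.le
  obtain ⟨j, hj⟩ : ∃ j : ℕ, 8 * A + 8 ≤ 2 ^ j := (pow_unbounded_of_one_lt (8 * A + 8) one_lt_two).imp
    fun n h => h.le
  refine ⟨C ^ m * ((2 * m + 1 : ℕ) * C ^ j), by positivity, ?_⟩
  intro X _ _ _ _ μ N hgeo hdbl hdiam hμuniv hN hnest E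
  obtain ⟨hμ0, hμfin, hd⟩ := hdbl
  set C₀ : ℝ≥0∞ := ENNReal.ofReal C with hC₀
  have hC₀0 : C₀ ≠ 0 := by
    simp only [hC₀, ne_eq, ENNReal.ofReal_eq_zero, not_le]
    exact hC
  have hC₀top : C₀ ≠ ⊤ := ENNReal.ofReal_ne_top
  -- basic geometry
  have hXne : Nonempty X := by
    by_contra h
    rw [not_nonempty_iff] at h
    rw [Set.univ_eq_empty_iff.2 h] at hμuniv
    simp at hμuniv
  have hbdd : Bornology.IsBounded (Set.univ : Set X) := by
    rw [Metric.isBounded_iff_ediam_ne_top]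
    intro h
    rw [Metric.diam, h] at hdiam
    simp at hdiam
  have ball_univ : ∀ (x : X) (R : ℝ), 1 ≤ R → closedBall x R = Set.univ := by
    intro x R hR
    apply Set.eq_univ_of_forall
    intro y
    rw [mem_closedBall]
    calc dist y x ≤ diam (Set.univ : Set X) :=
          dist_le_diam_of_mem hbdd (Set.mem_univ _) (Set.mem_univ _)
      _ = 1 := hdiam
      _ ≤ R := hR
  have pos : ∀ (x : X) (R : ℝ), 0 < R → 0 < μ (closedBall x R) := by
    intro x R hR
    obtain ⟨n, hn⟩ : ∃ n : ℕ, 1 / R ≤ 2 ^ n :=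
      (pow_unbounded_of_one_lt (1 / R) one_lt_two).imp fun n h => h.le
    have h1 : (1:ℝ) ≤ 2 ^ n * R := by
      rw [div_le_iff₀ hR] at hn
      linarith
    have := dbl_pow hd x R n
    rw [ball_univ x _ h1, hμuniv] at this
    by_contra hzero
    push_neg at hzero
    rw [le_zero_iff] at hzero
    rw [hzero, mul_zero] at this
    simp at this
  -- radii
  set r : ℕ → ℝ := fun k => A * 2 ^ (-(k : ℤ)) with hrdef
  have hρpos : ∀ k : ℕ, (0:ℝ) < 2 ^ (-(k : ℤ)) := fun k => zpow_pos two_pos _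
  have hrpos : ∀ k, 0 < r k := fun k => mul_pos (lt_of_lt_of_le one_pos hA) (hρpos k)
  -- finiteness of nets
  -- each small ball at level k has measure at least (C₀ ^ (k + 2))⁻¹
  have small_lb : ∀ (k : ℕ) (c : X), (C₀ ^ (k + 2))⁻¹ ≤ μ (closedBall c (2 ^ (-(k:ℤ)) / 4)) := by
    intro k c
    have h1 : (1:ℝ) ≤ 2 ^ (k + 2) * (2 ^ (-(k:ℤ)) / 4) := by
      have : (2:ℝ) ^ (k + 2) * (2 ^ (-(k:ℤ)) / 4) = 2 ^ ((k:ℤ) + 2) * 2 ^ (-(k:ℤ)) / 4 := by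
        rw [← zpow_natCast (2:ℝ) (k + 2)]
        push_cast
        ring
      rw [this, ← zpow_add₀ (two_ne_zero)]
      norm_num
    have h2 := dbl_pow hd c (2 ^ (-(k:ℤ)) / 4) (k + 2)
    rw [ball_univ c _ (by
      calc (1:ℝ) ≤ 2 ^ (k + 2) * (2 ^ (-(k:ℤ)) / 4) := h1
        _ ≤ _ := le_refl _), hμuniv] at h2
    have hCpow0 : C₀ ^ (k + 2) ≠ 0 := pow_ne_zero _ hC₀0
    have hCpowtop : C₀ ^ (k + 2) ≠ ⊤ := ENNReal.pow_ne_top hC₀top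
    calc (C₀ ^ (k + 2))⁻¹ = (C₀ ^ (k + 2))⁻¹ * 1 := (mul_one _).symm
      _ ≤ (C₀ ^ (k + 2))⁻¹ * (C₀ ^ (k + 2) * μ (closedBall c (2 ^ (-(k:ℤ)) / 4))) :=
          mul_le_mul_right h2 _
      _ = ((C₀ ^ (k + 2))⁻¹ * C₀ ^ (k + 2)) * μ (closedBall c (2 ^ (-(k:ℤ)) / 4)) := by ring
      _ = μ (closedBall c (2 ^ (-(k:ℤ)) / 4)) := by
          rw [ENNReal.inv_mul_cancel hCpow0 hCpowtop, one_mul]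
  have disj : ∀ (k : ℕ) (c c' : X), c ∈ N k → c' ∈ N k → c ≠ c' →
      Disjoint (closedBall c (2 ^ (-(k:ℤ)) / 4)) (closedBall c' (2 ^ (-(k:ℤ)) / 4)) := by
    intro k c c' hc hc' hne
    apply closedBall_disjoint_closedBall
    have := (hN k).1 c hc c' hc' hne
    have := hρpos k
    linarith
  have sum_balls_le : ∀ (k : ℕ) (F : Finset X), (∀ c ∈ F, c ∈ N k) →
      ∑ c ∈ F, μ (closedBall c (2 ^ (-(k:ℤ)) / 4)) ≤ 1 := by
    intro k F hF
    rw [← measure_biUnion_finset ?_ (fun c _ => measurableSet_closedBall)]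
    · rw [← hμuniv]
      exact measure_mono (Set.subset_univ _)
    · intro c hc c' hc' hne
      exact disj k c c' (hF c hc) (hF c' hc') hne
  have Nfin : ∀ k, (N k).Finite := by
    intro k
    by_contra hinf
    rw [← Set.not_infinite, not_not] at hinf
    set η : ℝ≥0∞ := (C₀ ^ (k + 2))⁻¹ with hη
    have hη0 : η ≠ 0 := by
      simp [hη, ENNReal.inv_ne_zero]
      exact hC₀top
    have hηtop : η ≠ ⊤ := by
      simp [hη]
      exact hC₀0
    obtain ⟨n, hn⟩ := ENNReal.exists_nat_gt (show η⁻¹ ≠ ⊤ by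
      simp [hη, inv_inv]; exact hC₀top)
    obtain ⟨F, hFsub, hFcard⟩ := hinf.exists_subset_card_eq n
    have h1 : (n : ℝ≥0∞) * η ≤ 1 := by
      calc (n : ℝ≥0∞) * η = ∑ _c ∈ F, η := by rw [Finset.sum_const, hFcard, nsmul_eq_mul]
        _ ≤ ∑ c ∈ F, μ (closedBall c (2 ^ (-(k:ℤ)) / 4)) :=
            Finset.sum_le_sum fun c _ => small_lb k c
        _ ≤ 1 := sum_balls_le k F fun c hc => hFsub hc
    have h2 : (1 : ℝ≥0∞) < n * η := by
      calc (1 : ℝ≥0∞) = η⁻¹ * η := (ENNReal.inv_mul_cancel hη0 hηtop).symm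
        _ < n * η := by
            rw [mul_comm η⁻¹ η, mul_comm (n : ℝ≥0∞) η]
            exact ENNReal.mul_lt_mul_right hη0 hηtop hn
    exact absurd (h2.trans_le h1) (lt_irrefl _)
  have hcnt : ∀ k, Countable (N k) := fun k => (Nfin k).countable.to_subtype
  -- the sparsity condition
  set Cond : ∀ k : ℕ, N k → Prop := fun k c =>
    (Metric.closedBall (c : X) (r k) ∩ E).Nonempty ∧ ε ≤ sparseIn E (c : X) (r k) with hConddef
  -- hole construction
  have hole : ∀ (k : ℕ) (c : N k), Cond k c → ∃ x' : X,
      closedBall x' (ε * r k / 8) ⊆ closedBall (c : X) (r k) ∧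
      closedBall x' (ε * r k / 8) ∩ E = ∅ := by
    intro k c hc
    obtain ⟨hne, hsp⟩ := hc
    set R := r k with hR
    have hRpos : 0 < R := hrpos k
    -- from the sparsity hypothesis, find a far point x
    have hsup : ε * R ≤ ⨆ x : (closedBall (c : X) R),
        infDist (x : X) (E ∩ closedBall (c : X) R) := by
      rw [sparseIn, le_div_iff₀ hRpos] at hsp
      exact hsp
    have hsubne : Nonempty (closedBall (c : X) R) :=
      ⟨⟨(c : X), mem_closedBall_self hRpos.le⟩⟩
    obtain ⟨⟨x, hxmem⟩, hxd⟩ : ∃ x : (closedBall (c : X) R),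
        ε * R / 2 < infDist (x : X) (E ∩ closedBall (c : X) R) := by
      apply exists_lt_of_lt_ciSup
      calc ε * R / 2 < ε * R := by nlinarith
        _ ≤ _ := hsup
    -- geodesic from x to c
    obtain ⟨f, hf0, hfd, hfiso⟩ := hgeo x (c : X)
    set d := dist x (c : X) with hd'
    have hd0 : 0 ≤ d := dist_nonneg
    have hdR : d ≤ R := mem_closedBall.1 hxmem
    set t := min (ε * R / 4) d with ht'
    have ht0 : 0 ≤ t := le_min (by positivity) hd0
    have htd : t ≤ d := min_le_right _ _
    have htmem : t ∈ Set.Icc (0:ℝ) d := ⟨ht0, htd⟩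
    have h0mem : (0:ℝ) ∈ Set.Icc (0:ℝ) d := ⟨le_refl _, hd0⟩
    have hdmem : d ∈ Set.Icc (0:ℝ) d := ⟨hd0, le_refl _⟩
    refine ⟨f t, ?_, ?_⟩
    · -- the ball around f t is inside the ball around c
      have hftc : dist (f t) (c : X) = d - t := by
        have := hfiso t htmem d hdmem
        rw [hfd] at this
        rw [this, abs_of_nonpos (by linarith), neg_sub]
      apply closedBall_subset_closedBall'
      rw [hftc]
      rcases min_cases (ε * R / 4) d with ⟨heq, hle⟩ | ⟨heq, hlt⟩
      · rw [ht', heq]; nlinarith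
      · rw [ht', heq]; nlinarith
    · -- the ball around f t misses E
      have hftx : dist (f t) x = t := by
        have := hfiso t htmem 0 h0mem
        rw [hf0] at this
        rw [this, sub_zero, abs_of_nonneg ht0]
      ext z
      simp only [Set.mem_inter_iff, Set.mem_empty_iff_false, iff_false, not_and]
      intro hz hzE
      have hzc : z ∈ closedBall (c : X) R := by
        have hftc : dist (f t) (c : X) = d - t := by
          have := hfiso t htmem d hdmem
          rw [hfd] at this
          rw [this, abs_of_nonpos (by linarith), neg_sub]
        have : dist z (c : X) ≤ dist z (f t) + dist (f t) (c : X) := dist_triangle _ _ _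
        rw [hftc] at this
        rw [mem_closedBall]
        have hz' : dist z (f t) ≤ ε * R / 8 := mem_closedBall.1 hz
        have hdt : d - t ≤ R - ε * R / 8 := by
          rcases min_cases (ε * R / 4) d with ⟨heq, hle⟩ | ⟨heq, hlt⟩
          · rw [ht', heq]; nlinarith
          · rw [ht', heq]; nlinarith
        nlinarith
      have hzEB : z ∈ E ∩ closedBall (c : X) R := ⟨hzE, hzc⟩
      have h1 : infDist x (E ∩ closedBall (c : X) R) ≤ dist x z :=
        infDist_le_dist_of_mem hzEB
      have h2 : dist x z ≤ dist x (f t) + dist (f t) z := dist_triangle _ _ _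
      rw [dist_comm x (f t), hftx] at h2
      have h3 : dist (f t) z ≤ ε * R / 8 := by
        rw [← dist_comm z (f t)]; exact mem_closedBall.1 hz
      have h4 : t ≤ ε * R / 4 := min_le_left _ _
      nlinarith
  have hx'ex : ∀ (k : ℕ) (c : N k), ∃ x' : X, Cond k c →
      closedBall x' (ε * r k / 8) ⊆ closedBall (c : X) (r k) ∧
      closedBall x' (ε * r k / 8) ∩ E = ∅ := by
    intro k c
    by_cases h : Cond k c
    · exact (hole k c h).imp fun x' hx' _ => hx'
    · exact ⟨hXne.some, fun hc => absurd hc h⟩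
  choose x' hx' using hx'ex
  set H : ∀ k : ℕ, N k → Set X := fun k c =>
    if Cond k c then closedBall (x' k c) (ε * r k / 16) else ∅ with hHdef
  have Hmeas : ∀ k (c : N k), MeasurableSet (H k c) := by
    intro k c
    by_cases h : Cond k c
    · rw [hHdef]; simp only [if_pos h]; exact measurableSet_closedBall
    · rw [hHdef]; simp only [if_neg h]; exact MeasurableSet.empty
  have Hsub : ∀ k (c : N k), H k c ⊆ closedBall (c : X) (r k) := by
    intro k c y hy
    by_cases h : Cond k c
    · simp only [hHdef, if_pos h] at hy
      exact (hx' k c h).1 (closedBall_subset_closedBall (by nlinarith [hrpos k, hε.le]) hy)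
    · simp [hHdef, if_neg h] at hy
  have Hlow : ∀ k (c : N k) (y : X), y ∈ H k c → ε * r k / 16 ≤ infDist y E := by
    intro k c y hy
    by_cases h : Cond k c
    · simp only [hHdef, if_pos h] at hy
      obtain ⟨hsub, hempty⟩ := hx' k c h
      have hEne : E.Nonempty := by
        obtain ⟨z, _, hz⟩ := h.1
        exact ⟨z, hz⟩
      by_contra hlt
      push_neg at hlt
      obtain ⟨e, heE, hed⟩ := (infDist_lt_iff hEne).1 hlt
      have h1 : dist y (x' k c) ≤ ε * r k / 16 := mem_closedBall.1 hy
      have h2 : e ∈ closedBall (x' k c) (ε * r k / 8) := by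
        rw [mem_closedBall]
        calc dist e (x' k c) ≤ dist e y + dist y (x' k c) := dist_triangle _ _ _
          _ ≤ ε * r k / 16 + ε * r k / 16 := by
              rw [dist_comm e y]; exact add_le_add hed.le h1
          _ = ε * r k / 8 := by ring
      have : e ∈ closedBall (x' k c) (ε * r k / 8) ∩ E := ⟨h2, heE⟩
      rw [hempty] at this
      exact this
    · simp [hHdef, if_neg h] at hy
  have Hup : ∀ k (c : N k) (y : X), y ∈ H k c → infDist y E ≤ 2 * r k := by
    intro k c y hy
    have hyc : y ∈ closedBall (c : X) (r k) := Hsub k c hy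
    by_cases h : Cond k c
    · obtain ⟨e, heB, heE⟩ := h.1
      calc infDist y E ≤ dist y e := infDist_le_dist_of_mem heE
        _ ≤ dist y (c : X) + dist (c : X) e := dist_triangle _ _ _
        _ ≤ r k + r k := add_le_add (mem_closedBall.1 hyc)
            (by rw [dist_comm]; exact mem_closedBall.1 heB)
        _ = 2 * r k := by ring
    · simp [hHdef, if_neg h] at hy
  have Hμ : ∀ k (c : N k),
      (if Cond k c then μ (closedBall (c : X) (r k)) else 0) ≤ C₀ ^ m * μ (H k c) := by
    intro k c
    by_cases h : Cond k c
    · rw [if_pos h]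
      have hHeq : H k c = closedBall (x' k c) (ε * r k / 16) := by
        rw [hHdef]; exact if_pos h
      obtain ⟨hsub, _⟩ := hx' k c h
      have hx'mem : x' k c ∈ closedBall (c : X) (r k) :=
        hsub (mem_closedBall_self (by positivity))
      have hsub2 : closedBall (c : X) (r k) ⊆ closedBall (x' k c) (2 * r k) := by
        apply closedBall_subset_closedBall'
        have := mem_closedBall.1 hx'mem
        rw [dist_comm]
        linarith
      have hm' : (32:ℝ) ≤ 2 ^ m * ε := by
        rw [div_le_iff₀ hε] at hm
        linarith
      have hrad : 2 * r k ≤ 2 ^ m * (ε * r k / 16) := by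
        have h32 : 32 * r k ≤ (2 ^ m * ε) * r k :=
          mul_le_mul_of_nonneg_right hm' (hrpos k).le
        nlinarith
      calc μ (closedBall (c : X) (r k)) ≤ μ (closedBall (x' k c) (2 * r k)) :=
            measure_mono hsub2
        _ ≤ C₀ ^ m * μ (closedBall (x' k c) (ε * r k / 16)) := dbl_le hd _ m hrad
        _ = C₀ ^ m * μ (H k c) := by rw [hHeq]
    · rw [if_neg h]
      exact zero_le
  -- per-level counting
  have count : ∀ (k : ℕ) (y : X) (F : Finset X),
      (∀ c ∈ F, c ∈ N k ∧ dist y c ≤ r k) → (F.card : ℝ≥0∞) ≤ C₀ ^ j := by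
    intro k y F hF
    set ρ : ℝ := 2 ^ (-(k:ℤ)) with hρ'
    have hρp : 0 < ρ := hρpos k
    set big : Set X := closedBall y ((A + 1) * ρ) with hbig'
    have hbig_pos : 0 < μ big := pos _ _ (by nlinarith)
    have hbig_fin : μ big ≠ ⊤ := (hμfin _ _).ne
    have hstep : ∀ c ∈ F, μ big ≤ C₀ ^ j * μ (closedBall c (ρ / 4)) := by
      intro c hc
      have hdyc : dist y c ≤ A * ρ := (hF c hc).2
      have h1 : big ⊆ closedBall c ((2 * A + 2) * ρ) := by
        apply closedBall_subset_closedBall'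
        nlinarith
      have h2 : (2 * A + 2) * ρ ≤ 2 ^ j * (ρ / 4) := by nlinarith
      calc μ big ≤ μ (closedBall c ((2 * A + 2) * ρ)) := measure_mono h1
        _ ≤ C₀ ^ j * μ (closedBall c (ρ / 4)) := dbl_le hd _ j h2
    have hsmall_sub : ∀ c ∈ F, closedBall c (ρ / 4) ⊆ big := by
      intro c hc z hz
      rw [hbig', mem_closedBall]
      have h1 : dist z c ≤ ρ / 4 := mem_closedBall.1 hz
      have h2 : dist y c ≤ A * ρ := (hF c hc).2
      calc dist z y ≤ dist z c + dist c y := dist_triangle _ _ _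
        _ ≤ ρ / 4 + A * ρ := add_le_add h1 (by rw [dist_comm]; exact h2)
        _ ≤ (A + 1) * ρ := by nlinarith
    have hkey : (F.card : ℝ≥0∞) * μ big ≤ C₀ ^ j * μ big := by
      calc (F.card : ℝ≥0∞) * μ big = ∑ _c ∈ F, μ big := by
            rw [Finset.sum_const, nsmul_eq_mul]
        _ ≤ ∑ c ∈ F, C₀ ^ j * μ (closedBall c (ρ / 4)) := Finset.sum_le_sum hstep
        _ = C₀ ^ j * ∑ c ∈ F, μ (closedBall c (ρ / 4)) := by rw [Finset.mul_sum]
        _ ≤ C₀ ^ j * μ big := by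
            apply mul_le_mul_right
            rw [← measure_biUnion_finset ?_ (fun c _ => measurableSet_closedBall)]
            · exact measure_mono (Set.iUnion₂_subset hsmall_sub)
            · intro c hc c' hc' hne
              exact disj k c c' (hF c hc).1 (hF c' hc').1 hne
    exact (ENNReal.mul_le_mul_iff_left hbig_pos.ne' hbig_fin).1 hkey
  have inner_le : ∀ (k : ℕ) (y : X),
      (∑' c : N k, (H k c).indicator (1 : X → ℝ≥0∞) y) ≤ C₀ ^ j := by
    intro k y
    rw [ENNReal.tsum_eq_iSup_sum]
    apply iSup_le
    intro F
    have heq : ∑ c ∈ F, (H k c).indicator (1 : X → ℝ≥0∞) y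
        = ((F.filter (fun c => y ∈ H k c)).card : ℝ≥0∞) := by
      simp only [Set.indicator_apply, Pi.one_apply]
      exact Finset.sum_boole _ _
    rw [heq]
    set F' : Finset X := (F.filter (fun c => y ∈ H k c)).image Subtype.val with hF'
    have hcard : F'.card = (F.filter (fun c => y ∈ H k c)).card :=
      Finset.card_image_of_injective _ Subtype.val_injective
    rw [← hcard]
    apply count k y F'
    intro c hc
    rw [hF', Finset.mem_image] at hc
    obtain ⟨c0, hc0, rfl⟩ := hc
    rw [Finset.mem_filter] at hc0
    refine ⟨c0.2, ?_⟩
    have h1 : dist y (c0 : X) ≤ r k := mem_closedBall.1 (Hsub k c0 hc0.2)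
    exact h1
  -- level spread
  have spread : ∀ (k k' : ℕ) (y : X), (∃ c : N k, y ∈ H k c) → (∃ c : N k', y ∈ H k' c) →
      k' ≤ k + m := by
    intro k k' y ⟨c, hc⟩ ⟨c', hc'⟩
    have h1 : ε * r k / 16 ≤ infDist y E := Hlow k c y hc
    have h2 : infDist y E ≤ 2 * r k' := Hup k' c' y hc'
    have h3 : ε * (A * 2 ^ (-(k:ℤ))) / 16 ≤ 2 * (A * 2 ^ (-(k':ℤ))) := by
      rw [hrdef] at h1 h2
      exact le_trans h1 h2
    have hm' : (32:ℝ) ≤ 2 ^ m * ε := by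
      have := hm
      rw [div_le_iff₀ hε] at this
      linarith
    have hεA : (0:ℝ) < ε * A := by nlinarith
    have h4 : ε * A * (2 ^ (-(k:ℤ))) ≤ ε * A * ((2:ℝ) ^ m * 2 ^ (-(k':ℤ))) := by
      nlinarith [mul_le_mul_of_nonneg_right hm'
        (mul_nonneg (by nlinarith : (0:ℝ) ≤ A) (hρpos k').le), hρpos k, hρpos k']
    have h5 : (2:ℝ) ^ (-(k:ℤ)) ≤ (2:ℝ) ^ ((m:ℤ) + -(k':ℤ)) := by
      rw [zpow_add₀ (two_ne_zero), zpow_natCast]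
      exact (mul_le_mul_iff_right₀ hεA).1 h4
    have h6 : -(k:ℤ) ≤ (m:ℤ) + -(k':ℤ) :=
      (zpow_le_zpow_iff_right₀ (by norm_num : (1:ℝ) < 2)).1 h5
    omega
  -- pointwise bound
  have hpt : ∀ y : X, (∑' (k : ℕ) (c : N k), (H k c).indicator (1 : X → ℝ≥0∞) y)
      ≤ ((2 * m + 1 : ℕ) : ℝ≥0∞) * C₀ ^ j := by
    intro y
    by_cases hS : ∃ k : ℕ, ∃ c : N k, y ∈ H k c
    · obtain ⟨k0, hk0⟩ := hS
      have hzero : ∀ k ∉ Finset.Icc (k0 - m) (k0 + m),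
          (∑' c : N k, (H k c).indicator (1 : X → ℝ≥0∞) y) = 0 := by
        intro k hk
        rw [Finset.mem_Icc] at hk
        have hnone : ¬ ∃ c : N k, y ∈ H k c := by
          rintro ⟨c, hc⟩
          have ha : k ≤ k0 + m := spread k0 k y hk0 ⟨c, hc⟩
          have hb : k0 ≤ k + m := spread k k0 y ⟨c, hc⟩ hk0
          omega
        rw [ENNReal.tsum_eq_zero]
        intro c
        exact Set.indicator_of_notMem (fun hc => hnone ⟨c, hc⟩) _
      calc (∑' (k : ℕ) (c : N k), (H k c).indicator (1 : X → ℝ≥0∞) y)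
          = ∑ k ∈ Finset.Icc (k0 - m) (k0 + m),
              ∑' c : N k, (H k c).indicator (1 : X → ℝ≥0∞) y := tsum_eq_sum hzero
        _ ≤ ∑ _k ∈ Finset.Icc (k0 - m) (k0 + m), C₀ ^ j :=
            Finset.sum_le_sum fun k _ => inner_le k y
        _ = ((Finset.Icc (k0 - m) (k0 + m)).card : ℝ≥0∞) * C₀ ^ j := by
            rw [Finset.sum_const, nsmul_eq_mul]
        _ ≤ ((2 * m + 1 : ℕ) : ℝ≥0∞) * C₀ ^ j := by
            apply mul_le_mul_left
            have hcard : (Finset.Icc (k0 - m) (k0 + m)).card ≤ 2 * m + 1 := by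
              rw [Nat.card_Icc]; omega
            exact_mod_cast hcard
    · push_neg at hS
      have : ∀ k : ℕ, (∑' c : N k, (H k c).indicator (1 : X → ℝ≥0∞) y) = 0 := by
        intro k
        rw [ENNReal.tsum_eq_zero]
        intro c
        exact Set.indicator_of_notMem (fun hc => hS k c hc) _
      simp only [this, tsum_zero]
      exact zero_le
  -- assembly
  haveI hcnt' : ∀ k : ℕ, Countable (N k) := hcnt
  have hofK : ENNReal.ofReal (C ^ m * ((2 * m + 1 : ℕ) * C ^ j))
      = C₀ ^ m * (((2 * m + 1 : ℕ) : ℝ≥0∞) * C₀ ^ j) := by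
    rw [ENNReal.ofReal_mul (by positivity), ENNReal.ofReal_mul (by positivity),
      ENNReal.ofReal_pow hC.le, ENNReal.ofReal_pow hC.le, ENNReal.ofReal_natCast]
  rw [hofK]
  have hmeas_ind : ∀ p : Σ k : ℕ, N k,
      Measurable fun y : X => (H p.1 p.2).indicator (1 : X → ℝ≥0∞) y :=
    fun p => measurable_one.indicator (Hmeas p.1 p.2)
  calc (∑' (k : ℕ) (c : N k),
        if (Metric.closedBall (c : X) (A * 2 ^ (-(k : ℤ))) ∩ E).Nonempty ∧
            ε ≤ sparseIn E (c : X) (A * 2 ^ (-(k : ℤ)))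
          then μ (Metric.closedBall (c : X) (A * 2 ^ (-(k : ℤ))))
          else 0)
      ≤ ∑' (k : ℕ) (c : N k), C₀ ^ m * μ (H k c) :=
        ENNReal.tsum_le_tsum fun k => ENNReal.tsum_le_tsum fun c => Hμ k c
    _ = C₀ ^ m * ∑' (k : ℕ) (c : N k), μ (H k c) := by
        simp_rw [ENNReal.tsum_mul_left]
    _ = C₀ ^ m * ∑' (p : Σ k : ℕ, N k), μ (H p.1 p.2) := by
        congr 1
        exact (ENNReal.tsum_sigma fun k c => μ (H k c)).symm
    _ = C₀ ^ m * ∑' (p : Σ k : ℕ, N k),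
          ∫⁻ y, (H p.1 p.2).indicator (1 : X → ℝ≥0∞) y ∂μ := by
        congr 1
        exact tsum_congr fun p => (lintegral_indicator_one (Hmeas p.1 p.2)).symm
    _ = C₀ ^ m * ∫⁻ y, ∑' (p : Σ k : ℕ, N k),
          (H p.1 p.2).indicator (1 : X → ℝ≥0∞) y ∂μ := by
        congr 1
        exact (lintegral_tsum fun p => (hmeas_ind p).aemeasurable).symm
    _ ≤ C₀ ^ m * ∫⁻ _y, ((2 * m + 1 : ℕ) : ℝ≥0∞) * C₀ ^ j ∂μ := by
        apply mul_le_mul_right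
        apply lintegral_mono
        intro y
        exact le_trans
          (le_of_eq (ENNReal.tsum_sigma fun k (c : N k) => (H k c).indicator (1 : X → ℝ≥0∞) y))
          (hpt y)
    _ = C₀ ^ m * (((2 * m + 1 : ℕ) : ℝ≥0∞) * C₀ ^ j * μ Set.univ) := by
        rw [lintegral_const]
    _ = C₀ ^ m * (((2 * m + 1 : ℕ) : ℝ≥0∞) * C₀ ^ j) := by
        rw [hμuniv, mul_one]

/-- **Quantitative Metric Density Theorem.** In a complete, geodesic metric measure space
with a `C`-doubling measure, `diam X = 1`, `μ X = 1`, equipped with a multiresolution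
family `𝓑 = {B(c, A·2^{-k}) : c ∈ N k}` built on nested `2^{-k}`-nets, for every `ε > 0`
there is `K > 0` depending only on `ε`, `C`, `A`, such that for every set `E ⊆ X` the sum
of `μ(B)` over all balls `B ∈ 𝓑` with `B ∩ E ≠ ∅` and `sparse(E,B) ≥ ε` is at most `K`. -/
theorem quantitative_metric_density (C A ε : ℝ) (hC : 0 < C) (hA : 1 ≤ A) (hε : 0 < ε) :
    ∃ K : ℝ, 0 < K ∧
      ∀ (X : Type) [MetricSpace X] [CompleteSpace X] [MeasurableSpace X] [BorelSpace X]
        (μ : MeasureTheory.Measure X) (N : ℕ → Set X),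
        IsGeodesicSpace X →
        IsDoubling μ C →
        Metric.diam (Set.univ : Set X) = 1 →
        μ Set.univ = 1 →
        (∀ k : ℕ, IsNet ((2 : ℝ) ^ (-(k : ℤ))) (N k)) →
        (∀ k : ℕ, N k ⊆ N (k + 1)) →
        ∀ E : Set X,
          (∑' (k : ℕ) (c : N k),
              if (Metric.closedBall (c : X) (A * 2 ^ (-(k : ℤ))) ∩ E).Nonempty ∧
                  ε ≤ sparseIn E (c : X) (A * 2 ^ (-(k : ℤ)))
                then μ (Metric.closedBall (c : X) (A * 2 ^ (-(k : ℤ))))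
                else 0) ≤ ENNReal.ofReal K := by
  obtain ⟨K, hK, hmain⟩ := key C A (min ε 1) hC hA (lt_min hε one_pos) (min_le_right _ _)
  refine ⟨K, hK, ?_⟩
  intro X _ _ _ _ μ N hgeo hdbl hdiam hμuniv hN hnest E
  refine le_trans ?_ (hmain X μ N hgeo hdbl hdiam hμuniv hN hnest E)
  apply ENNReal.tsum_le_tsum
  intro k
  apply ENNReal.tsum_le_tsum
  intro c
  by_cases h : (Metric.closedBall (c : X) (A * 2 ^ (-(k : ℤ))) ∩ E).Nonempty ∧
      ε ≤ sparseIn E (c : X) (A * 2 ^ (-(k : ℤ)))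
  · rw [if_pos h, if_pos ⟨h.1, le_trans (min_le_left _ _) h.2⟩]
  · rw [if_neg h]
    exact zero_le
end
end

section
/- Let (X,d,μ) be a complete, geodesic metric measure space with μ a C-doubling measure, diam(X)=1 and μ(X)=1. For all α > 0 and ε > 0 there exists r₀ > 0, depending only on α, ε and C, such that for every Borel set E ⊆ X with μ(E) ≥ α there exists a closed ball B of radius r ∈ [r₀, 1] with E ∩ B ≠ ∅ and sparse(E,B) < ε. -/
open Metric MeasureTheory
open scoped ENNReal

noncomputable section

lemma QMD.le_infDist {X : Type*} [MetricSpace X] {E : Set X} (hE : E.Nonempty) {z : X} {c : ℝ}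
    (h : ∀ e ∈ E, c ≤ dist z e) : c ≤ Metric.infDist z E := by
  by_contra hlt
  obtain ⟨e, heE, he⟩ := (Metric.infDist_lt_iff hE).1 (lt_of_not_ge hlt)
  exact absurd (h e heE) (not_le.2 he)

lemma QMD.hole {X : Type} [MetricSpace X] (hg : IsGeodesicSpace X) {E : Set X} {x : X}
    {ε s : ℝ} (hε : 0 < ε) (hs : 0 < s) (hx : x ∈ E)
    (hsp : ε * s ≤ ⨆ p : (Metric.closedBall x s), Metric.infDist (p : X) (E ∩ Metric.closedBall x s)) :
    ∃ y' : X, Metric.closedBall y' (ε * s / 8) ⊆ Metric.closedBall x s ∧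
      ∀ z ∈ E, ε * s / 8 < dist z y' := by
  have hεs : 0 < ε * s := mul_pos hε hs
  have h34 : (3 / 4) * (ε * s) < ⨆ p : (Metric.closedBall x s),
      Metric.infDist (p : X) (E ∩ Metric.closedBall x s) := lt_of_lt_of_le (by nlinarith) hsp
  haveI : Nonempty (Metric.closedBall x s) := ⟨⟨x, Metric.mem_closedBall_self hs.le⟩⟩
  obtain ⟨p, hp⟩ := exists_lt_of_lt_ciSup h34
  have hpball : (p : X) ∈ Metric.closedBall x s := p.2
  have hxmem : x ∈ E ∩ Metric.closedBall x s := ⟨hx, Metric.mem_closedBall_self hs.le⟩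
  have hdxp : (3 / 4) * (ε * s) < dist x (p : X) := by
    refine lt_of_lt_of_le hp ?_
    rw [dist_comm]
    exact Metric.infDist_le_dist_of_mem hxmem
  have hdps : dist x (p : X) ≤ s := by
    rw [dist_comm]; exact Metric.mem_closedBall.1 hpball
  obtain ⟨f, hf0, hfd, hiso⟩ := hg x p
  set d := dist x (p : X) with hd
  set t := d - ε * s / 4 with ht
  have ht0 : 0 ≤ t := by simp only [ht]; nlinarith
  have htd : t ≤ d := by simp only [ht]; nlinarith
  have hmem0 : (0 : ℝ) ∈ Set.Icc (0 : ℝ) d := ⟨le_rfl, by nlinarith⟩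
  have hmemt : t ∈ Set.Icc (0 : ℝ) d := ⟨ht0, htd⟩
  have hmemd : d ∈ Set.Icc (0 : ℝ) d := ⟨by nlinarith, le_rfl⟩
  have hxy' : dist x (f t) = t := by
    have := hiso 0 hmem0 t hmemt
    rw [hf0] at this
    rw [this, abs_of_nonpos (by linarith)]; ring
  have hy'p : dist (f t) (p : X) = ε * s / 4 := by
    have := hiso t hmemt d hmemd
    rw [hfd] at this
    rw [this, abs_of_nonpos (by simp only [ht]; linarith)]; ring
  refine ⟨f t, ?_, ?_⟩
  · intro w hw
    have hw' : dist w (f t) ≤ ε * s / 8 := Metric.mem_closedBall.1 hw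
    have : dist w x ≤ dist w (f t) + dist (f t) x := dist_triangle _ _ _
    rw [dist_comm (f t) x, hxy'] at this
    exact Metric.mem_closedBall.2 (by simp only [ht] at this ⊢; nlinarith)
  · intro z hz
    by_contra hc
    push_neg at hc
    have hzx : dist z x ≤ s := by
      have := dist_triangle z (f t) x
      rw [dist_comm (f t) x, hxy'] at this
      simp only [ht] at this; nlinarith
    have hzmem : z ∈ E ∩ Metric.closedBall x s := ⟨hz, Metric.mem_closedBall.2 hzx⟩
    have : Metric.infDist (p : X) (E ∩ Metric.closedBall x s) ≤ dist (p : X) z :=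
      Metric.infDist_le_dist_of_mem hzmem
    have h2 : dist (p : X) z ≤ dist (p : X) (f t) + dist (f t) z := dist_triangle _ _ _
    rw [dist_comm (p : X) (f t), hy'p, dist_comm (f t) z] at h2
    nlinarith [hp, this]

lemma QMD.doubling_pow {X : Type} [MetricSpace X] [MeasurableSpace X] {μ : Measure X} {C : ℝ}
    (hd : ∀ (x : X) (r : ℝ),
      μ (Metric.closedBall x (2 * r)) ≤ ENNReal.ofReal C * μ (Metric.closedBall x r))
    (x : X) (r : ℝ) (m : ℕ) :
    μ (Metric.closedBall x (2 ^ m * r)) ≤ (ENNReal.ofReal C) ^ m * μ (Metric.closedBall x r) := by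
  induction m with
  | zero => simp
  | succ n ih =>
    have h2 : (2 : ℝ) ^ (n + 1) * r = 2 * (2 ^ n * r) := by ring
    rw [h2]
    calc μ (Metric.closedBall x (2 * (2 ^ n * r)))
        ≤ ENNReal.ofReal C * μ (Metric.closedBall x (2 ^ n * r)) := hd x _
      _ ≤ ENNReal.ofReal C * ((ENNReal.ofReal C) ^ n * μ (Metric.closedBall x r)) :=
          mul_le_mul_right ih _
      _ = (ENNReal.ofReal C) ^ (n + 1) * μ (Metric.closedBall x r) := by ring

lemma QMD.ball_lb {X : Type} [MetricSpace X] [MeasurableSpace X] {μ : Measure X} {C : ℝ}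
    (hC : 0 < C)
    (hd : ∀ (x : X) (r : ℝ),
      μ (Metric.closedBall x (2 * r)) ≤ ENNReal.ofReal C * μ (Metric.closedBall x r))
    (hμu : μ Set.univ = 1) (hdist : ∀ a b : X, dist a b ≤ 1) {r : ℝ} (hr : 0 < r) :
    ∃ δ : ℝ≥0∞, 0 < δ ∧ ∀ x : X, δ ≤ μ (Metric.closedBall x r) := by
  obtain ⟨M, hM⟩ := pow_unbounded_of_one_lt (1 / r) (one_lt_two (α := ℝ))
  have hK0 : (ENNReal.ofReal C) ^ M ≠ 0 := pow_ne_zero _ (by simp [ENNReal.ofReal_pos, hC])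
  have hKt : (ENNReal.ofReal C) ^ M ≠ ∞ := ENNReal.pow_ne_top ENNReal.ofReal_ne_top
  refine ⟨((ENNReal.ofReal C) ^ M)⁻¹, ENNReal.inv_pos.2 hKt, fun x => ?_⟩
  have hsub : Set.univ ⊆ Metric.closedBall x (2 ^ M * r) := by
    intro y _
    refine Metric.mem_closedBall.2 (le_trans (hdist y x) ?_)
    rw [div_lt_iff₀ hr] at hM
    linarith
  have h1 : (1 : ℝ≥0∞) ≤ (ENNReal.ofReal C) ^ M * μ (Metric.closedBall x r) := by
    calc (1 : ℝ≥0∞) = μ Set.univ := hμu.symm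
      _ ≤ μ (Metric.closedBall x (2 ^ M * r)) := measure_mono hsub
      _ ≤ (ENNReal.ofReal C) ^ M * μ (Metric.closedBall x r) := QMD.doubling_pow hd x r M
  calc ((ENNReal.ofReal C) ^ M)⁻¹ = ((ENNReal.ofReal C) ^ M)⁻¹ * 1 := (mul_one _).symm
    _ ≤ ((ENNReal.ofReal C) ^ M)⁻¹ * ((ENNReal.ofReal C) ^ M * μ (Metric.closedBall x r)) :=
        mul_le_mul_right h1 _
    _ = μ (Metric.closedBall x r) := by
        rw [← mul_assoc, ENNReal.inv_mul_cancel hK0 hKt, one_mul]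

lemma QMD.decay_step {X : Type} [MetricSpace X] [MeasurableSpace X] [BorelSpace X]
    (μ : Measure X) {C ε s : ℝ} {m : ℕ}
    (hg : IsGeodesicSpace X) (hC : 1 ≤ C)
    (hd2 : ∀ (x : X) (r : ℝ),
      μ (Metric.closedBall x (2 * r)) ≤ ENNReal.ofReal C * μ (Metric.closedBall x r))
    (hμu : μ Set.univ = 1) (hdist : ∀ a b : X, dist a b ≤ 1)
    {E : Set X} (hEne : E.Nonempty)
    (hε : 0 < ε) (hε1 : ε ≤ 1) (hs : 0 < s)
    (hm : 144 / ε ≤ 2 ^ m)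
    (hsp : ∀ x ∈ E, ε * s ≤ ⨆ p : (Metric.closedBall x s),
      Metric.infDist (p : X) (E ∩ Metric.closedBall x s)) :
    μ {z | Metric.infDist z E ≤ ε * s / 32}
      ≤ (1 - ((ENNReal.ofReal C) ^ m)⁻¹) * μ {z | Metric.infDist z E ≤ s} := by
  set K : ℝ≥0∞ := (ENNReal.ofReal C) ^ m with hKdef
  have hK0 : K ≠ 0 := pow_ne_zero _ (by simp [ENNReal.ofReal_pos]; linarith)
  have hKt : K ≠ ∞ := ENNReal.pow_ne_top ENNReal.ofReal_ne_top
  -- the holes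
  have hhole : ∀ x ∈ E, ∃ y' : X, Metric.closedBall y' (ε * s / 8) ⊆ Metric.closedBall x s ∧
      ∀ z ∈ E, ε * s / 8 < dist z y' := fun x hx => QMD.hole hg hε hs hx (hsp x hx)
  choose! y' hy1 hy2 using hhole
  -- Vitali covering
  obtain ⟨u, huE, hdisj, hcov⟩ := Vitali.exists_disjoint_subfamily_covering_enlargement_closedBall
    E (id : X → X) (fun _ => 2 * s) (2 * s) (fun _ _ => le_rfl) 4 (by norm_num)
  -- u is countable
  obtain ⟨δ, hδ0, hδ⟩ := QMD.ball_lb (by linarith : (0:ℝ) < C) hd2 hμu hdist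
    (by linarith : (0:ℝ) < 2 * s)
  have hufin : u.Finite := by
    have hpair : Pairwise (Function.onFun Disjoint fun j : u => Metric.closedBall (j : X) (2 * s)) := by
      intro i j hij
      exact hdisj i.2 j.2 (Subtype.coe_injective.ne hij)
    have hfin := MeasureTheory.Measure.finite_const_le_meas_of_disjoint_iUnion μ hδ0
      (As := fun j : u => Metric.closedBall (j : X) (2 * s))
      (fun i => measurableSet_closedBall) hpair
      (ne_top_of_le_ne_top (by rw [hμu]; exact ENNReal.one_ne_top)
        (measure_mono (Set.subset_univ _)))
    have huniv : (Set.univ : Set u).Finite := hfin.subset (fun i _ => hδ (i : X))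
    exact Set.finite_coe_iff.1 (Set.finite_univ_iff.1 huniv)
  have hucnt : u.Countable := hufin.countable
  set V : Set X := {z | Metric.infDist z E ≤ s} with hVdef
  set V' : Set X := {z | Metric.infDist z E ≤ ε * s / 32} with hV'def
  have hVm : MeasurableSet V :=
    (isClosed_le (Metric.continuous_infDist_pt E) continuous_const).measurableSet
  have hV'm : MeasurableSet V' :=
    (isClosed_le (Metric.continuous_infDist_pt E) continuous_const).measurableSet
  have hV'V : V' ⊆ V := by
    intro z hz
    have h1 : Metric.infDist z E ≤ ε * s / 32 := hz
    show Metric.infDist z E ≤ s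
    nlinarith
  have hμfin : ∀ S : Set X, μ S ≠ ∞ := fun S =>
    ne_top_of_le_ne_top (by rw [hμu]; exact ENNReal.one_ne_top) (measure_mono (Set.subset_univ _))
  -- distance from y' j to j
  have hy'dist : ∀ j ∈ E, dist (y' j) j ≤ s := by
    intro j hj
    have hmem : y' j ∈ Metric.closedBall (y' j) (ε * s / 8) :=
      Metric.mem_closedBall_self (by positivity)
    exact Metric.mem_closedBall.1 (hy1 j hj hmem)
  -- covering of V
  have hcoverV : V ⊆ ⋃ j ∈ u, Metric.closedBall j (4 * (2 * s)) := by
    intro z hz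
    obtain ⟨e, heE, hze⟩ := (Metric.infDist_lt_iff hEne).1
      (lt_of_le_of_lt hz (by linarith : s < 2 * s))
    obtain ⟨b, hbu, hsub⟩ := hcov e heE
    exact Set.mem_biUnion hbu (hsub (Metric.mem_closedBall.2 hze.le))
  -- enlarged balls controlled by holes
  have hball_hole : ∀ j ∈ u, μ (Metric.closedBall j (4 * (2 * s)))
      ≤ K * μ (Metric.closedBall (y' j) (ε * s / 16)) := by
    intro j hj
    have hjE : j ∈ E := huE hj
    have hsub : Metric.closedBall j (4 * (2 * s))
        ⊆ Metric.closedBall (y' j) (2 ^ m * (ε * s / 16)) := by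
      intro w hw
      have h1 : dist w j ≤ 4 * (2 * s) := Metric.mem_closedBall.1 hw
      have h2 : dist w (y' j) ≤ dist w j + dist j (y' j) := dist_triangle _ _ _
      have h3 : dist j (y' j) ≤ s := by rw [dist_comm]; exact hy'dist j hjE
      refine Metric.mem_closedBall.2 ?_
      have hm' : 144 ≤ 2 ^ m * ε := by
        rw [div_le_iff₀ hε] at hm; linarith
      have hpow : (0:ℝ) < 2 ^ m := by positivity
      nlinarith
    calc μ (Metric.closedBall j (4 * (2 * s)))
        ≤ μ (Metric.closedBall (y' j) (2 ^ m * (ε * s / 16))) := measure_mono hsub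
      _ ≤ K * μ (Metric.closedBall (y' j) (ε * s / 16)) := QMD.doubling_pow hd2 _ _ m
  -- holes are pairwise disjoint
  have hole_sub : ∀ j ∈ E, Metric.closedBall (y' j) (ε * s / 16) ⊆ Metric.closedBall j (2 * s) := by
    intro j hj w hw
    have h1 : dist w (y' j) ≤ ε * s / 16 := Metric.mem_closedBall.1 hw
    have h2 : w ∈ Metric.closedBall (y' j) (ε * s / 8) :=
      Metric.mem_closedBall.2 (by nlinarith)
    have h3 : dist w j ≤ s := Metric.mem_closedBall.1 (hy1 j hj h2)
    exact Metric.mem_closedBall.2 (by nlinarith)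
  have hdisj2 : u.PairwiseDisjoint fun j => Metric.closedBall (y' j) (ε * s / 16) := by
    intro i hi j hj hij
    exact Disjoint.mono (hole_sub i (huE hi)) (hole_sub j (huE hj)) (hdisj hi hj hij)
  -- holes sit in V \ V'
  have hhole_in : (⋃ j ∈ u, Metric.closedBall (y' j) (ε * s / 16)) ⊆ V \ V' := by
    intro z hz
    obtain ⟨j, hj, hzj⟩ := Set.mem_iUnion₂.1 hz
    have hjE : j ∈ E := huE hj
    have hz16 : dist z (y' j) ≤ ε * s / 16 := Metric.mem_closedBall.1 hzj
    constructor
    · have : z ∈ Metric.closedBall j s :=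
        hy1 j hjE (Metric.mem_closedBall.2 (by nlinarith))
      exact le_trans (Metric.infDist_le_dist_of_mem hjE) (Metric.mem_closedBall.1 this)
    · intro hzV'
      have hlow : ε * s / 16 ≤ Metric.infDist z E := by
        refine QMD.le_infDist hEne fun e heE => ?_
        have h1 : ε * s / 8 < dist e (y' j) := hy2 j hjE e heE
        have h2 : dist e (y' j) ≤ dist e z + dist z (y' j) := dist_triangle _ _ _
        rw [dist_comm z e]
        nlinarith
      have : Metric.infDist z E ≤ ε * s / 32 := hzV'
      nlinarith
  -- main chain
  have hchain : μ V ≤ K * (μ V - μ V') := by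
    calc μ V ≤ μ (⋃ j ∈ u, Metric.closedBall j (4 * (2 * s))) := measure_mono hcoverV
      _ ≤ ∑' j : u, μ (Metric.closedBall (j : X) (4 * (2 * s))) :=
          measure_biUnion_le μ hucnt _
      _ ≤ ∑' j : u, K * μ (Metric.closedBall (y' j) (ε * s / 16)) :=
          ENNReal.tsum_le_tsum fun j => hball_hole j j.2
      _ = K * ∑' j : u, μ (Metric.closedBall (y' (j : X)) (ε * s / 16)) :=
          ENNReal.tsum_mul_left
      _ = K * μ (⋃ j ∈ u, Metric.closedBall (y' j) (ε * s / 16)) := by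
          rw [measure_biUnion hucnt hdisj2 (fun j _ => measurableSet_closedBall)]
      _ ≤ K * μ (V \ V') := mul_le_mul_right (measure_mono hhole_in) _
      _ = K * (μ V - μ V') := by
          rw [measure_diff hV'V hV'm.nullMeasurableSet (hμfin V')]
  -- algebra
  have hba : μ V' ≤ μ V := measure_mono hV'V
  have h2 : K⁻¹ * μ V ≤ μ V - μ V' := by
    calc K⁻¹ * μ V ≤ K⁻¹ * (K * (μ V - μ V')) := mul_le_mul_right hchain _
      _ = (K⁻¹ * K) * (μ V - μ V') := (mul_assoc _ _ _).symm
      _ = μ V - μ V' := by rw [ENNReal.inv_mul_cancel hK0 hKt, one_mul]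
  have h3 : μ V' + K⁻¹ * μ V ≤ μ V := by
    calc μ V' + K⁻¹ * μ V ≤ μ V' + (μ V - μ V') := add_le_add_right h2 _
      _ = μ V := add_tsub_cancel_of_le hba
  have h4 : (1 - K⁻¹) * μ V = μ V - K⁻¹ * μ V := by
    rw [ENNReal.sub_mul (fun _ _ => hμfin V), one_mul]
  have h1C : (1 : ℝ≥0∞) ≤ ENNReal.ofReal C := by
    rw [← ENNReal.ofReal_one]; exact ENNReal.ofReal_le_ofReal hC
  have hK1 : (1 : ℝ≥0∞) ≤ K := by
    calc (1 : ℝ≥0∞) = 1 ^ m := (one_pow m).symm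
      _ ≤ (ENNReal.ofReal C) ^ m := by gcongr
  have hKinvfin : K⁻¹ * μ V ≠ ∞ := by
    refine ne_top_of_le_ne_top (hμfin V) ?_
    calc K⁻¹ * μ V ≤ 1 * μ V := mul_le_mul_left (ENNReal.inv_le_one.2 hK1) _
      _ = μ V := one_mul _
  rw [h4]
  exact ENNReal.le_sub_of_add_le_right hKinvfin h3

/-- **Corollary of the Quantitative Metric Density Theorem.** Given `α, ε > 0`, there is
`r₀ > 0` depending only on `α`, `ε`, `C`, such that every Borel set `E` of measure `≥ α`
in a complete geodesic metric measure space with `C`-doubling measure, `diam X = 1`,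
`μ X = 1`, meets some closed ball `B` of radius `r ∈ [r₀, 1]` with `sparse(E,B) < ε`. -/
theorem quantitative_metric_density_corollary (C α ε : ℝ) (hC : 0 < C) (hα : 0 < α)
    (hε : 0 < ε) :
    ∃ r₀ : ℝ, 0 < r₀ ∧
      ∀ (X : Type) [MetricSpace X] [CompleteSpace X] [MeasurableSpace X] [BorelSpace X]
        (μ : MeasureTheory.Measure X),
        IsGeodesicSpace X →
        IsDoubling μ C →
        Metric.diam (Set.univ : Set X) = 1 →
        μ Set.univ = 1 →
        ∀ E : Set X, MeasurableSet E → ENNReal.ofReal α ≤ μ E →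
          ∃ (c : X) (r : ℝ), r₀ ≤ r ∧ r ≤ 1 ∧
            (E ∩ Metric.closedBall c r).Nonempty ∧ sparseIn E c r < ε := by
  -- normalized constants
  set ε' : ℝ := min ε 1 with hε'def
  have hε'0 : 0 < ε' := lt_min hε one_pos
  have hε'1 : ε' ≤ 1 := min_le_right _ _
  have hε'ε : ε' ≤ ε := min_le_left _ _
  set C' : ℝ := max C 1 with hC'def
  have hC'1 : 1 ≤ C' := le_max_right _ _
  obtain ⟨m, hm⟩ := pow_unbounded_of_one_lt (144 / ε') (one_lt_two (α := ℝ))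
  have hm : 144 / ε' ≤ 2 ^ m := hm.le
  set K : ℝ≥0∞ := (ENNReal.ofReal C') ^ m with hKdef
  have hKt : K ≠ ∞ := ENNReal.pow_ne_top ENNReal.ofReal_ne_top
  set q : ℝ≥0∞ := 1 - K⁻¹ with hqdef
  have hq1 : q < 1 := ENNReal.sub_lt_self ENNReal.one_ne_top one_ne_zero (ENNReal.inv_ne_zero.2 hKt)
  obtain ⟨N, hN⟩ := ((ENNReal.tendsto_pow_atTop_nhds_zero_of_lt_one hq1).eventually_lt_const
    (ENNReal.ofReal_pos.2 hα)).exists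
  set τ : ℝ := ε' / 32 with hτdef
  have hτ0 : 0 < τ := by positivity
  have hτ1 : τ ≤ 1 := by rw [hτdef]; linarith
  refine ⟨τ ^ N, pow_pos hτ0 N, ?_⟩
  intro X _ _ _ _ μ hg hd hdiam hμu E hEm hEμ
  -- basic facts
  have hd2 : ∀ (x : X) (r : ℝ),
      μ (Metric.closedBall x (2 * r)) ≤ ENNReal.ofReal C' * μ (Metric.closedBall x r) :=
    fun x r => le_trans (hd.2.2 x r)
      (mul_le_mul_left (ENNReal.ofReal_le_ofReal (le_max_left C 1)) _)
  have hEne : E.Nonempty := by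
    rcases Set.eq_empty_or_nonempty E with h | h
    · rw [h, measure_empty] at hEμ
      exact absurd (ENNReal.ofReal_pos.2 hα) (not_lt.2 hEμ)
    · exact h
  have hdist : ∀ a b : X, dist a b ≤ 1 := by
    intro a b
    have hbdd : Bornology.IsBounded (Set.univ : Set X) := by
      rw [Metric.isBounded_iff_ediam_ne_top]
      intro htop
      rw [Metric.diam, htop] at hdiam
      simp at hdiam
    calc dist a b ≤ Metric.diam (Set.univ : Set X) :=
          Metric.dist_le_diam_of_mem hbdd trivial trivial
      _ = 1 := hdiam
  by_contra hcon
  push_neg at hcon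
  -- the decaying neighborhoods
  have hclaim : ∀ k : ℕ, k ≤ N → μ {z | Metric.infDist z E ≤ τ ^ k} ≤ q ^ k := by
    intro k
    induction k with
    | zero =>
      intro _
      simpa using le_of_le_of_eq (measure_mono (Set.subset_univ _)) hμu
    | succ n ih =>
      intro hn1
      have hn : n ≤ N := le_of_lt (Nat.lt_of_succ_le hn1)
      have hs : 0 < τ ^ n := pow_pos hτ0 n
      have hsle1 : τ ^ n ≤ 1 := pow_le_one₀ hτ0.le hτ1
      have hr₀le : τ ^ N ≤ τ ^ n := pow_le_pow_of_le_one hτ0.le hτ1 hn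
      have hsp : ∀ x ∈ E, ε' * τ ^ n ≤ ⨆ p : (Metric.closedBall x (τ ^ n)),
          Metric.infDist (p : X) (E ∩ Metric.closedBall x (τ ^ n)) := by
        intro x hx
        have hne : (E ∩ Metric.closedBall x (τ ^ n)).Nonempty :=
          ⟨x, hx, Metric.mem_closedBall_self hs.le⟩
        have hcon' : ε ≤ sparseIn E x (τ ^ n) := hcon x (τ ^ n) hr₀le hsle1 hne
        rw [sparseIn, le_div_iff₀ hs] at hcon'
        calc ε' * τ ^ n ≤ ε * τ ^ n := by nlinarith
          _ ≤ _ := hcon'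
      have hstep := QMD.decay_step μ hg hC'1 hd2 hμu hdist hEne hε'0 hε'1 hs hm hsp
      have heq : ε' * τ ^ n / 32 = τ ^ (n + 1) := by
        rw [pow_succ, hτdef]; ring
      rw [heq] at hstep
      calc μ {z | Metric.infDist z E ≤ τ ^ (n + 1)} ≤ q * μ {z | Metric.infDist z E ≤ τ ^ n} :=
            hstep
        _ ≤ q * q ^ n := mul_le_mul_right (ih hn) _
        _ = q ^ (n + 1) := by rw [pow_succ]; ring
  have hfinal : ENNReal.ofReal α ≤ q ^ N := by
    calc ENNReal.ofReal α ≤ μ E := hEμ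
      _ ≤ μ {z | Metric.infDist z E ≤ τ ^ N} := by
          refine measure_mono fun z hz => ?_
          show Metric.infDist z E ≤ τ ^ N
          rw [Metric.infDist_zero_of_mem hz]
          positivity
      _ ≤ q ^ N := hclaim N le_rfl
  exact absurd hfinal (not_le.2 hN)
end
end

section
/- Given d ∈ ℕ, α > 0 and δ > 0, there exists M ∈ ℕ, depending only on d, α and δ, with the following property: for every set E ⊆ [0,1]^d there exist subsets F₁, F₂, …, F_M, Z of E such that (1) E = F₁ ∪ F₂ ∪ … ∪ F_M ∪ Z; (2) the Lebesgue outer measure of Z is less than α; and (3) for each i ∈ {1,…,M}, F_i is δ-well-connected in E. -/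
open Metric MeasureTheory
open scoped ENNReal

noncomputable section

/-- The closed unit cube `[0,1]^d` in Euclidean space. -/
def unitCube (d : ℕ) : Set (EuclideanSpace ℝ (Fin d)) := {x | ∀ i, 0 ≤ x i ∧ x i ≤ 1}

/-- An `η`-chain from `x` to `y` consisting of points of `E`, of length at most `L`:
a finite list `z 0 = x, …, z m = y` of points of `E` with consecutive distances `< η`
and total length `Σ dist(z i, z (i+1)) ≤ L`. -/
def IsChainFromTo {X : Type*} [MetricSpace X] (η : ℝ) (E : Set X) (x y : X) (L : ℝ) : Prop :=
  ∃ (m : ℕ) (z : ℕ → X), z 0 = x ∧ z m = y ∧ (∀ i ≤ m, z i ∈ E) ∧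
    (∀ i < m, dist (z i) (z (i + 1)) < η) ∧
    ∑ i ∈ Finset.range m, dist (z i) (z (i + 1)) ≤ L

/-- `F` is `δ`-well-connected in `E`: every `x, y ∈ F` are joined by a
`δ·|x-y|`-chain in `E` of length at most `(1+δ)·|x-y|`. -/
def WellConnectedIn {X : Type*} [MetricSpace X] (δ : ℝ) (F E : Set X) : Prop :=
  ∀ x ∈ F, ∀ y ∈ F, IsChainFromTo (δ * dist x y) E x y ((1 + δ) * dist x y)

namespace QCaux

/-- scale weight `2⁻ᵏ` -/
def w (k : ℕ) : ℝ := (2:ℝ)⁻¹ ^ k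

lemma w_pos (k : ℕ) : 0 < w k := by unfold w; positivity

lemma w_le_one (k : ℕ) : w k ≤ 1 := by
  have : ((2:ℝ)⁻¹) ^ k ≤ 1 := pow_le_one₀ (by norm_num) (by norm_num)
  simpa [w] using this

lemma w_add (k l : ℕ) : w (k + l) = w k * w l := by simp [w, pow_add]

lemma w_anti {k l : ℕ} (h : k ≤ l) : w l ≤ w k :=
  pow_le_pow_of_le_one (by norm_num) (by norm_num) h

lemma w_mul_two_pow (k : ℕ) : w k * 2 ^ k = 1 := by
  simp [w, ← mul_pow]

/-- the scale of a distance `D`: the largest `k` with `2⁻ᵏ ≥ D` (0 if `D > 1`). -/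
def sc (D : ℝ) : ℕ := Nat.log 2 ⌊1/D⌋₊

lemma w_sc_lt {D : ℝ} (hD : 0 < D) : w (sc D) < 2 * D := by
  have h1 : 1/D < (⌊1/D⌋₊ : ℝ) + 1 := Nat.lt_floor_add_one _
  have h2 : (⌊1/D⌋₊ : ℕ) < 2 ^ (sc D + 1) := Nat.lt_pow_succ_log_self (by norm_num) _
  have h3 : 1/D < (2:ℝ) ^ (sc D + 1) := by
    have : ((⌊1/D⌋₊ : ℕ) : ℝ) + 1 ≤ ((2 ^ (sc D + 1) : ℕ) : ℝ) := by
      exact_mod_cast Nat.succ_le_of_lt h2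
    push_cast at this
    linarith
  have h4 : (2:ℝ) ^ (sc D + 1) * w (sc D + 1) = 1 := by
    rw [mul_comm]; exact w_mul_two_pow _
  have hppos : (0:ℝ) < (2:ℝ) ^ (sc D + 1) := by positivity
  have h6 : 1 < (2:ℝ) ^ (sc D + 1) * D := by
    rw [div_lt_iff₀ hD] at h3; linarith
  have h5 : w (sc D + 1) < D := by
    have h4' : w (sc D + 1) * (2:ℝ) ^ (sc D + 1) = 1 := by rw [mul_comm]; exact h4
    have hw : w (sc D + 1) = 1 / (2:ℝ) ^ (sc D + 1) := eq_one_div_of_mul_eq_one_left h4' 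
    rw [hw, div_lt_iff₀ hppos]; linarith
  have : w (sc D) = 2 * w (sc D + 1) := by
    simp [w, pow_succ]; ring
  linarith

lemma le_w_sc {D : ℝ} (hD : 0 < D) (h1 : D ≤ 1) : D ≤ w (sc D) := by
  have hn : 1 ≤ ⌊1/D⌋₊ := Nat.le_floor (by rw [Nat.cast_one, le_div_iff₀ hD]; linarith)
  have h2 : 2 ^ (sc D) ≤ ⌊1/D⌋₊ := Nat.pow_log_le_self 2 (by omega)
  have h3 : ((⌊1/D⌋₊ : ℕ) : ℝ) ≤ 1/D := Nat.floor_le (by positivity)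
  have h4 : (2:ℝ) ^ (sc D) ≤ 1/D := by
    calc (2:ℝ) ^ (sc D) = ((2 ^ (sc D) : ℕ) : ℝ) := by push_cast; ring
    _ ≤ ((⌊1/D⌋₊ : ℕ) : ℝ) := by exact_mod_cast h2
    _ ≤ 1/D := h3
  have h5 : (2:ℝ) ^ (sc D) * w (sc D) = 1 := by rw [mul_comm]; exact w_mul_two_pow _
  have hppos : (0:ℝ) < (2:ℝ) ^ (sc D) := by positivity
  have h5' : w (sc D) * (2:ℝ) ^ (sc D) = 1 := by rw [mul_comm]; exact h5
  have hw : w (sc D) = 1 / (2:ℝ) ^ (sc D) := eq_one_div_of_mul_eq_one_left h5' 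
  rw [hw, le_div_iff₀ hppos]
  calc D * (2:ℝ) ^ (sc D) ≤ D * (1/D) := by
        apply mul_le_mul_of_nonneg_left _ (le_of_lt hD)
        exact h4
  _ = 1 := by field_simp

lemma le_w_of_sc_pos {D : ℝ} (hD : 0 < D) (h : 1 ≤ sc D) : D ≤ w (sc D) := by
  by_cases h1 : D ≤ 1
  · exact le_w_sc hD h1
  · exfalso
    have : ⌊1/D⌋₊ ≤ 1 := by
      apply Nat.floor_le_one_of_le_one
      rw [div_le_one hD]; linarith
    have : sc D = 0 := by
      unfold sc
      interval_cases h : ⌊1/D⌋₊ <;> simp [h]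
    omega

section dist
variable {d : ℕ}

lemma coord_le_dist (x y : EuclideanSpace ℝ (Fin d)) (i : Fin d) :
    |x i - y i| ≤ dist x y := by
  rw [EuclideanSpace.dist_eq]
  have h1 : |x i - y i| = Real.sqrt (dist (x i) (y i) ^ 2) := by
    rw [Real.dist_eq, Real.sqrt_sq_eq_abs, abs_abs]
  rw [h1]
  apply Real.sqrt_le_sqrt
  apply Finset.single_le_sum (f := fun j => dist (x j) (y j) ^ 2)
    (fun j _ => sq_nonneg _) (Finset.mem_univ i)

lemma dist_le_of_coords {c : ℝ} (hc : 0 ≤ c) (x y : EuclideanSpace ℝ (Fin d))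
    (h : ∀ i, |x i - y i| ≤ c) : dist x y ≤ Real.sqrt d * c := by
  rw [EuclideanSpace.dist_eq]
  have : ∑ i, dist (x i) (y i) ^ 2 ≤ (d : ℝ) * c ^ 2 := by
    calc ∑ i, dist (x i) (y i) ^ 2 ≤ ∑ _i : Fin d, c ^ 2 := by
          apply Finset.sum_le_sum
          intro i _
          have := h i
          rw [Real.dist_eq]
          nlinarith [abs_nonneg (x i - y i)]
    _ = (d : ℝ) * c ^ 2 := by
          rw [Finset.sum_const, Finset.card_univ, Fintype.card_fin, nsmul_eq_mul]
  calc Real.sqrt (∑ i, dist (x i) (y i) ^ 2) ≤ Real.sqrt ((d:ℝ) * c ^ 2) :=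
        Real.sqrt_le_sqrt this
  _ = Real.sqrt d * c := by
        rw [Real.sqrt_mul (by positivity), Real.sqrt_sq hc]

lemma sqrt_d_le (d : ℕ) : Real.sqrt d ≤ (d : ℝ) + 1 := by
  have : (d:ℝ) ≤ ((d:ℝ)+1)^2 := by nlinarith [Nat.cast_nonneg (α := ℝ) d]
  calc Real.sqrt d ≤ Real.sqrt (((d:ℝ)+1)^2) := Real.sqrt_le_sqrt this
  _ = (d:ℝ)+1 := by rw [Real.sqrt_sq (by positivity)]

lemma dist_le_sqrt_d {x y : EuclideanSpace ℝ (Fin d)}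
    (hx : x ∈ unitCube d) (hy : y ∈ unitCube d) : dist x y ≤ Real.sqrt d := by
  have := dist_le_of_coords (c := 1) zero_le_one x y (fun i => by
    have h1 := hx i; have h2 := hy i
    rw [abs_le]; constructor <;> linarith [h1.1, h1.2, h2.1, h2.2])
  simpa using this

end dist

section chains
variable {X : Type*} [MetricSpace X]

lemma chain_self {E : Set X} {x : X} (hx : x ∈ E) {η L : ℝ} (hL : 0 ≤ L) :
    IsChainFromTo η E x x L := by
  refine ⟨0, fun _ => x, rfl, rfl, fun i _ => hx, fun i hi => by omega, by simpa using hL⟩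

lemma chain_reverse {η L : ℝ} {E : Set X} {x y : X} (h : IsChainFromTo η E x y L) :
    IsChainFromTo η E y x L := by
  obtain ⟨m, z, h0, hm, hE, hgap, hsum⟩ := h
  refine ⟨m, fun i => z (m - i), by simpa using hm, by simpa using h0,
    fun i _ => hE _ (Nat.sub_le _ _), ?_, ?_⟩
  · intro i hi
    show dist (z (m - i)) (z (m - (i+1))) < η
    have h1 : m - i = (m - (i+1)) + 1 := by omega
    rw [h1, dist_comm]
    exact hgap _ (by omega)
  · show ∑ i ∈ Finset.range m, dist (z (m - i)) (z (m - (i+1))) ≤ L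
    have : ∀ i ∈ Finset.range m,
        dist (z (m - i)) (z (m - (i+1))) = dist (z (m - 1 - i)) (z (m - 1 - i + 1)) := by
      intro i hi
      rw [Finset.mem_range] at hi
      have h1 : m - i = (m - 1 - i) + 1 := by omega
      have h2 : m - (i+1) = m - 1 - i := by omega
      rw [h1, h2, dist_comm]
    rw [Finset.sum_congr rfl this, Finset.sum_range_reflect (fun j => dist (z j) (z (j+1))) m]
    exact hsum

end chains

section badchain
variable {d : ℕ}

/-- `x` is `(ε,R)`-porous ("bad") at scale `k` w.r.t. `E`. -/
def bad (E : Set (EuclideanSpace ℝ (Fin d))) (ε R : ℝ) (k : ℕ)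
    (x : EuclideanSpace ℝ (Fin d)) : Prop :=
  ∃ p, dist x p ≤ R * w k ∧ E ∩ ball p (ε * w k) = ∅

lemma bad_mono {E : Set (EuclideanSpace ℝ (Fin d))} {ε R R' : ℝ} {k : ℕ}
    {x : EuclideanSpace ℝ (Fin d)} (h : R ≤ R') (hb : bad E ε R k x) :
    bad E ε R' k x := by
  obtain ⟨p, hp1, hp2⟩ := hb
  exact ⟨p, hp1.trans (by nlinarith [w_pos k]), hp2⟩

lemma bad_transfer {E : Set (EuclideanSpace ℝ (Fin d))} {ε R c : ℝ} {k : ℕ}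
    {x y : EuclideanSpace ℝ (Fin d)} (hb : bad E ε R k x) (h : dist x y ≤ c * w k) :
    bad E ε (R + c) k y := by
  obtain ⟨p, hp1, hp2⟩ := hb
  refine ⟨p, ?_, hp2⟩
  calc dist y p ≤ dist y x + dist x p := dist_triangle _ _ _
  _ ≤ c * w k + R * w k := by rw [dist_comm]; linarith
  _ = (R + c) * w k := by ring

set_option maxHeartbeats 1000000 in
lemma chain_of_not_bad {E : Set (EuclideanSpace ℝ (Fin d))} (hE : E ⊆ unitCube d)
    {δ : ℝ} (hδ : 0 < δ) {x y : EuclideanSpace ℝ (Fin d)}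
    (hx : x ∈ E) (hy : y ∈ E) (hxy : x ≠ y)
    (hb : ¬ bad E ((min δ 1)^2/40) ((d:ℝ)+5) (sc (dist x y)) x) :
    IsChainFromTo (δ * dist x y) E x y ((1+δ) * dist x y) := by
  set δ₀ := min δ 1 with hδ₀def
  have hδ₀ : 0 < δ₀ := lt_min hδ one_pos
  have hδ₀1 : δ₀ ≤ 1 := min_le_right _ _
  have hδ₀δ : δ₀ ≤ δ := min_le_left _ _
  set ε := δ₀^2/40 with hεdef
  have hε : 0 < ε := by positivity
  set D := dist x y with hDdef
  have hD0 : 0 < D := dist_pos.2 hxy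
  set k := sc D with hkdef
  have hwpos := w_pos k
  have hwlt : w k < 2 * D := w_sc_lt hD0
  have hDle : D ≤ ((d:ℝ)+1) * w k := by
    rcases Nat.eq_zero_or_pos k with h | h
    · have h1 : D ≤ Real.sqrt d := dist_le_sqrt_d (hE hx) (hE hy)
      have h2 := sqrt_d_le d
      have h3 : w k = 1 := by rw [h]; simp [w]
      rw [h3]; linarith
    · have h1 : D ≤ w k := le_w_of_sc_pos hD0 h
      nlinarith [Nat.cast_nonneg (α := ℝ) d]
  set q := ⌈(4:ℝ)/δ₀⌉₊ with hqdef
  have hq4 : (4:ℝ)/δ₀ ≤ q := Nat.le_ceil _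
  have hq0 : 0 < q := by
    have : (0:ℝ) < 4/δ₀ := by positivity
    exact_mod_cast lt_of_lt_of_le this hq4
  have hq0' : ((q:ℝ)) ≠ 0 := by exact_mod_cast hq0.ne'
  have hqle : (q:ℝ) ≤ 5/δ₀ := by
    have h1 := Nat.ceil_lt_add_one (a := (4:ℝ)/δ₀) (by positivity)
    have h2 : (1:ℝ) ≤ 1/δ₀ := by rw [le_div_iff₀ hδ₀]; linarith
    have h3 : (4:ℝ)/δ₀ + 1 ≤ 5/δ₀ := by
      have : (4:ℝ)/δ₀ + 1/δ₀ = 5/δ₀ := by ring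
      linarith
    linarith
  set h := ε * w k with hhdef
  have hhpos : 0 < h := by positivity
  have hh2 : h ≤ 2 * ε * D := by
    have := mul_le_mul_of_nonneg_left hwlt.le hε.le
    calc h = ε * w k := rfl
    _ ≤ ε * (2*D) := this
    _ = 2 * ε * D := by ring
  set p : ℕ → EuclideanSpace ℝ (Fin d) := fun j => x + ((j:ℝ)/(q:ℝ)) • (y - x) with hpdef
  have hp0 : p 0 = x := by simp [hpdef]
  have hpq : p q = y := by
    simp only [hpdef, div_self hq0', one_smul]
    abel
  have hDnorm : ‖y - x‖ = D := by rw [← dist_eq_norm, dist_comm]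
  have hpdist : ∀ j : ℕ, j ≤ q → dist x (p j) ≤ D := by
    intro j hj
    simp only [hpdef]
    rw [dist_self_add_right, norm_smul, hDnorm]
    have h1 : |((j:ℝ))/(q:ℝ)| ≤ 1 := by
      rw [abs_div, abs_of_nonneg (by positivity : (0:ℝ) ≤ (j:ℝ)),
        abs_of_nonneg (by positivity : (0:ℝ) ≤ (q:ℝ)), div_le_one (by exact_mod_cast hq0)]
      exact_mod_cast hj
    calc |((j:ℝ))/(q:ℝ)| * D ≤ 1 * D := by nlinarith
    _ = D := one_mul D
  have hpstep : ∀ j : ℕ, dist (p j) (p (j+1)) = D/q := by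
    intro j
    have hsub : p (j+1) - p j = ((1:ℝ)/q) • (y - x) := by
      simp only [hpdef]
      rw [add_sub_add_left_eq_sub, ← sub_smul]
      congr 1
      push_cast
      field_simp
      ring
    rw [dist_eq_norm, ← neg_sub (p (j+1)) (p j), norm_neg, hsub, norm_smul, hDnorm,
      Real.norm_eq_abs, abs_of_nonneg (by positivity : (0:ℝ) ≤ (1:ℝ)/(q:ℝ))]
    ring
  have hgood : ∀ j : ℕ, j ≤ q → (E ∩ ball (p j) h).Nonempty := by
    intro j hj
    by_contra hne
    apply hb
    refine ⟨p j, ?_, ?_⟩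
    · calc dist x (p j) ≤ D := hpdist j hj
      _ ≤ ((d:ℝ)+1) * w k := hDle
      _ ≤ ((d:ℝ)+5) * w k := by nlinarith
    · rw [Set.not_nonempty_iff_eq_empty] at hne; exact hne
  have hpick : ∀ j : ℕ, ∃ u, (j = 0 → u = x) ∧ (j ≠ 0 → q ≤ j → u = y) ∧
      (j ≠ 0 → ¬ q ≤ j → u ∈ E ∩ ball (p j) h) := by
    intro j
    by_cases h0 : j = 0
    · exact ⟨x, fun _ => rfl, by tauto, by tauto⟩
    · by_cases h1 : q ≤ j
      · exact ⟨y, by tauto, fun _ _ => rfl, by tauto⟩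
      · obtain ⟨u, hu⟩ := hgood j (by omega)
        exact ⟨u, by tauto, by tauto, fun _ _ => hu⟩
  choose z hz1 hz2 hz3 using hpick
  have hz0 : z 0 = x := hz1 0 rfl
  have hzq : z q = y := by
    rcases Nat.eq_zero_or_pos q with h0 | h0
    · omega
    · exact hz2 q (by omega) le_rfl
  have hzE : ∀ j, z j ∈ E := by
    intro j
    by_cases h0 : j = 0
    · rw [hz1 j h0]; exact hx
    · by_cases h1 : q ≤ j
      · rw [hz2 j h0 h1]; exact hy
      · exact (hz3 j h0 h1).1
  have hzp : ∀ j ≤ q, dist (z j) (p j) ≤ h := by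
    intro j hj
    by_cases h0 : j = 0
    · subst h0; rw [hz1 0 rfl, hp0, dist_self]; exact hhpos.le
    · by_cases h1 : q ≤ j
      · have hjq : j = q := le_antisymm hj h1
        rw [hz2 j h0 h1, hjq, hpq, dist_self]; exact hhpos.le
      · have := (hz3 j h0 h1).2
        rw [mem_ball] at this
        exact this.le
  have hgap : ∀ j, j < q → dist (z j) (z (j+1)) ≤ D/q + 2*h := by
    intro j hj
    calc dist (z j) (z (j+1)) ≤ dist (z j) (p j) + dist (p j) (p (j+1))
        + dist (p (j+1)) (z (j+1)) := dist_triangle4 _ _ _ _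
    _ ≤ h + D/q + h := by
        have h1 := hzp j (by omega)
        have h2 := hpstep j
        have h3 := hzp (j+1) (by omega)
        rw [dist_comm (p (j+1))] at *
        linarith
    _ = D/q + 2*h := by ring
  have hnum1 : D/q + 2*h < δ * D := by
    have hqR : (0:ℝ) < q := by exact_mod_cast hq0
    have h1 : D/q ≤ D * (δ₀/4) := by
      have h1a : (1:ℝ)/q ≤ δ₀/4 := by
        rw [div_le_div_iff₀ hqR (by norm_num : (0:ℝ) < 4)]
        have := mul_le_mul_of_nonneg_left hq4 hδ₀.le
        rw [mul_div_cancel₀ (4:ℝ) hδ₀.ne'] at this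
        linarith
      calc D/q = D * ((1:ℝ)/q) := by ring
      _ ≤ D * (δ₀/4) := mul_le_mul_of_nonneg_left h1a hD0.le
    have h2 : 2*h ≤ 4*ε*D := by linarith
    have h3 : 4*ε*D = δ₀^2*D/10 := by rw [hεdef]; ring
    nlinarith [sq_nonneg δ₀, mul_pos hD0 hδ₀]
  refine ⟨q, z, hz0, hzq, fun i _ => hzE i, ?_, ?_⟩
  · intro i hi
    calc dist (z i) (z (i+1)) ≤ D/q + 2*h := hgap i hi
    _ < δ * D := hnum1
  · calc ∑ i ∈ Finset.range q, dist (z i) (z (i+1))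
        ≤ ∑ _i ∈ Finset.range q, (D/q + 2*h) := by
          apply Finset.sum_le_sum
          intro i hi
          exact hgap i (Finset.mem_range.1 hi)
    _ = q * (D/q + 2*h) := by rw [Finset.sum_const, Finset.card_range, nsmul_eq_mul]
    _ = D + q*(2*h) := by field_simp
    _ ≤ (1+δ) * D := by
        have h1 : (q:ℝ)*(2*h) ≤ (5/δ₀)*(2*(2*ε*D)) := by
          apply mul_le_mul hqle (by linarith) (by linarith) (by positivity)
        have h2 : (5/δ₀)*(2*(2*ε*D)) = δ₀ * D / 2 := by
          rw [hεdef]; field_simp; ring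
        nlinarith [mul_pos hD0 hδ₀]

end badchain

section cubes
variable {d : ℕ}

lemma w_eq_inv (m : ℕ) : w m = ((2:ℝ)^m)⁻¹ := by simp [w, inv_pow]

/-- index of the dyadic cube (with offset `v`) of scale `m` containing `x` -/
def idx (v : Fin d → ℝ) (m : ℕ) (x : EuclideanSpace ℝ (Fin d)) : Fin d → ℤ :=
  fun i => ⌊(2:ℝ)^m * (x i - v i)⌋

def cube (v : Fin d → ℝ) (m : ℕ) (a : Fin d → ℤ) : Set (EuclideanSpace ℝ (Fin d)) :=
  {x | idx v m x = a}

lemma mem_cube {v : Fin d → ℝ} {m : ℕ} {a : Fin d → ℤ} {x : EuclideanSpace ℝ (Fin d)} :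
    x ∈ cube v m a ↔ ∀ i, (a i : ℝ) ≤ (2:ℝ)^m * (x i - v i) ∧
      (2:ℝ)^m * (x i - v i) < a i + 1 := by
  simp only [cube, Set.mem_setOf_eq, funext_iff, idx]
  apply forall_congr'
  intro i
  rw [Int.floor_eq_iff]

lemma self_mem_cube {v : Fin d → ℝ} {m : ℕ} {x : EuclideanSpace ℝ (Fin d)} :
    x ∈ cube v m (idx v m x) := rfl

lemma mem_cube_ico {v : Fin d → ℝ} {m : ℕ} {a : Fin d → ℤ} {x : EuclideanSpace ℝ (Fin d)} :
    x ∈ cube v m a ↔ ∀ i, x i ∈ Set.Ico (v i + a i * w m) (v i + (a i + 1) * w m) := by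
  rw [mem_cube]
  have h2m : (0:ℝ) < (2:ℝ)^m := by positivity
  apply forall_congr'
  intro i
  have e1 : (v i + a i * w m ≤ x i) ↔ ((a i:ℝ) ≤ (2:ℝ)^m * (x i - v i)) := by
    rw [w_eq_inv, ← div_eq_mul_inv, ← le_sub_iff_add_le', div_le_iff₀ h2m,
      mul_comm (x i - v i)]
  have e2 : (x i < v i + ((a i:ℝ) + 1) * w m) ↔ ((2:ℝ)^m * (x i - v i) < (a i:ℝ) + 1) := by
    rw [w_eq_inv, ← div_eq_mul_inv, ← sub_lt_iff_lt_add', div_eq_mul_inv,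
      ← div_eq_mul_inv, lt_div_iff₀ h2m, mul_comm (x i - v i)]
  rw [Set.mem_Ico, e1, e2]

lemma cube_eq_preimage (v : Fin d → ℝ) (m : ℕ) (a : Fin d → ℤ) :
    cube v m a = (MeasurableEquiv.toLp 2 (Fin d → ℝ)).symm ⁻¹'
      (Set.univ.pi fun i => Set.Ico (v i + a i * w m) (v i + (a i + 1) * w m)) := by
  ext x
  rw [mem_cube_ico]
  simp only [Set.mem_preimage, Set.mem_univ_pi]
  exact Iff.rfl

lemma cube_measurable (v : Fin d → ℝ) (m : ℕ) (a : Fin d → ℤ) :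
    MeasurableSet (cube v m a) := by
  rw [cube_eq_preimage]
  exact (MeasurableEquiv.toLp 2 (Fin d → ℝ)).symm.measurable
    (MeasurableSet.univ_pi fun i => measurableSet_Ico)

lemma volume_cube (v : Fin d → ℝ) (m : ℕ) (a : Fin d → ℤ) :
    volume (cube v m a) = ENNReal.ofReal (w m) ^ d := by
  rw [cube_eq_preimage,
    (EuclideanSpace.volume_preserving_symm_measurableEquiv_toLp (Fin d)).measure_preimage
      (MeasurableSet.univ_pi fun i => measurableSet_Ico).nullMeasurableSet,
    volume_pi_pi]
  have : ∀ i : Fin d, volume (Set.Ico (v i + a i * w m) (v i + (a i + 1) * w m))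
      = ENNReal.ofReal (w m) := by
    intro i
    rw [Real.volume_Ico]
    congr 1
    ring
  rw [Finset.prod_congr rfl (fun i _ => this i)]
  simp

lemma cube_disjoint {v : Fin d → ℝ} {m : ℕ} {a a' : Fin d → ℤ} (h : a ≠ a') :
    Disjoint (cube v m a) (cube v m a') := by
  rw [Set.disjoint_left]
  intro x hx hx'
  exact h (hx.symm.trans hx')

lemma floor_div_pow (r : ℝ) (e : ℕ) : ⌊r / (2:ℝ)^e⌋ = ⌊r⌋ / ((2:ℤ)^e) := by
  have h2e : (0:ℤ) < (2:ℤ)^e := by positivity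
  have h2eR : (0:ℝ) < (2:ℝ)^e := by positivity
  have hb1 : (⌊r⌋ / (2:ℤ)^e) * (2:ℤ)^e ≤ ⌊r⌋ := Int.ediv_mul_le _ (by positivity)
  have hb2 : ⌊r⌋ < (⌊r⌋/(2:ℤ)^e + 1) * (2:ℤ)^e := Int.lt_ediv_add_one_mul_self _ h2e
  rw [Int.floor_eq_iff]
  constructor
  · rw [le_div_iff₀ h2eR]
    calc ((⌊r⌋ / (2:ℤ)^e : ℤ) : ℝ) * (2:ℝ)^e = (((⌊r⌋ / (2:ℤ)^e) * (2:ℤ)^e : ℤ) : ℝ) := by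
          push_cast; ring
    _ ≤ (⌊r⌋ : ℝ) := by exact_mod_cast hb1
    _ ≤ r := Int.floor_le r
  · rw [div_lt_iff₀ h2eR]
    calc r < (⌊r⌋ : ℝ) + 1 := Int.lt_floor_add_one r
    _ ≤ ((((⌊r⌋/(2:ℤ)^e) + 1) * (2:ℤ)^e : ℤ) : ℝ) := by
          exact_mod_cast hb2
    _ = (((⌊r⌋/(2:ℤ)^e : ℤ) : ℝ) + 1) * (2:ℝ)^e := by push_cast; ring

lemma idx_coarse (v : Fin d → ℝ) {m m' : ℕ} (h : m ≤ m') (x : EuclideanSpace ℝ (Fin d)) :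
    idx v m x = fun i => (idx v m' x i) / ((2:ℤ)^(m' - m)) := by
  funext i
  have hpow : (2:ℝ)^m * (2:ℝ)^(m'-m) = (2:ℝ)^m' := by rw [← pow_add]; congr 1; omega
  have : (2:ℝ)^m * (x i - v i) = ((2:ℝ)^m' * (x i - v i)) / (2:ℝ)^(m' - m) := by
    rw [eq_div_iff (by positivity : ((2:ℝ)^(m'-m)) ≠ 0), mul_right_comm, hpow]
  simp only [idx]
  rw [this, floor_div_pow]

lemma cube_nested {v : Fin d → ℝ} {m m' : ℕ} {a : Fin d → ℤ} {a' : Fin d → ℤ}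
    (h : m ≤ m') (hne : (cube v m' a' ∩ cube v m a).Nonempty) :
    cube v m' a' ⊆ cube v m a := by
  obtain ⟨z, hz1, hz2⟩ := hne
  intro u hu
  have hzu : idx v m' u = idx v m' z := by
    have h1 : idx v m' z = a' := hz1
    have h2 : idx v m' u = a' := hu
    rw [h1, h2]
  show idx v m u = a
  calc idx v m u = (fun i => (idx v m' u i) / ((2:ℤ)^(m' - m))) := idx_coarse v h u
  _ = (fun i => (idx v m' z i) / ((2:ℤ)^(m' - m))) := by rw [hzu]
  _ = idx v m z := (idx_coarse v h z).symm
  _ = a := hz2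

end cubes

section counting
variable {d : ℕ}

lemma int_ediv_facts (b : ℤ) (e : ℕ) :
    (b / (2:ℤ)^e) * (2:ℤ)^e ≤ b ∧ b < (b / (2:ℤ)^e + 1) * (2:ℤ)^e := by
  have h2e : (0:ℤ) < (2:ℤ)^e := by positivity
  have h1 := Int.mul_ediv_add_emod b ((2:ℤ)^e)
  have h2 := Int.emod_nonneg b (ne_of_gt h2e)
  have h3 := Int.emod_lt_of_pos b h2e
  constructor <;> nlinarith

/-- indices of the depth-`s3` dyadic subcubes of a cube with index `a` -/
def subIdx (s3 : ℕ) (a : Fin d → ℤ) : Finset (Fin d → ℤ) :=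
  Fintype.piFinset fun i => Finset.Ico (a i * 2^s3) ((a i + 1) * 2^s3)

lemma card_subIdx (s3 : ℕ) (a : Fin d → ℤ) : (subIdx s3 a).card = 2^(s3*d) := by
  rw [subIdx, Fintype.card_piFinset]
  have : ∀ i : Fin d, (Finset.Ico (a i * 2^s3) ((a i + 1) * 2^s3)).card = 2^s3 := by
    intro i
    rw [Int.card_Ico]
    have : (a i + 1) * 2^s3 - a i * 2^s3 = (2:ℤ)^s3 := by ring
    rw [this, show ((2:ℤ)^s3) = ((2^s3 : ℕ) : ℤ) by push_cast; ring, Int.toNat_natCast]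
  rw [Finset.prod_congr rfl (fun i _ => this i), Finset.prod_const, Finset.card_univ,
    Fintype.card_fin, ← pow_mul]

lemma idx_mem_subIdx {v : Fin d → ℝ} {m s3 : ℕ} {a : Fin d → ℤ}
    {x : EuclideanSpace ℝ (Fin d)} (hx : x ∈ cube v m a) :
    idx v (m + s3) x ∈ subIdx s3 a := by
  rw [subIdx, Fintype.mem_piFinset]
  intro i
  rw [Finset.mem_Ico]
  have h1 : idx v m x = fun i => (idx v (m+s3) x i) / ((2:ℤ)^((m+s3) - m)) :=
    idx_coarse v (by omega) x
  have h2 : (m + s3) - m = s3 := by omega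
  have h3 : a i = (idx v (m+s3) x i) / ((2:ℤ)^s3) := by
    have := congrFun h1 i
    rw [h2] at this
    rw [← this, hx]
  obtain ⟨hf1, hf2⟩ := int_ediv_facts (idx v (m+s3) x i) s3
  rw [h3]
  constructor <;> linarith

lemma cube_nonempty (v : Fin d → ℝ) (m : ℕ) (a : Fin d → ℤ) : (cube v m a).Nonempty := by
  refine ⟨WithLp.toLp 2 (fun i => v i + ((a i : ℝ) + 1/2) * w m : Fin d → ℝ), ?_⟩
  rw [mem_cube_ico]
  intro i
  have hw := w_pos m
  constructor
  · show v i + (a i : ℝ) * w m ≤ v i + ((a i : ℝ) + 1/2) * w m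
    nlinarith
  · show v i + ((a i : ℝ) + 1/2) * w m < v i + ((a i : ℝ) + 1) * w m
    nlinarith

/-- cube `(m,a)` is "self-vacant": it has a depth-`s3` subcube missing `H`. -/
def svc (H : Set (EuclideanSpace ℝ (Fin d))) (v : Fin d → ℝ) (s3 m : ℕ) (a : Fin d → ℤ) : Prop :=
  ∃ b : Fin d → ℤ, cube v (m + s3) b ⊆ cube v m a ∧ volume (H ∩ cube v (m + s3) b) = 0

def sv (H : Set (EuclideanSpace ℝ (Fin d))) (v : Fin d → ℝ) (s3 m : ℕ)
    (x : EuclideanSpace ℝ (Fin d)) : Prop :=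
  svc H v s3 m (idx v m x)

def Wset (H : Set (EuclideanSpace ℝ (Fin d))) (v : Fin d → ℝ) (s3 m₀ : ℕ) (a : Fin d → ℤ)
    (M : ℕ) : Set (EuclideanSpace ℝ (Fin d)) :=
  {x | x ∈ H ∧ x ∈ cube v m₀ a ∧ ∃ S : Finset ℕ, S.card = M ∧ ∀ l ∈ S, m₀ < l ∧ sv H v s3 l x}

lemma hole_mem_subIdx {H : Set (EuclideanSpace ℝ (Fin d))} {v : Fin d → ℝ} {s3 m : ℕ}
    {a b : Fin d → ℤ} (hsub : cube v (m + s3) b ⊆ cube v m a) : b ∈ subIdx s3 a := by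
  obtain ⟨z, hz⟩ := cube_nonempty v (m+s3) b
  have h1 : idx v (m+s3) z = b := hz
  have h2 := idx_mem_subIdx (s3 := s3) (hsub hz)
  rwa [h1] at h2

lemma core (H : Set (EuclideanSpace ℝ (Fin d))) (v : Fin d → ℝ) (s3 : ℕ) :
    ∀ M m₀ a, volume (Wset H v s3 m₀ a M)
      ≤ (ENNReal.ofReal (1 - w s3 ^ d)) ^ (M / (s3+1)) * ENNReal.ofReal (w m₀) ^ d := by
  classical
  intro M
  induction M using Nat.strong_induction_on with
  | _ M IH =>
  intro m₀ a
  set κ := ENNReal.ofReal (1 - w s3 ^ d) with hκ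
  by_cases hM : M < s3 + 1
  · rw [Nat.div_eq_of_lt hM, pow_zero, one_mul, ← volume_cube v m₀ a]
    exact measure_mono (fun x hx => hx.2.1)
  · push_neg at hM
    set W := Wset H v s3 m₀ a M with hW
    have hex : ∀ x ∈ W, ∃ l, m₀ < l ∧ sv H v s3 l x := by
      intro x hx
      obtain ⟨-, -, S, hS, hall⟩ := hx
      have hSne : S.Nonempty := by
        rw [← Finset.card_pos, hS]; omega
      obtain ⟨l, hl⟩ := hSne
      exact ⟨l, hall l hl⟩
    set G : ℕ × (Fin d → ℤ) → Set (EuclideanSpace ℝ (Fin d)) := fun p =>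
      {x | x ∈ W ∧ idx v p.1 x = p.2 ∧ (m₀ < p.1 ∧ sv H v s3 p.1 x) ∧
        ∀ l, m₀ < l → sv H v s3 l x → p.1 ≤ l} with hG
    have hcover : W ⊆ ⋃ p, G p := by
      intro x hx
      have h1 := hex x hx
      refine Set.mem_iUnion.2 ⟨(Nat.find h1, idx v (Nat.find h1) x),
        hx, rfl, Nat.find_spec h1, ?_⟩
      intro l hl hsvl
      exact Nat.find_min' h1 ⟨hl, hsvl⟩
    have hGsvc : ∀ p : ℕ × (Fin d → ℤ), (G p).Nonempty → (svc H v s3 p.1 p.2 ∧ m₀ < p.1) := by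
      rintro p ⟨x, hx⟩
      refine ⟨?_, hx.2.2.1.1⟩
      have h1 := hx.2.2.1.2
      rw [sv, hx.2.1] at h1
      exact h1
    have hGcube : ∀ p : ℕ × (Fin d → ℤ), G p ⊆ cube v p.1 p.2 := by
      rintro p x hx
      exact hx.2.1
    -- the key step bound
    have hstep : ∀ p : ℕ × (Fin d → ℤ), (G p).Nonempty →
        volume (G p) ≤ κ ^ (M/(s3+1)) * ENNReal.ofReal (w p.1) ^ d := by
      rintro ⟨m₁, b⟩ hne
      obtain ⟨⟨bh, hbh1, hbh2⟩, hm₀m₁⟩ := hGsvc _ hne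
      have hhole : bh ∈ subIdx s3 b := hole_mem_subIdx (H := H) hbh1
      have hsub : G (m₁, b) ⊆
          ⋃ b' ∈ subIdx s3 b, Wset H v s3 (m₁+s3) b' (M - (s3+1)) := by
        rintro x ⟨hxW, hxidx, ⟨hm₁, hsv₁⟩, hmin⟩
        obtain ⟨hxH, hxcube, S, hScard, hSall⟩ := hxW
        have hxc : x ∈ cube v m₁ b := hxidx
        refine Set.mem_biUnion (idx_mem_subIdx hxc) ?_
        refine ⟨hxH, self_mem_cube, ?_⟩
        set S' := S.filter (fun l => m₁ + s3 < l) with hS'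
        have hcard : M - (s3+1) ≤ S'.card := by
          have hdrop : S \ S' ⊆ Finset.Icc m₁ (m₁ + s3) := by
            intro l hl
            rw [Finset.mem_sdiff] at hl
            have h2 : ¬ (m₁ + s3 < l) := by
              intro hc
              exact hl.2 (Finset.mem_filter.2 ⟨hl.1, hc⟩)
            have h1 := hSall l hl.1
            have h3 : m₁ ≤ l := hmin l h1.1 h1.2
            rw [Finset.mem_Icc]; omega
          have h4 : (S \ S').card ≤ s3 + 1 := by
            calc (S \ S').card ≤ (Finset.Icc m₁ (m₁+s3)).card := Finset.card_le_card hdrop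
            _ = s3 + 1 := by rw [Nat.card_Icc]; omega
          have h5 : (S \ S').card + S'.card = S.card :=
            Finset.card_sdiff_add_card_eq_card (by rw [hS']; exact Finset.filter_subset _ _)
          omega
        obtain ⟨S'', hS''sub, hS''card⟩ := Finset.exists_subset_card_eq hcard
        refine ⟨S'', hS''card, ?_⟩
        intro l hl
        have hl' := hS''sub hl
        rw [hS', Finset.mem_filter] at hl'
        exact ⟨hl'.2, (hSall l hl'.1).2⟩
      have hup : volume (G (m₁, b)) ≤
          ∑ b' ∈ subIdx s3 b, volume (Wset H v s3 (m₁+s3) b' (M - (s3+1))) :=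
        (measure_mono hsub).trans (measure_biUnion_finset_le _ _)
      -- split off the hole
      rw [← Finset.add_sum_erase _ _ hhole] at hup
      have hhole0 : volume (Wset H v s3 (m₁+s3) bh (M - (s3+1))) = 0 := by
        refine le_antisymm ?_ zero_le
        rw [← hbh2]
        exact measure_mono (fun x hx => ⟨hx.1, hx.2.1⟩)
      rw [hhole0, zero_add] at hup
      have hIH : ∀ b' ∈ (subIdx s3 b).erase bh,
          volume (Wset H v s3 (m₁+s3) b' (M - (s3+1)))
            ≤ κ ^ ((M - (s3+1)) / (s3+1)) * ENNReal.ofReal (w (m₁+s3)) ^ d := by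
        intro b' _
        exact IH (M - (s3+1)) (by omega) (m₁+s3) b'
      have hsum : ∑ b' ∈ (subIdx s3 b).erase bh,
          volume (Wset H v s3 (m₁+s3) b' (M - (s3+1)))
          ≤ ((subIdx s3 b).erase bh).card •
            (κ ^ ((M - (s3+1)) / (s3+1)) * ENNReal.ofReal (w (m₁+s3)) ^ d) :=
        Finset.sum_le_card_nsmul _ _ _ hIH
      have hcard' : ((subIdx s3 b).erase bh).card = 2^(s3*d) - 1 := by
        rw [Finset.card_erase_of_mem hhole, card_subIdx]
      -- arithmetic
      have harith : (2^(s3*d) - 1 : ℕ) •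
          (κ ^ ((M - (s3+1)) / (s3+1)) * ENNReal.ofReal (w (m₁+s3)) ^ d)
          = κ ^ (M/(s3+1)) * ENNReal.ofReal (w m₁) ^ d := by
        have hws3 : (0:ℝ) ≤ w s3 := (w_pos s3).le
        have hwm1 : (0:ℝ) ≤ w m₁ := (w_pos m₁).le
        have e1 : ENNReal.ofReal (w (m₁+s3)) ^ d
            = ENNReal.ofReal (w m₁) ^ d * ENNReal.ofReal (w s3) ^ d := by
          rw [w_add, ENNReal.ofReal_mul hwm1, mul_pow]
        have e2 : ((2^(s3*d) - 1 : ℕ) : ℝ≥0∞) * ENNReal.ofReal (w s3) ^ d = κ := by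
          rw [← ENNReal.ofReal_pow hws3, ← ENNReal.ofReal_natCast,
            ← ENNReal.ofReal_mul (by positivity)]
          congr 1
          have hpow : (w s3)^d * (2:ℝ)^(s3*d) = 1 := by
            rw [w]
            rw [← pow_mul, ← mul_pow]
            norm_num
          have hcast : ((2^(s3*d) - 1 : ℕ) : ℝ) = (2:ℝ)^(s3*d) - 1 := by
            push_cast [Nat.one_le_two_pow]
            ring
          rw [hcast]
          nlinarith
        have e3 : (M - (s3+1)) / (s3+1) + 1 = M / (s3+1) := by
          have := Nat.add_div_right (M - (s3+1)) (show 0 < s3+1 by omega)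
          rw [show M - (s3+1) + (s3+1) = M by omega] at this
          omega
        rw [nsmul_eq_mul, e1, ← e3, pow_succ]
        rw [← e2]
        ring
      calc volume (G (m₁, b)) ≤ _ := hup
      _ ≤ _ := hsum
      _ = κ ^ (M/(s3+1)) * ENNReal.ofReal (w m₁) ^ d := by rw [hcard', harith]
    -- assemble
    have hGdisj : Pairwise (Function.onFun Disjoint
        (fun p : {p : ℕ × (Fin d → ℤ) // (G p).Nonempty} => cube v p.1.1 p.1.2)) := by
      rintro ⟨p, hp⟩ ⟨q, hq⟩ hne
      have hpq : p ≠ q := fun h => hne (Subtype.ext h)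
      rcases Nat.lt_trichotomy p.1 q.1 with h | h | h
      · -- if not disjoint, q-cube ⊆ p-cube, contradiction with minimality at q
        rw [Function.onFun]
        by_contra hnd
        rw [Set.not_disjoint_iff] at hnd
        obtain ⟨z, hz1, hz2⟩ := hnd
        have hsubq : cube v q.1 q.2 ⊆ cube v p.1 p.2 :=
          cube_nested h.le ⟨z, hz2, hz1⟩
        obtain ⟨x, hx⟩ := hq
        have hxp : x ∈ cube v p.1 p.2 := hsubq (hGcube q hx)
        have hsvp : sv H v s3 p.1 x := by
          rw [sv, hxp]
          exact (hGsvc p hp).1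
        have := hx.2.2.2 p.1 (hGsvc p hp).2 hsvp
        omega
      · -- same level, different index
        have hne2 : p.2 ≠ q.2 := by
          intro h2
          exact hpq (Prod.ext h h2)
        show Disjoint (cube v p.1 p.2) (cube v q.1 q.2)
        rw [← h]
        exact cube_disjoint hne2
      · rw [Function.onFun]
        by_contra hnd
        rw [Set.not_disjoint_iff] at hnd
        obtain ⟨z, hz1, hz2⟩ := hnd
        have hsubq : cube v p.1 p.2 ⊆ cube v q.1 q.2 :=
          cube_nested h.le ⟨z, hz1, hz2⟩
        obtain ⟨x, hx⟩ := hp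
        have hxq : x ∈ cube v q.1 q.2 := hsubq (hGcube p hx)
        have hsvq : sv H v s3 q.1 x := by
          rw [sv, hxq]
          exact (hGsvc q hq).1
        have := hx.2.2.2 q.1 (hGsvc q hq).2 hsvq
        omega
    have hGcubesub : ∀ p : {p : ℕ × (Fin d → ℤ) // (G p).Nonempty},
        cube v p.1.1 p.1.2 ⊆ cube v m₀ a := by
      rintro ⟨p, hp⟩
      obtain ⟨x, hx⟩ := hp
      exact cube_nested (le_of_lt (hGsvc p ⟨x, hx⟩).2)
        ⟨x, hGcube p hx, hx.1.2.1⟩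
    calc volume W ≤ volume (⋃ p, G p) := measure_mono hcover
    _ ≤ ∑' p : ℕ × (Fin d → ℤ), volume (G p) := measure_iUnion_le _
    _ ≤ ∑' p : ℕ × (Fin d → ℤ), Set.indicator {p | (G p).Nonempty}
          (fun p => κ^(M/(s3+1)) * volume (cube v p.1 p.2)) p := by
        apply ENNReal.tsum_le_tsum
        intro p
        by_cases hne : (G p).Nonempty
        · rw [Set.indicator_of_mem (show p ∈ {q | (G q).Nonempty} from hne)]
          exact (hstep p hne).trans_eq (by rw [volume_cube])
        · rw [Set.not_nonempty_iff_eq_empty] at hne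
          rw [hne]
          simp
    _ = κ^(M/(s3+1)) * ∑' p : ℕ × (Fin d → ℤ), Set.indicator {p | (G p).Nonempty}
          (fun p => volume (cube v p.1 p.2)) p := by
        rw [← ENNReal.tsum_mul_left]
        apply tsum_congr
        intro p
        by_cases hne : (G p).Nonempty
        · rw [Set.indicator_of_mem (show p ∈ {q | (G q).Nonempty} from hne),
            Set.indicator_of_mem (show p ∈ {q | (G q).Nonempty} from hne)]
        · rw [Set.indicator_of_notMem (show p ∉ {q | (G q).Nonempty} from hne),
            Set.indicator_of_notMem (show p ∉ {q | (G q).Nonempty} from hne), mul_zero]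
    _ = κ^(M/(s3+1)) * ∑' p : {p : ℕ × (Fin d → ℤ) // (G p).Nonempty},
          volume (cube v p.1.1 p.1.2) := by
        congr 1
        exact (tsum_subtype {p : ℕ × (Fin d → ℤ) | (G p).Nonempty}
          (fun p => volume (cube v p.1 p.2))).symm
    _ = κ^(M/(s3+1)) * volume (⋃ p : {p : ℕ × (Fin d → ℤ) // (G p).Nonempty},
          cube v p.1.1 p.1.2) := by
        congr 1
        exact (measure_iUnion hGdisj (fun p => cube_measurable v p.1.1 p.1.2)).symm
    _ ≤ κ^(M/(s3+1)) * volume (cube v m₀ a) := by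
        apply mul_le_mul_right
        exact measure_mono (Set.iUnion_subset hGcubesub)
    _ = κ^(M/(s3+1)) * ENNReal.ofReal (w m₀) ^ d := by rw [volume_cube]

end counting

section gridchoice
variable {d : ℕ}

lemma two_pow_mod_three (m : ℕ) : 2^m % 3 = 1 ∨ 2^m % 3 = 2 := by
  induction m with
  | zero => left; rfl
  | succ m ih =>
    rcases ih with h | h <;> · rw [pow_succ, Nat.mul_mod, h] <;> omega

lemma fract_third (m : ℕ) : Int.fract ((2:ℝ)^m / 3) = 1/3 ∨ Int.fract ((2:ℝ)^m / 3) = 2/3 := by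
  obtain ⟨k, r, hkr, hr⟩ : ∃ k r : ℕ, 2^m = 3*k + r ∧ (r = 1 ∨ r = 2) := by
    rcases two_pow_mod_three m with h | h
    · exact ⟨2^m / 3, 1, by omega, Or.inl rfl⟩
    · exact ⟨2^m / 3, 2, by omega, Or.inr rfl⟩
  have h1 : (2:ℝ)^m / 3 = (r:ℝ)/3 + (k:ℕ) := by
    have : ((2^m : ℕ) : ℝ) = 3*(k:ℝ) + r := by exact_mod_cast congrArg (Nat.cast : ℕ → ℝ) hkr
    push_cast at this ⊢
    linarith
  rw [h1, Int.fract_add_natCast]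
  have h2 : Int.fract ((r:ℝ)/3) = (r:ℝ)/3 := by
    rw [Int.fract_eq_self]
    rcases hr with h | h <;> subst h <;> norm_num
  rcases hr with h | h <;> subst h <;> rw [h2] <;> norm_num

lemma coord_choice (t : ℝ) (m : ℕ) :
    ∃ o : ℝ, (o = 0 ∨ o = 1/3) ∧ 1/6 ≤ Int.fract ((2:ℝ)^m * (t - o)) ∧
      Int.fract ((2:ℝ)^m * (t - o)) ≤ 5/6 := by
  by_cases h : 1/6 ≤ Int.fract ((2:ℝ)^m * t) ∧ Int.fract ((2:ℝ)^m * t) ≤ 5/6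
  · exact ⟨0, Or.inl rfl, by simpa using h.1, by simpa using h.2⟩
  · refine ⟨1/3, Or.inr rfl, ?_⟩
    set y := (2:ℝ)^m * t with hy
    set c := (2:ℝ)^m / 3 with hc
    have hyc : (2:ℝ)^m * (t - 1/3) = y - c := by rw [hy, hc]; ring
    set u := Int.fract y with hu
    set g := Int.fract c with hg
    have hucases : u < 1/6 ∨ 5/6 < u := by
      rcases not_and_or.1 h with h1 | h1
      · left; linarith [not_le.1 h1]
      · right; linarith [not_le.1 h1]
    have hu0 : 0 ≤ u := Int.fract_nonneg y
    have hu1 : u < 1 := Int.fract_lt_one y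
    have hgcases : g = 1/3 ∨ g = 2/3 := fract_third m
    have key : Int.fract (y - c) = Int.fract (u - g) := by
      have h2 : y - c = (u - g) + ((⌊y⌋ - ⌊c⌋ : ℤ) : ℝ) := by
        rw [hu, hg, Int.fract, Int.fract]
        push_cast
        ring
      rw [h2, Int.fract_add_intCast]
    have sub_fract : ∀ s : ℝ, -1 < s → s < 1 →
        Int.fract s = if 0 ≤ s then s else s + 1 := by
      intro s hs1 hs2
      split
      · exact Int.fract_eq_self.2 ⟨by assumption, hs2⟩
      · have hfl : ⌊s⌋ = -1 := by
          rw [Int.floor_eq_iff]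
          push_cast
          constructor <;> [linarith; linarith [not_le.1 (by assumption : ¬ 0 ≤ s)]]
        rw [Int.fract, hfl]
        push_cast
        ring
    rw [hyc, key]
    have hrange : -1 < u - g ∧ u - g < 1 := by
      rcases hgcases with h3 | h3 <;> rw [h3] <;> constructor <;> linarith
    rw [sub_fract _ hrange.1 hrange.2]
    rcases hucases with h2 | h2 <;> rcases hgcases with h3 | h3 <;>
      rw [h3] <;> split <;> constructor <;> linarith

def off (σ : Fin d → Bool) : Fin d → ℝ := fun i => if σ i then 1/3 else 0

lemma grid_choice (x : EuclideanSpace ℝ (Fin d)) (m : ℕ) :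
    ∃ σ : Fin d → Bool, ∀ i, 1/6 ≤ Int.fract ((2:ℝ)^m * (x i - off σ i)) ∧
      Int.fract ((2:ℝ)^m * (x i - off σ i)) ≤ 5/6 := by
  classical
  have h := fun i => coord_choice (x i) m
  choose o ho1 ho2 using h
  refine ⟨fun i => if o i = 0 then false else true, ?_⟩
  intro i
  have : off (fun i => if o i = 0 then false else true) i = o i := by
    rcases ho1 i with h1 | h1 <;> simp [off, h1]
  rw [this]
  exact ho2 i

lemma ball_subset_cube {v : Fin d → ℝ} {m : ℕ} {x : EuclideanSpace ℝ (Fin d)}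
    (hfr : ∀ i, 1/6 ≤ Int.fract ((2:ℝ)^m * (x i - v i)) ∧
      Int.fract ((2:ℝ)^m * (x i - v i)) ≤ 5/6) :
    ball x (w m / 6) ⊆ cube v m (idx v m x) := by
  intro z hz
  rw [mem_ball] at hz
  show idx v m z = idx v m x
  funext i
  have h1 : |z i - x i| ≤ dist z x := coord_le_dist z x i
  have h2 : |z i - x i| < w m / 6 := lt_of_le_of_lt h1 hz
  set t := (2:ℝ)^m * (x i - v i) with ht
  set t' := (2:ℝ)^m * (z i - v i) with ht'
  have h2m : (0:ℝ) < (2:ℝ)^m := by positivity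
  have hw2 : (2:ℝ)^m * w m = 1 := by rw [w_eq_inv]; field_simp
  have h3 : |t' - t| < 1/6 := by
    have : t' - t = (2:ℝ)^m * (z i - x i) := by rw [ht, ht']; ring
    rw [this, abs_mul, abs_of_pos h2m]
    calc (2:ℝ)^m * |z i - x i| < (2:ℝ)^m * (w m / 6) := by
          exact mul_lt_mul_of_pos_left h2 h2m
    _ = 1/6 := by rw [← mul_div_assoc, hw2]
  have hfr1 := (hfr i).1
  have hfr2 := (hfr i).2
  have hfl : (⌊t⌋ : ℝ) + 1/6 ≤ t ∧ t ≤ (⌊t⌋ : ℝ) + 5/6 := by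
    rw [Int.fract] at hfr1 hfr2
    constructor <;> linarith
  show ⌊t'⌋ = ⌊t⌋
  rw [Int.floor_eq_iff]
  rw [abs_lt] at h3
  constructor
  · linarith [hfl.1]
  · push_cast
    linarith [hfl.2]

lemma w_sub {k s : ℕ} (h : s ≤ k) : w (k - s) = w k * 2^s := by
  have h1 : w k = w (k - s) * w s := by rw [← w_add]; congr 1; omega
  have h2 : w s * (2:ℝ)^s = 1 := w_mul_two_pow s
  have h3 := w_pos s
  calc w (k - s) = w (k - s) * (w s * 2^s) := by rw [h2, mul_one]
  _ = (w (k-s) * w s) * 2^s := by ring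
  _ = w k * 2^s := by rw [← h1]

/-- porosity at scale `k` yields self-vacancy of the grid cube at level `k - s1`. -/
lemma sv_of_bad {E : Set (EuclideanSpace ℝ (Fin d))} {ε R : ℝ} {v : Fin d → ℝ}
    {s1 s2 k : ℕ} {x : EuclideanSpace ℝ (Fin d)}
    (hε : 0 < ε) (hR : 0 < R)
    (hkge : s1 ≤ k)
    (hfr : ∀ i, 1/6 ≤ Int.fract ((2:ℝ)^(k - s1) * (x i - v i)) ∧
      Int.fract ((2:ℝ)^(k - s1) * (x i - v i)) ≤ 5/6)
    (hs1 : 6 * (R + ε) ≤ 2^s1)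
    (hs2 : Real.sqrt d * w s2 < ε)
    (hb : bad E ε R k x) :
    sv E v (s1 + s2) (k - s1) x := by
  obtain ⟨p, hp1, hp2⟩ := hb
  set m := k - s1 with hm
  have hwk := w_pos k
  have hball : ball p (ε * w k) ⊆ ball x (w m / 6) := by
    intro z hz
    rw [mem_ball] at hz ⊢
    have h1 : dist z x ≤ dist z p + dist p x := dist_triangle _ _ _
    have h2 : dist p x ≤ R * w k := by rw [dist_comm]; exact hp1
    have h3 : (R + ε) * w k ≤ w m / 6 := by
      rw [hm, w_sub hkge]
      have := mul_le_mul_of_nonneg_right hs1 hwk.le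
      calc (R + ε) * w k = (6 * (R + ε)) * w k / 6 := by ring
      _ ≤ (2:ℝ)^s1 * w k / 6 := by linarith
      _ = w k * 2^s1 / 6 := by ring
    nlinarith
  have hQ : ball x (w m / 6) ⊆ cube v m (idx v m x) := ball_subset_cube hfr
  set b := idx v (m + (s1 + s2)) p with hb
  have hsubcube : cube v (m + (s1 + s2)) b ⊆ ball p (ε * w k) := by
    intro z hz
    rw [mem_ball]
    have hzc := mem_cube_ico.1 hz
    have hpc := mem_cube_ico.1 (self_mem_cube (v := v) (m := m + (s1+s2)) (x := p))
    have hcoords : ∀ i, |z i - p i| ≤ w (m + (s1+s2)) := by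
      intro i
      have h1 := hzc i
      have h2 := hpc i
      rw [Set.mem_Ico] at h1 h2
      rw [abs_le]
      constructor <;> nlinarith [h1.1, h1.2, h2.1, h2.2]
    have h4 : dist z p ≤ Real.sqrt d * w (m + (s1+s2)) :=
      dist_le_of_coords (w_pos _).le z p hcoords
    have h5 : m + (s1 + s2) = k + s2 := by omega
    have h6 : Real.sqrt d * w (k + s2) < ε * w k := by
      rw [w_add]
      calc Real.sqrt d * (w k * w s2) = (Real.sqrt d * w s2) * w k := by ring
      _ < ε * w k := by
          exact mul_lt_mul_of_pos_right hs2 hwk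
    rw [h5] at h4
    linarith
  refine ⟨b, ?_, ?_⟩
  · exact hsubcube.trans (hball.trans hQ)
  · have : E ∩ cube v (m + (s1+s2)) b ⊆ E ∩ ball p (ε * w k) :=
      Set.inter_subset_inter_right E hsubcube
    rw [hp2] at this
    rw [Set.subset_empty_iff] at this
    rw [this]
    exact measure_empty

end gridchoice

section zbound
variable {d : ℕ}

/-- level-0 cube indices that can contain points of the unit cube (for our offsets) -/
def A0 (d : ℕ) : Finset (Fin d → ℤ) := Fintype.piFinset (fun _ => Finset.Icc (-1 : ℤ) 1)

lemma counting_bound {α ε R : ℝ} (hα : 0 < α) (hε : 0 < ε) (hR : 0 < R) :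
    ∃ N : ℕ, 0 < N ∧ ∀ E : Set (EuclideanSpace ℝ (Fin d)), E ⊆ unitCube d →
      volume {x | x ∈ E ∧ ∃ S : Finset ℕ, S.card = N ∧ ∀ k ∈ S, bad E ε R k x}
        < ENNReal.ofReal α := by
  classical
  obtain ⟨s1, hs1⟩ : ∃ s1 : ℕ, 6 * (R + ε) ≤ 2^s1 := by
    obtain ⟨n, hn⟩ := pow_unbounded_of_one_lt (R := ℝ) (y := 2) (6*(R+ε)) (by norm_num)
    exact ⟨n, hn.le⟩
  obtain ⟨s2, hs2⟩ : ∃ s2 : ℕ, Real.sqrt d * w s2 < ε := by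
    obtain ⟨n, hn⟩ := pow_unbounded_of_one_lt (R := ℝ) (y := 2) (Real.sqrt d / ε) (by norm_num)
    refine ⟨n, ?_⟩
    rw [div_lt_iff₀ hε] at hn
    have hwn := w_pos n
    have hw2 : w n * 2^n = 1 := w_mul_two_pow n
    calc Real.sqrt d * w n < ((2:ℝ)^n * ε) * w n := mul_lt_mul_of_pos_right hn hwn
    _ = ε * (w n * 2^n) := by ring
    _ = ε := by rw [hw2, mul_one]
  set s3 := s1 + s2 with hs3
  set c := 1 - w s3 ^ d with hcdef
  have hws3d : (0:ℝ) < w s3 ^ d := pow_pos (w_pos s3) d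
  have hc0 : 0 ≤ c := by
    have := pow_le_one₀ (w_pos s3).le (w_le_one s3) (n := d)
    rw [hcdef]; linarith
  have hc1 : c < 1 := by rw [hcdef]; linarith
  obtain ⟨M₁, hM₁⟩ : ∃ M₁ : ℕ, (6:ℝ)^d * c ^ M₁ < α := by
    obtain ⟨n, hn⟩ := exists_pow_lt_of_lt_one (show (0:ℝ) < α / 6^d by positivity) hc1
    refine ⟨n, ?_⟩
    have h6 : (0:ℝ) < 6^d := by positivity
    calc (6:ℝ)^d * c^n < 6^d * (α/6^d) := by exact mul_lt_mul_of_pos_left hn h6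
    _ = α := by field_simp
  set N := (s1 + 1) + 2^d * ((s3+1) * M₁) with hN
  refine ⟨N, by omega, ?_⟩
  intro E hE
  set Zs := {x | x ∈ E ∧ ∃ S : Finset ℕ, S.card = N ∧ ∀ k ∈ S, bad E ε R k x} with hZs
  have hmem : ∀ x ∈ Zs, ∃ σ : Fin d → Bool, ∃ a ∈ A0 d,
      x ∈ Wset E (off σ) s3 0 a ((s3+1)*M₁) := by
    rintro x ⟨hxE, S, hScard, hSbad⟩
    set S₁ := S.filter (fun k => s1 + 1 ≤ k) with hS₁
    have hS₁card : 2^d * ((s3+1) * M₁) ≤ S₁.card := by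
      have hdrop : S \ S₁ ⊆ Finset.range (s1+1) := by
        intro l hl
        rw [Finset.mem_sdiff] at hl
        have h2 : ¬ (s1 + 1 ≤ l) := by
          intro hc
          exact hl.2 (Finset.mem_filter.2 ⟨hl.1, hc⟩)
        rw [Finset.mem_range]; omega
      have h4 : (S \ S₁).card ≤ s1 + 1 := by
        calc (S \ S₁).card ≤ (Finset.range (s1+1)).card := Finset.card_le_card hdrop
        _ = s1 + 1 := Finset.card_range _
      have h5 : (S \ S₁).card + S₁.card = S.card :=
        Finset.card_sdiff_add_card_eq_card (by rw [hS₁]; exact Finset.filter_subset _ _)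
      omega
    -- pigeonhole over grid systems
    obtain ⟨σ, hσ⟩ : ∃ σ : Fin d → Bool,
        (s3+1)*M₁ ≤ (S₁.filter (fun k => (grid_choice x (k - s1)).choose = σ)).card := by
      by_contra hcon
      push_neg at hcon
      have hsum : S₁.card = ∑ σ : Fin d → Bool,
          (S₁.filter (fun k => (grid_choice x (k - s1)).choose = σ)).card :=
        Finset.card_eq_sum_card_fiberwise (fun k _ => Finset.mem_univ _)
      have hb : ∑ σ : Fin d → Bool,
          (S₁.filter (fun k => (grid_choice x (k - s1)).choose = σ)).card
          ≤ ∑ _σ : Fin d → Bool, ((s3+1)*M₁ - 1) := by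
        apply Finset.sum_le_sum
        intro σ _
        have := hcon σ
        omega
      rw [Finset.sum_const, Finset.card_univ] at hb
      have hcard2 : Fintype.card (Fin d → Bool) = 2^d := by
        rw [Fintype.card_fun, Fintype.card_bool, Fintype.card_fin]
      rw [hcard2, smul_eq_mul] at hb
      have h2d : 1 ≤ 2^d := Nat.one_le_two_pow
      rcases Nat.eq_zero_or_pos ((s3+1)*M₁) with h0 | h0
      · have := hcon (fun _ => false)
        omega
      · have hx1 : 2^d * ((s3+1)*M₁) ≤ 2^d * ((s3+1)*M₁ - 1) := by
          calc 2^d * ((s3+1)*M₁) ≤ S₁.card := hS₁card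
          _ = _ := hsum
          _ ≤ 2^d * ((s3+1)*M₁ - 1) := hb
        have hx2 := Nat.le_of_mul_le_mul_left hx1 (Nat.pow_pos (by norm_num : 0 < 2) (n := d))
        omega
    set F1 := S₁.filter (fun k => (grid_choice x (k - s1)).choose = σ) with hF1
    obtain ⟨S'', hS''sub, hS''card⟩ := Finset.exists_subset_card_eq hσ
    refine ⟨σ, idx (off σ) 0 x, ?_, ?_⟩
    · -- level-0 index lies in A0
      rw [A0, Fintype.mem_piFinset]
      intro i
      rw [Finset.mem_Icc]
      have hx1 := (hE hxE) i
      have hv : off σ i = 0 ∨ off σ i = 1/3 := by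
        by_cases h : σ i <;> simp [off, h]
      have ht : -(1:ℝ) ≤ x i - off σ i ∧ x i - off σ i ≤ 1 := by
        rcases hv with h | h <;> rw [h] <;> constructor <;> linarith [hx1.1, hx1.2]
      constructor
      · rw [show idx (off σ) 0 x i = ⌊(2:ℝ)^(0:ℕ) * (x i - off σ i)⌋ from rfl]
        rw [pow_zero, one_mul]
        exact Int.le_floor.2 (by exact_mod_cast ht.1)
      · rw [show idx (off σ) 0 x i = ⌊(2:ℝ)^(0:ℕ) * (x i - off σ i)⌋ from rfl]
        rw [pow_zero, one_mul]
        calc ⌊x i - off σ i⌋ ≤ ⌊(1:ℝ)⌋ := Int.floor_le_floor ht.2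
        _ = 1 := Int.floor_one
    · -- membership in the W-set
      refine ⟨hxE, self_mem_cube, S''.image (fun k => k - s1), ?_, ?_⟩
      · rw [Finset.card_image_of_injOn, hS''card]
        intro k hk k' hk' hkk'
        have h1 : s1 + 1 ≤ k := by
          have := hS''sub hk
          rw [hF1, Finset.mem_filter, hS₁, Finset.mem_filter] at this
          exact this.1.2
        have h2 : s1 + 1 ≤ k' := by
          have := hS''sub hk'
          rw [hF1, Finset.mem_filter, hS₁, Finset.mem_filter] at this
          exact this.1.2
        have hkk2 : k - s1 = k' - s1 := hkk'
        omega
      · intro l hl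
        rw [Finset.mem_image] at hl
        obtain ⟨k, hk, rfl⟩ := hl
        have hk1 := hS''sub hk
        rw [hF1, Finset.mem_filter] at hk1
        have hk2 := hk1.1
        rw [hS₁, Finset.mem_filter] at hk2
        have hks1 : s1 + 1 ≤ k := hk2.2
        constructor
        · omega
        · have hfr : ∀ i, 1/6 ≤ Int.fract ((2:ℝ)^(k - s1) * (x i - off σ i)) ∧
              Int.fract ((2:ℝ)^(k - s1) * (x i - off σ i)) ≤ 5/6 := by
            have hspec := (grid_choice x (k - s1)).choose_spec
            rw [hk1.2] at hspec
            exact hspec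
          exact sv_of_bad hε hR (by omega) hfr hs1 hs2 (hSbad k hk2.1)
  -- measure bound
  have hsub : Zs ⊆ ⋃ σ ∈ (Finset.univ : Finset (Fin d → Bool)), ⋃ a ∈ A0 d,
      Wset E (off σ) s3 0 a ((s3+1)*M₁) := by
    intro x hx
    obtain ⟨σ, a, ha, hw⟩ := hmem x hx
    exact Set.mem_biUnion (Finset.mem_univ σ) (Set.mem_biUnion ha hw)
  have hbound : volume Zs ≤ ∑ σ : Fin d → Bool, ∑ a ∈ A0 d,
      volume (Wset E (off σ) s3 0 a ((s3+1)*M₁)) := by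
    refine (measure_mono hsub).trans ?_
    refine (measure_biUnion_finset_le _ _).trans ?_
    apply Finset.sum_le_sum
    intro σ _
    exact measure_biUnion_finset_le _ _
  have hcore : ∀ (σ : Fin d → Bool) (a : Fin d → ℤ),
      volume (Wset E (off σ) s3 0 a ((s3+1)*M₁)) ≤ ENNReal.ofReal c ^ M₁ := by
    intro σ a
    have := core E (off σ) s3 ((s3+1)*M₁) 0 a
    rw [Nat.mul_div_cancel_left M₁ (by omega : 0 < s3+1)] at this
    · calc volume (Wset E (off σ) s3 0 a ((s3+1)*M₁))
          ≤ ENNReal.ofReal (1 - w s3 ^ d) ^ M₁ * ENNReal.ofReal (w 0) ^ d := this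
      _ = ENNReal.ofReal c ^ M₁ := by
          rw [show w 0 = 1 by simp [w], ENNReal.ofReal_one, one_pow, mul_one, hcdef]
  have hA0card : (A0 d).card = 3^d := by
    rw [A0, Fintype.card_piFinset]
    have : ∀ i : Fin d, (Finset.Icc (-1:ℤ) 1).card = 3 := by intro i; rfl
    rw [Finset.prod_congr rfl (fun i _ => this i), Finset.prod_const, Finset.card_univ,
      Fintype.card_fin]
  have htotal : volume Zs ≤ (2^d * 3^d : ℕ) * ENNReal.ofReal c ^ M₁ := by
    refine hbound.trans ?_
    calc ∑ σ : Fin d → Bool, ∑ a ∈ A0 d, volume (Wset E (off σ) s3 0 a ((s3+1)*M₁))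
        ≤ ∑ σ : Fin d → Bool, ∑ _a ∈ A0 d, ENNReal.ofReal c ^ M₁ := by
          apply Finset.sum_le_sum
          intro σ _
          exact Finset.sum_le_sum (fun a _ => hcore σ a)
    _ = (2^d * 3^d : ℕ) * ENNReal.ofReal c ^ M₁ := by
        have hcard2 : Fintype.card (Fin d → Bool) = 2^d := by
          rw [Fintype.card_fun, Fintype.card_bool, Fintype.card_fin]
        simp only [Finset.sum_const, hA0card, Finset.card_univ, hcard2, smul_eq_mul]
        push_cast
        ring
  refine lt_of_le_of_lt htotal ?_
  have he1 : ((2^d * 3^d : ℕ) : ℝ≥0∞) * ENNReal.ofReal c ^ M₁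
      = ENNReal.ofReal ((2^d * 3^d : ℕ) * c ^ M₁) := by
    rw [← ENNReal.ofReal_pow hc0, ← ENNReal.ofReal_natCast,
      ← ENNReal.ofReal_mul (by positivity)]
  rw [he1]
  rw [ENNReal.ofReal_lt_ofReal_iff hα]
  have he2 : ((2^d * 3^d : ℕ) : ℝ) = (6:ℝ)^d := by
    push_cast
    rw [← mul_pow]
    norm_num
  rw [he2]
  exact hM₁

end zbound

section coloring
variable {d : ℕ}

lemma D_le_of_unitCube {x y : EuclideanSpace ℝ (Fin d)} (hx : x ∈ unitCube d)
    (hy : y ∈ unitCube d) : dist x y ≤ ((d:ℝ)+1) * w (sc (dist x y)) := by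
  set D := dist x y
  set k := sc D
  rcases Nat.eq_zero_or_pos k with h | h
  · have h1 : D ≤ Real.sqrt d := dist_le_sqrt_d hx hy
    have h2 := sqrt_d_le d
    have h3 : w k = 1 := by rw [h]; simp [w]
    rw [h3]; linarith
  · rcases eq_or_ne x y with rfl | hne
    · have : D = 0 := dist_self x
      nlinarith [w_pos k, Nat.cast_nonneg (α := ℝ) d]
    · have hD0 : 0 < D := dist_pos.2 hne
      have h1 : D ≤ w k := le_w_of_sc_pos hD0 h
      nlinarith [w_pos k, Nat.cast_nonneg (α := ℝ) d]

lemma rank_unique {s : Finset ℕ} {k k' : ℕ} (hk : k ∈ s) (hk' : k' ∈ s)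
    (h : (s.filter (· < k)).card = (s.filter (· < k')).card) : k = k' := by
  classical
  have key : ∀ a b : ℕ, a ∈ s → b ∈ s → a < b →
      (s.filter (· < a)).card < (s.filter (· < b)).card := by
    intro a b ha hb hab
    have hsub : insert a (s.filter (· < a)) ⊆ s.filter (· < b) := by
      intro u hu
      rw [Finset.mem_insert] at hu
      rcases hu with rfl | hu
      · exact Finset.mem_filter.2 ⟨ha, hab⟩
      · rw [Finset.mem_filter] at hu
        exact Finset.mem_filter.2 ⟨hu.1, by omega⟩
    have hnotmem : a ∉ s.filter (· < a) := by
      intro hc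
      rw [Finset.mem_filter] at hc
      omega
    calc (s.filter (· < a)).card < (insert a (s.filter (· < a))).card := by
          rw [Finset.card_insert_of_notMem hnotmem]; omega
    _ ≤ (s.filter (· < b)).card := Finset.card_le_card hsub
  rcases lt_trichotomy k k' with hlt | heq | hlt
  · have := key k k' hk hk' hlt; omega
  · exact heq
  · have := key k' k hk' hk hlt; omega

/-- integer position of `x` in the grid of mesh `w k / (8(d+1))` -/
def posZ (k : ℕ) (x : EuclideanSpace ℝ (Fin d)) : Fin d → ℤ :=
  fun i => ⌊8*((d:ℝ)+1)*(2:ℝ)^k * x i⌋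

lemma posL_separation {L : ℕ} (hL : L = 8*(d+1)*(d+1)+2)
    {x y : EuclideanSpace ℝ (Fin d)} (hx : x ∈ unitCube d) (hy : y ∈ unitCube d)
    (hxy : x ≠ y)
    (hpos : ∀ i, ((posZ (sc (dist x y)) x i : ZMod L) = (posZ (sc (dist x y)) y i : ZMod L))) :
    False := by
  classical
  set D := dist x y with hD
  have hD0 : 0 < D := dist_pos.2 hxy
  set k := sc D with hk
  set c := 8*((d:ℝ)+1)*(2:ℝ)^k with hc
  have hc0 : 0 < c := by rw [hc]; positivity
  have hwk := w_pos k
  have hcw : c * w k = 8*((d:ℝ)+1) := by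
    have h := w_mul_two_pow k
    calc c * w k = 8*((d:ℝ)+1) * ((2:ℝ)^k * w k) := by rw [hc]; ring
    _ = 8*((d:ℝ)+1) * (w k * (2:ℝ)^k) := by ring
    _ = 8*((d:ℝ)+1) := by rw [h, mul_one]
  have hwlt : w k < 2 * D := w_sc_lt hD0
  have hDle : D ≤ ((d:ℝ)+1) * w k := D_le_of_unitCube hx hy
  by_cases hall : ∀ i, posZ k x i = posZ k y i
  · -- all coordinates in same cell: x,y too close
    have hcoords : ∀ i, |x i - y i| ≤ w k / (8*((d:ℝ)+1)) := by
      intro i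
      have heqf : ⌊c * x i⌋ = ⌊c * y i⌋ := hall i
      have hx1 := Int.floor_le (c * x i)
      have hx2 := Int.lt_floor_add_one (c * x i)
      have hy1 := Int.floor_le (c * y i)
      have hy2 := Int.lt_floor_add_one (c * y i)
      rw [heqf] at hx1 hx2
      have h2 : |c * x i - c * y i| < 1 := by
        rw [abs_lt]
        constructor <;> linarith
      have h3 : |x i - y i| * c < 1 := by
        calc |x i - y i| * c = |x i - y i| * |c| := by rw [abs_of_pos hc0]
        _ = |c * x i - c * y i| := by rw [← abs_mul]; congr 1; ring
        _ < 1 := h2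
      have h4 : |x i - y i| < 1 / c := by
        rw [lt_div_iff₀ hc0]; linarith
      have h5 : 1/c = w k / (8*((d:ℝ)+1)) := by
        rw [div_eq_div_iff (ne_of_gt hc0) (by positivity : (8*((d:ℝ)+1)) ≠ 0)]
        linarith [hcw]
      rw [h5] at h4
      exact h4.le
    have h6 : D ≤ Real.sqrt d * (w k / (8*((d:ℝ)+1))) :=
      dist_le_of_coords (by positivity) x y hcoords
    have h7 : Real.sqrt d ≤ (d:ℝ)+1 := sqrt_d_le d
    have h8 : Real.sqrt d * (w k / (8*((d:ℝ)+1))) ≤ w k / 8 := by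
      calc Real.sqrt d * (w k / (8*((d:ℝ)+1))) ≤ ((d:ℝ)+1) * (w k / (8*((d:ℝ)+1))) := by
            apply mul_le_mul_of_nonneg_right h7 (by positivity)
      _ = w k / 8 := by
            field_simp
    linarith
  · push_neg at hall
    obtain ⟨i, hne⟩ := hall
    have h0 : posZ k x i ≡ posZ k y i [ZMOD (L:ℕ)] :=
      (ZMod.intCast_eq_intCast_iff _ _ _).1 (hpos i)
    have hdvd : (L:ℤ) ∣ posZ k y i - posZ k x i := Int.ModEq.dvd h0
    have habs : (L:ℤ) ≤ |posZ k y i - posZ k x i| := by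
      apply Int.le_of_dvd
      · rw [abs_pos, sub_ne_zero]
        exact Ne.symm hne
      · exact (dvd_abs _ _).2 hdvd
    have habsR : (L:ℝ) ≤ |(posZ k y i : ℝ) - (posZ k x i : ℝ)| := by
      have : ((|posZ k y i - posZ k x i| : ℤ) : ℝ) = |(posZ k y i : ℝ) - (posZ k x i : ℝ)| := by
        push_cast
        rfl
      rw [← this]
      exact_mod_cast habs
    have hfl1 : (posZ k y i : ℝ) = (⌊c * y i⌋ : ℤ) := rfl
    have hfl2 : (posZ k x i : ℝ) = (⌊c * x i⌋ : ℤ) := rfl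
    have hfloor : |(posZ k y i : ℝ) - (posZ k x i : ℝ)| ≤ |c * y i - c * x i| + 1 := by
      rw [hfl1, hfl2]
      have hx1 := Int.floor_le (c * x i)
      have hx2 := Int.lt_floor_add_one (c * x i)
      have hy1 := Int.floor_le (c * y i)
      have hy2 := Int.lt_floor_add_one (c * y i)
      rw [abs_le]
      constructor
      · cases abs_cases (c * y i - c * x i) with
        | inl h => rw [h.1]; push_cast; linarith
        | inr h => rw [h.1]; push_cast; linarith
      · cases abs_cases (c * y i - c * x i) with
        | inl h => rw [h.1]; push_cast; linarith
        | inr h => rw [h.1]; push_cast; linarith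
    have hcy : |c * y i - c * x i| = c * |y i - x i| := by
      calc |c * y i - c * x i| = |c * (y i - x i)| := by congr 1; ring
      _ = |c| * |y i - x i| := abs_mul _ _
      _ = c * |y i - x i| := by rw [abs_of_pos hc0]
    have hcoord : |y i - x i| ≤ D := by
      rw [hD, dist_comm]
      exact coord_le_dist y x i
    have hcD : c * |y i - x i| ≤ c * D := mul_le_mul_of_nonneg_left hcoord hc0.le
    have hfinal : (L:ℝ) - 1 ≤ 8*((d:ℝ)+1)*((d:ℝ)+1) := by
      have h9 : c * D ≤ c * (((d:ℝ)+1) * w k) := mul_le_mul_of_nonneg_left hDle hc0.le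
      have h10 : c * (((d:ℝ)+1) * w k) = 8*((d:ℝ)+1)*((d:ℝ)+1) := by
        calc c * (((d:ℝ)+1) * w k) = (c * w k) * ((d:ℝ)+1) := by ring
        _ = 8*((d:ℝ)+1)*((d:ℝ)+1) := by rw [hcw]
      linarith [habsR, hfloor, hcy ▸ hfloor, hcD]
    have hLcast : (L:ℝ) = 8*((d:ℝ)+1)*((d:ℝ)+1)+2 := by
      rw [hL]
      push_cast
      ring
    rw [hLcast] at hfinal
    linarith

end coloring

section conflict
variable {d : ℕ}

open scoped Classical in
/-- the (finite, for good points) set of bad scales at the weakest reach `R7` -/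
noncomputable def BS (E : Set (EuclideanSpace ℝ (Fin d))) (ε R7 : ℝ)
    (x : EuclideanSpace ℝ (Fin d)) : Finset ℕ :=
  if h : {k | bad E ε R7 k x}.Finite then h.toFinset else ∅

open scoped Classical in
/-- bad scales at tier reach `R'` in residue class `ρ` mod `T₁` -/
noncomputable def Bt (E : Set (EuclideanSpace ℝ (Fin d))) (ε R7 R' : ℝ) (T₁ ρ : ℕ)
    (x : EuclideanSpace ℝ (Fin d)) : Finset ℕ :=
  (BS E ε R7 x).filter (fun k => bad E ε R' k x ∧ k % T₁ = ρ)

open scoped Classical in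
/-- the color of a point: for each residue `ρ`, tier `t`, rank `i`, the position
(mod `L`) at the `i`-th smallest tier-`t` bad scale in class `ρ`. -/
noncomputable def colorF (E : Set (EuclideanSpace ℝ (Fin d))) (ε R7 : ℝ) (RR : ℕ → ℝ)
    (T₁ N L : ℕ) (x : EuclideanSpace ℝ (Fin d)) :
    Fin T₁ × Fin T₁ × Fin N → Option (Fin d → ZMod L) := fun q =>
  if h : ∃ k, k ∈ Bt E ε R7 (RR (q.2.1.val+1)) T₁ q.1.val x ∧
      ((Bt E ε R7 (RR (q.2.1.val+1)) T₁ q.1.val x).filter (· < k)).card = q.2.2.val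
  then some (fun i => ((posZ h.choose x i : ZMod L))) else none

lemma mem_BS {E : Set (EuclideanSpace ℝ (Fin d))} {ε R7 : ℝ} {x}
    (hfin : {k | bad E ε R7 k x}.Finite) {k : ℕ} :
    k ∈ BS E ε R7 x ↔ bad E ε R7 k x := by
  rw [BS, dif_pos hfin, Set.Finite.mem_toFinset]
  rfl

lemma mem_Bt {E : Set (EuclideanSpace ℝ (Fin d))} {ε R7 R' : ℝ} {T₁ ρ : ℕ} {x}
    (hfin : {k | bad E ε R7 k x}.Finite) (hR' : R' ≤ R7) {k : ℕ} :
    k ∈ Bt E ε R7 R' T₁ ρ x ↔ (bad E ε R' k x ∧ k % T₁ = ρ) := by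
  classical
  rw [Bt, Finset.mem_filter]
  constructor
  · rintro ⟨-, h2⟩; exact h2
  · rintro ⟨h1, h2⟩
    exact ⟨(mem_BS hfin).2 (bad_mono hR' h1), h1, h2⟩

lemma card_Bt_le {E : Set (EuclideanSpace ℝ (Fin d))} {ε R7 R' : ℝ} {T₁ ρ : ℕ} {x}
    (hfin : {k | bad E ε R7 k x}.Finite) :
    (Bt E ε R7 R' T₁ ρ x).card ≤ (BS E ε R7 x).card := by
  classical
  simp only [Bt]
  exact Finset.card_filter_le _ _

lemma colorF_entry {E : Set (EuclideanSpace ℝ (Fin d))} {ε R7 : ℝ} {RR : ℕ → ℝ}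
    {T₁ N L : ℕ} {x} (q : Fin T₁ × Fin T₁ × Fin N) {k : ℕ}
    (hk : k ∈ Bt E ε R7 (RR (q.2.1.val+1)) T₁ q.1.val x)
    (hrank : ((Bt E ε R7 (RR (q.2.1.val+1)) T₁ q.1.val x).filter (· < k)).card = q.2.2.val) :
    colorF E ε R7 RR T₁ N L x q = some (fun i => ((posZ k x i : ZMod L))) := by
  have h : ∃ k', k' ∈ Bt E ε R7 (RR (q.2.1.val+1)) T₁ q.1.val x ∧
      ((Bt E ε R7 (RR (q.2.1.val+1)) T₁ q.1.val x).filter (· < k')).card = q.2.2.val :=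
    ⟨k, hk, hrank⟩
  rw [colorF, dif_pos h]
  obtain ⟨hmem, hcard⟩ := h.choose_spec
  have heq : h.choose = k := rank_unique hmem hk (by rw [hcard, hrank])
  exact congrArg (fun k' => some (fun i' => ((posZ k' x i' : ZMod L)))) heq

lemma conflict {E : Set (EuclideanSpace ℝ (Fin d))}
    {ε R7 : ℝ} {N T₁ L : ℕ} (hT₁ : T₁ = 2*N+1) (hL : L = 8*(d+1)*(d+1)+2)
    {RR : ℕ → ℝ}
    (hRmono : ∀ t t', t ≤ t' → RR t' ≤ RR t)
    (hRstep : ∀ t, 1 ≤ t → t + 1 ≤ T₁ → RR (t+1) + 2 * w T₁ ≤ RR t)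
    (hRtop : ∀ t, 1 ≤ t → RR t ≤ R7)
    {x y : EuclideanSpace ℝ (Fin d)} (hxy : x ≠ y)
    (hxU : x ∈ unitCube d) (hyU : y ∈ unitCube d)
    (hfinx : {k | bad E ε R7 k x}.Finite) (hcardx : (BS E ε R7 x).card < N)
    (hfiny : {k | bad E ε R7 k y}.Finite) (hcardy : (BS E ε R7 y).card < N)
    (hbx : bad E ε (RR T₁) (sc (dist x y)) x)
    (hby : bad E ε (RR T₁) (sc (dist x y)) y)
    (hcol : colorF E ε R7 RR T₁ N L x = colorF E ε R7 RR T₁ N L y) : False := by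
  classical
  set D := dist x y with hD
  have hD0 : 0 < D := dist_pos.2 hxy
  set k := sc D with hk
  have hT₁0 : 0 < T₁ := by omega
  set ρ := k % T₁ with hρ
  have hρlt : ρ < T₁ := Nat.mod_lt _ hT₁0
  -- tier sets
  set A : ℕ → Finset ℕ := fun t => (Bt E ε R7 (RR t) T₁ ρ x).filter (· < k) with hA
  set B : ℕ → Finset ℕ := fun t => (Bt E ε R7 (RR t) T₁ ρ y).filter (· < k) with hB
  set Dt : ℕ → Finset ℕ := fun t => A t ∪ B t with hDt
  -- k belongs to all tiers
  have hkmem : ∀ t, 1 ≤ t → t ≤ T₁ → k ∈ Bt E ε R7 (RR t) T₁ ρ x ∧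
      k ∈ Bt E ε R7 (RR t) T₁ ρ y := by
    intro t h1 h2
    constructor
    · exact (mem_Bt hfinx (hRtop t h1)).2 ⟨bad_mono (hRmono t T₁ h2) hbx, rfl⟩
    · exact (mem_Bt hfiny (hRtop t h1)).2 ⟨bad_mono (hRmono t T₁ h2) hby, rfl⟩
  -- the transfer step
  have hDstep : ∀ t, 1 ≤ t → t + 1 ≤ T₁ → Dt (t+1) ⊆ A t ∩ B t := by
    intro t h1 h2 s hs
    have h1t : 1 ≤ t + 1 := by omega
    rw [hDt, Finset.mem_union] at hs
    have hsk : s < k ∧ (bad E ε (RR (t+1)) s x ∨ bad E ε (RR (t+1)) s y) ∧ s % T₁ = ρ := by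
      rcases hs with hs | hs
      · rw [hA, Finset.mem_filter, mem_Bt hfinx (hRtop _ h1t)] at hs
        exact ⟨hs.2, Or.inl hs.1.1, hs.1.2⟩
      · rw [hB, Finset.mem_filter, mem_Bt hfiny (hRtop _ h1t)] at hs
        exact ⟨hs.2, Or.inr hs.1.1, hs.1.2⟩
    obtain ⟨hsklt, hbad, hsmod⟩ := hsk
    -- s + T₁ ≤ k
    have hdvd : T₁ ∣ k - s := by
      have : s % T₁ = k % T₁ := by rw [hsmod, hρ]
      exact (Nat.modEq_iff_dvd' (le_of_lt hsklt)).1 this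
    have hsT : s + T₁ ≤ k := by
      have h3 : T₁ ≤ k - s := Nat.le_of_dvd (by omega) hdvd
      omega
    -- distance is small compared to scale s
    have hdist : D ≤ 2 * w T₁ * w s := by
      have hk1 : 1 ≤ k := by omega
      have h4 : D ≤ w k := le_w_of_sc_pos hD0 hk1
      have h5 : w k ≤ w (s + T₁) := w_anti hsT
      rw [w_add] at h5
      nlinarith [w_pos s, w_pos T₁]
    have hRle : RR (t+1) + 2 * w T₁ ≤ RR t := hRstep t h1 h2
    -- transfer badness to both points at tier t
    have hbadboth : bad E ε (RR t) s x ∧ bad E ε (RR t) s y := by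
      rcases hbad with hb | hb
      · constructor
        · exact bad_mono (show RR (t+1) ≤ RR t by linarith [w_pos T₁]) hb
        · have := bad_transfer hb (show dist x y ≤ (2 * w T₁) * w s by
            rw [← hD]; linarith)
          exact bad_mono (by linarith) this
      · constructor
        · have := bad_transfer hb (show dist y x ≤ (2 * w T₁) * w s by
            rw [dist_comm, ← hD]; linarith)
          exact bad_mono (by linarith) this
        · exact bad_mono (show RR (t+1) ≤ RR t by linarith [w_pos T₁]) hb
    rw [Finset.mem_inter, hA, hB, Finset.mem_filter, Finset.mem_filter,
      mem_Bt hfinx (hRtop t h1), mem_Bt hfiny (hRtop t h1)]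
    exact ⟨⟨⟨hbadboth.1, hsmod⟩, hsklt⟩, ⟨hbadboth.2, hsmod⟩, hsklt⟩
  have hchain : ∀ t, 1 ≤ t → t + 1 ≤ T₁ → Dt (t+1) ⊆ Dt t := by
    intro t h1 h2
    refine (hDstep t h1 h2).trans ?_
    intro s hs
    rw [Finset.mem_inter] at hs
    rw [hDt, Finset.mem_union]
    exact Or.inl hs.1
  -- find a tier where the below-k frames agree
  have hEqT : ∃ t, 1 ≤ t ∧ t + 1 ≤ T₁ ∧ Dt (t+1) = Dt t := by
    by_contra hcon
    push_neg at hcon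
    have hstrict : ∀ t, 1 ≤ t → t + 1 ≤ T₁ → (Dt (t+1)).card < (Dt t).card := by
      intro t h1 h2
      exact Finset.card_lt_card (ssubset_of_subset_of_ne (hchain t h1 h2) (hcon t h1 h2))
    have hmono2 : ∀ j, j ≤ 2*N → (Dt (1+j)).card + j ≤ (Dt 1).card := by
      intro j
      induction j with
      | zero =>
        intro _
        show (Dt 1).card + 0 ≤ (Dt 1).card
        omega
      | succ j ih =>
        intro hj
        have h1 := ih (by omega)
        have h2 := hstrict (1+j) (by omega) (by omega)
        have h3 : 1 + (j+1) = (1+j) + 1 := by omega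
        rw [h3]
        omega
    have hfin := hmono2 (2*N) le_rfl
    have hcard1 : (Dt 1).card + 2 ≤ 2*N := by
      have hu : (Dt 1).card ≤ (A 1).card + (B 1).card := Finset.card_union_le _ _
      have ha : (A 1).card ≤ (Bt E ε R7 (RR 1) T₁ ρ x).card := Finset.card_filter_le _ _
      have ha2 := card_Bt_le (E := E) (ε := ε) (R' := RR 1) (T₁ := T₁) (ρ := ρ) hfinx
      have hb : (B 1).card ≤ (Bt E ε R7 (RR 1) T₁ ρ y).card := Finset.card_filter_le _ _
      have hb2 := card_Bt_le (E := E) (ε := ε) (R' := RR 1) (T₁ := T₁) (ρ := ρ) hfiny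
      omega
    omega
  obtain ⟨t, ht1, ht2, htEq⟩ := hEqT
  -- frames agree: A t = B t
  have hABeq : A t = B t := by
    have hsub := hDstep t ht1 ht2
    rw [htEq] at hsub
    have h1 : A t ⊆ A t ∩ B t := fun s hs => hsub (Finset.mem_union_left _ hs)
    have h2 : B t ⊆ A t ∩ B t := fun s hs => hsub (Finset.mem_union_right _ hs)
    apply Finset.Subset.antisymm
    · exact h1.trans Finset.inter_subset_right
    · exact h2.trans Finset.inter_subset_left
  -- the rank of k
  set i := (A t).card with hi
  have hkx : k ∈ Bt E ε R7 (RR t) T₁ ρ x := (hkmem t ht1 (by omega)).1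
  have hky : k ∈ Bt E ε R7 (RR t) T₁ ρ y := (hkmem t ht1 (by omega)).2
  have hilt : i < N := by
    have hss : A t ⊂ Bt E ε R7 (RR t) T₁ ρ x := by
      rw [Finset.ssubset_iff_of_subset (Finset.filter_subset _ _)]
      exact ⟨k, hkx, fun hc => lt_irrefl k (Finset.mem_filter.1 hc).2⟩
    have := Finset.card_lt_card hss
    have h2 := card_Bt_le (E := E) (ε := ε) (R' := RR t) (T₁ := T₁) (ρ := ρ) hfinx
    omega
  -- build the color index
  set q : Fin T₁ × Fin T₁ × Fin N := (⟨ρ, hρlt⟩, ⟨t-1, by omega⟩, ⟨i, hilt⟩) with hq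
  have hqt : q.2.1.val + 1 = t := by
    show (t-1) + 1 = t
    omega
  have hqρ : q.1.val = ρ := rfl
  have hcx : colorF E ε R7 RR T₁ N L x q = some (fun i' => ((posZ k x i' : ZMod L))) := by
    apply colorF_entry
    · rw [hqt, hqρ]
      exact hkx
    · rw [hqt, hqρ]
  have hcy : colorF E ε R7 RR T₁ N L y q = some (fun i' => ((posZ k y i' : ZMod L))) := by
    apply colorF_entry
    · rw [hqt, hqρ]
      exact hky
    · rw [hqt, hqρ]
      show (((Bt E ε R7 (RR t) T₁ ρ y).filter (· < k))).card = i
      have hBi : (B t).card = i := by rw [hi, hABeq]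
      exact hBi
  have hcolq : colorF E ε R7 RR T₁ N L x q = colorF E ε R7 RR T₁ N L y q := by rw [hcol]
  rw [hcx, hcy] at hcolq
  have hfun := Option.some_injective _ hcolq
  exact posL_separation hL hxU hyU hxy (fun i' => congrFun hfun i')

end conflict

end QCaux


/-- **Quantitative connectivity.** Given `d`, `α > 0`, `δ > 0`, there is `M ∈ ℕ` depending
only on `d`, `α`, `δ`, such that every `E ⊆ [0,1]^d` decomposes as
`E = F₁ ∪ … ∪ F_M ∪ Z` with Lebesgue outer measure of `Z` less than `α` and each `F i`
`δ`-well-connected in `E`. -/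
theorem quantitative_connectivity (d : ℕ) (α δ : ℝ) (hα : 0 < α) (hδ : 0 < δ) :
    ∃ M : ℕ, ∀ E : Set (EuclideanSpace ℝ (Fin d)), E ⊆ unitCube d →
      ∃ (F : Fin M → Set (EuclideanSpace ℝ (Fin d))) (Z : Set (EuclideanSpace ℝ (Fin d))),
        (∀ i, F i ⊆ E) ∧ Z ⊆ E ∧
        E = (⋃ i, F i) ∪ Z ∧
        volume Z < ENNReal.ofReal α ∧
        ∀ i, WellConnectedIn δ (F i) E := by
  classical
  have hδ₀ : 0 < min δ 1 := lt_min hδ one_pos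
  set ε := (min δ 1)^2/40 with hεdef
  have hε0 : 0 < ε := by positivity
  obtain ⟨N, hN0, hNb⟩ := QCaux.counting_bound (d := d) (α := α) (ε := ε)
    (R := (d:ℝ)+7) hα hε0 (by positivity)
  set T₁ := 2*N+1 with hT₁def
  set RR : ℕ → ℝ := fun t => ((d:ℝ)+5) + ((T₁ - t : ℕ) : ℝ) * (2 * QCaux.w T₁) with hRRdef
  set L := 8*(d+1)*(d+1)+2 with hLdef
  have hwT := QCaux.w_pos T₁
  have hRmono : ∀ t t', t ≤ t' → RR t' ≤ RR t := by
    intro t t' h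
    have h1 : ((T₁ - t' : ℕ) : ℝ) ≤ ((T₁ - t : ℕ) : ℝ) := by
      exact_mod_cast Nat.sub_le_sub_left h T₁
    simp only [hRRdef]
    nlinarith
  have hRstep : ∀ t, 1 ≤ t → t + 1 ≤ T₁ → RR (t+1) + 2 * QCaux.w T₁ ≤ RR t := by
    intro t h1 h2
    simp only [hRRdef]
    have h3 : ((T₁ - (t+1) : ℕ) : ℝ) + 1 = ((T₁ - t : ℕ) : ℝ) := by
      have h4 : T₁ - (t+1) + 1 = T₁ - t := by omega
      exact_mod_cast congrArg (Nat.cast : ℕ → ℝ) h4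
    nlinarith [h3]
  have hRtop : ∀ t, 1 ≤ t → RR t ≤ (d:ℝ)+7 := by
    intro t h1
    simp only [hRRdef]
    have h2 : ((T₁ - t : ℕ) : ℝ) ≤ (T₁ : ℝ) := by exact_mod_cast Nat.sub_le _ _
    have h2' : (0:ℝ) ≤ ((T₁ - t : ℕ) : ℝ) := by positivity
    have h3 : (T₁ : ℝ) * QCaux.w T₁ ≤ 1 := by
      have h4 : (T₁ : ℝ) ≤ (2:ℝ)^T₁ := by exact_mod_cast (Nat.lt_two_pow_self (n := T₁)).le
      have h5 : QCaux.w T₁ * (2:ℝ)^T₁ = 1 := QCaux.w_mul_two_pow T₁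
      nlinarith
    nlinarith
  have hRT₁ : RR T₁ = (d:ℝ)+5 := by
    simp only [hRRdef, Nat.sub_self]
    norm_num
  haveI : NeZero L := ⟨by omega⟩
  refine ⟨Fintype.card (Fin T₁ × Fin T₁ × Fin N → Option (Fin d → ZMod L)), ?_⟩
  intro E hE
  set cf := QCaux.colorF E ε ((d:ℝ)+7) RR T₁ N L with hcfdef
  set eqv := Fintype.equivFin (Fin T₁ × Fin T₁ × Fin N → Option (Fin d → ZMod L)) with heqvdef
  set Z := {x | x ∈ E ∧ ∃ S : Finset ℕ, S.card = N ∧ ∀ k ∈ S, QCaux.bad E ε ((d:ℝ)+7) k x}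
    with hZdef
  refine ⟨fun j => {x | (x ∈ E ∧ x ∉ Z) ∧ eqv (cf x) = j}, Z, ?_, ?_, ?_, ?_, ?_⟩
  · intro j x hx
    exact hx.1.1
  · intro x hx
    exact hx.1
  · ext x
    constructor
    · intro hx
      by_cases hz : x ∈ Z
      · exact Or.inr hz
      · exact Or.inl (Set.mem_iUnion.2 ⟨eqv (cf x), ⟨⟨hx, hz⟩, rfl⟩⟩)
    · rintro (hx | hx)
      · obtain ⟨j, hj⟩ := Set.mem_iUnion.1 hx
        exact hj.1.1
      · exact hx.1
  · exact hNb E hE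
  · intro j x hxF y hyF
    rcases eq_or_ne x y with rfl | hxy
    · exact QCaux.chain_self hxF.1.1 (by positivity)
    · have hfin : ∀ z, z ∈ E → z ∉ Z → {k | QCaux.bad E ε ((d:ℝ)+7) k z}.Finite ∧
          (QCaux.BS E ε ((d:ℝ)+7) z).card < N := by
        intro z hzE hzZ
        have hnot : ¬ ∃ S : Finset ℕ, S.card = N ∧ ∀ k ∈ S, QCaux.bad E ε ((d:ℝ)+7) k z := by
          intro hc
          exact hzZ ⟨hzE, hc⟩
        have hfin1 : {k | QCaux.bad E ε ((d:ℝ)+7) k z}.Finite := by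
          by_contra hinf
          obtain ⟨S, hS1, hS2⟩ := Set.Infinite.exists_subset_card_eq hinf N
          exact hnot ⟨S, hS2, fun k hk => hS1 hk⟩
        refine ⟨hfin1, ?_⟩
        by_contra hge
        push_neg at hge
        obtain ⟨S, hSsub, hScard⟩ :=
          Finset.exists_subset_card_eq hge
        refine hnot ⟨S, hScard, fun k hk => ?_⟩
        exact (QCaux.mem_BS hfin1).1 (hSsub hk)
      by_cases hbx : QCaux.bad E ε ((d:ℝ)+5) (QCaux.sc (dist x y)) x
      · by_cases hby : QCaux.bad E ε ((d:ℝ)+5) (QCaux.sc (dist x y)) y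
        · exfalso
          obtain ⟨hfx, hcxN⟩ := hfin x hxF.1.1 hxF.1.2
          obtain ⟨hfy, hcyN⟩ := hfin y hyF.1.1 hyF.1.2
          have hcol : cf x = cf y := eqv.injective (hxF.2.trans hyF.2.symm)
          refine QCaux.conflict (R7 := (d:ℝ)+7) hT₁def hLdef hRmono hRstep
            (fun t ht => hRtop t ht) hxy (hE hxF.1.1) (hE hyF.1.1)
            hfx hcxN hfy hcyN ?_ ?_ hcol
          · rw [hRT₁]
            exact hbx
          · rw [hRT₁]
            exact hby
        · have hch := QCaux.chain_of_not_bad hE hδ hyF.1.1 hxF.1.1 (Ne.symm hxy)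
            (by rw [dist_comm y x]; exact hby)
          have hrev := QCaux.chain_reverse hch
          rw [dist_comm y x] at hrev
          exact hrev
      · exact QCaux.chain_of_not_bad hE hδ hxF.1.1 hyF.1.1 hxy hbx
end
end

section
/- Let (X,d,μ) be a metric measure space with μ a doubling measure, μ(X)=1 and diam(X)=1, equipped with a multiresolution family 𝓑 with constant A ≥ 1. Then there is a constant C_X > 0, depending only on A and the doubling constant of X (and not on E), such that for every set E ⊆ X, Σ_{B ∈ 𝓑, B ∩ E ≠ ∅} d_E(B)·μ(B) ≤ C_X. -/
open Metric MeasureTheory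
open scoped Classical ENNReal

noncomputable section

/-- `d_E(B(c,r)) = (1/μ(B)) ∫_B dist(x,E)/r dμ(x)`. -/
def dE {X : Type*} [MetricSpace X] [MeasurableSpace X] (μ : MeasureTheory.Measure X)
    (E : Set X) (c : X) (r : ℝ) : ℝ :=
  (∫ x in Metric.closedBall c r, Metric.infDist x E ∂μ) /
    (r * (μ (Metric.closedBall c r)).toReal)

variable {X : Type} [MetricSpace X] [MeasurableSpace X] [BorelSpace X]

lemma doubling_iter (μ : Measure X) {C' : ℝ}
    (hdbl : ∀ (x : X) (r : ℝ), μ (closedBall x (2*r)) ≤ ENNReal.ofReal C' * μ (closedBall x r))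
    (j : ℕ) (x : X) (r : ℝ) :
    μ (closedBall x (2^j * r)) ≤ (ENNReal.ofReal C')^j * μ (closedBall x r) := by
  induction j with
  | zero => simp
  | succ n ih =>
    have h2 : (2:ℝ)^(n+1) * r = 2 * (2^n * r) := by ring
    rw [h2, pow_succ]
    calc μ (closedBall x (2*(2^n*r))) ≤ ENNReal.ofReal C' * μ (closedBall x (2^n*r)) := hdbl _ _
      _ ≤ ENNReal.ofReal C' * ((ENNReal.ofReal C')^n * μ (closedBall x r)) :=
          mul_le_mul_right ih _
      _ = (ENNReal.ofReal C')^n * ENNReal.ofReal C' * μ (closedBall x r) := by ring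

lemma sep_card (μ : Measure X) {C' : ℝ} (hC' : 1 ≤ C')
    (hfin : ∀ (x : X) (r : ℝ), μ (closedBall x r) < ⊤)
    (hdbl : ∀ (x : X) (r : ℝ), μ (closedBall x (2*r)) ≤ ENNReal.ofReal C' * μ (closedBall x r))
    (hpos : ∀ (x : X) (r : ℝ), 0 < r → 0 < μ (closedBall x r))
    {s R : ℝ} (hs : 0 < s) (hR : 0 ≤ R) {j : ℕ} (hj : 2*R + s ≤ 2^j * (s/4))
    (x : X) (t : Finset X)
    (hsep : ∀ c ∈ t, ∀ c' ∈ t, c ≠ c' → s ≤ dist c c')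
    (hmem : ∀ c ∈ t, dist c x ≤ R) :
    (t.card : ℝ≥0∞) ≤ (ENNReal.ofReal C')^j := by
  set K : ℝ≥0∞ := (ENNReal.ofReal C')^j with hK
  set P : ℝ≥0∞ := μ (closedBall x (R + s)) with hP
  have hP0 : 0 < P := hpos _ _ (by linarith)
  have hPt : P ≠ ⊤ := (hfin _ _).ne
  have key : ∀ c ∈ t, P ≤ K * μ (closedBall c (s/4)) := by
    intro c hc
    have hsub : closedBall x (R + s) ⊆ closedBall c (2^j * (s/4)) := by
      intro y hy
      simp only [mem_closedBall] at hy ⊢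
      have h1 : dist y c ≤ dist y x + dist c x := by
        rw [dist_comm c x]; exact dist_triangle y x c
      have := hmem c hc
      linarith
    calc P ≤ μ (closedBall c (2^j * (s/4))) := measure_mono hsub
      _ ≤ K * μ (closedBall c (s/4)) := doubling_iter μ hdbl j c (s/4)
  have hdisj : Set.PairwiseDisjoint (↑t : Set X) (fun c : X => closedBall c (s/4)) := by
    intro c hc c' hc' hne
    have h := hsep c hc c' hc' hne
    exact closedBall_disjoint_closedBall (by linarith : s/4 + s/4 < dist c c')
  have hsum : ∑ c ∈ t, μ (closedBall c (s/4)) ≤ P := by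
    rw [← measure_biUnion_finset hdisj (fun c _ => measurableSet_closedBall)]
    apply measure_mono
    intro y hy
    simp only [Set.mem_iUnion, mem_closedBall] at hy ⊢
    obtain ⟨c, hc, hyc⟩ := hy
    have := hmem c hc
    have h1 : dist y x ≤ dist y c + dist c x := dist_triangle y c x
    linarith
  have hcard : (t.card : ℝ≥0∞) * P ≤ K * P := by
    calc (t.card : ℝ≥0∞) * P = ∑ _c ∈ t, P := by rw [Finset.sum_const, nsmul_eq_mul]
      _ ≤ ∑ c ∈ t, K * μ (closedBall c (s/4)) := Finset.sum_le_sum key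
      _ = K * ∑ c ∈ t, μ (closedBall c (s/4)) := by rw [Finset.mul_sum]
      _ ≤ K * P := mul_le_mul_right hsum _
  exact (ENNReal.mul_le_mul_iff_left hP0.ne' hPt).mp hcard

lemma sep_finite (μ : Measure X) {C' : ℝ} (hC' : 1 ≤ C')
    (hfin : ∀ (x : X) (r : ℝ), μ (closedBall x r) < ⊤)
    (hdbl : ∀ (x : X) (r : ℝ), μ (closedBall x (2*r)) ≤ ENNReal.ofReal C' * μ (closedBall x r))
    (hpos : ∀ (x : X) (r : ℝ), 0 < r → 0 < μ (closedBall x r))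
    {s R : ℝ} (hs : 0 < s) (hR : 0 ≤ R) (x : X) {S : Set X}
    (hsep : ∀ c ∈ S, ∀ c' ∈ S, c ≠ c' → s ≤ dist c c')
    (hmem : ∀ c ∈ S, dist c x ≤ R) : S.Finite := by
  obtain ⟨j, hj⟩ : ∃ j : ℕ, 2*R + s ≤ 2^j * (s/4) := by
    obtain ⟨j, hj⟩ := pow_unbounded_of_one_lt ((2*R+s)/(s/4)) (one_lt_two (α := ℝ))
    exact ⟨j, by rw [div_lt_iff₀ (by linarith)] at hj; linarith⟩
  by_contra hinf
  have hinf' : S.Infinite := hinf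
  obtain ⟨n, hn⟩ := ENNReal.exists_nat_gt
    (ENNReal.pow_ne_top ENNReal.ofReal_ne_top : (ENNReal.ofReal C')^j ≠ ⊤)
  obtain ⟨t, hts, htcard⟩ := hinf'.exists_subset_card_eq n
  have := sep_card μ hC' hfin hdbl hpos hs hR hj x t
    (fun c hc c' hc' => hsep c (hts hc) c' (hts hc')) (fun c hc => hmem c (hts hc))
  rw [htcard] at this
  exact absurd (this.trans_lt hn) (lt_irrefl _)

/-- In a metric measure space with a `C`-doubling measure, `μ X = 1`, `diam X = 1`,
equipped with a multiresolution family with constant `A ≥ 1`, there is `C_X > 0`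
depending only on `A` and the doubling constant (not on `E`) such that for every set
`E ⊆ X`, `Σ_{B ∈ 𝓑, B ∩ E ≠ ∅} d_E(B)·μ(B) ≤ C_X`. -/
theorem sum_dE_bounded (C A : ℝ) (hC : 0 < C) (hA : 1 ≤ A) :
    ∃ CX : ℝ, 0 < CX ∧
      ∀ (X : Type) [MetricSpace X] [MeasurableSpace X] [BorelSpace X]
        (μ : MeasureTheory.Measure X) (N : ℕ → Set X),
        IsDoubling μ C →
        μ Set.univ = 1 →
        Metric.diam (Set.univ : Set X) = 1 →
        (∀ k : ℕ, IsNet ((2 : ℝ) ^ (-(k : ℤ))) (N k)) →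
        (∀ k : ℕ, N k ⊆ N (k + 1)) →
        ∀ E : Set X,
          (∑' (k : ℕ) (c : N k),
              if (Metric.closedBall (c : X) (A * 2 ^ (-(k : ℤ))) ∩ E).Nonempty
                then ENNReal.ofReal (dE μ E (c : X) (A * 2 ^ (-(k : ℤ)))) *
                      μ (Metric.closedBall (c : X) (A * 2 ^ (-(k : ℤ))))
                else 0) ≤ ENNReal.ofReal CX := by
  have hA0 : (0:ℝ) < A := lt_of_lt_of_le one_pos hA
  obtain ⟨m, hm⟩ : ∃ m : ℕ, 8*(A+1) ≤ 2^m := by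
    obtain ⟨m, hm⟩ := pow_unbounded_of_one_lt (8*(A+1)) (one_lt_two (α := ℝ))
    exact ⟨m, hm.le⟩
  set C' : ℝ := max C 1 with hC'def
  have hC1 : 1 ≤ C' := le_max_right _ _
  refine ⟨4 * C'^m, by positivity, ?_⟩
  intro X _ _ _ μ N hdbl hμ1 hdiam hnet hnested E

  have hIsNet := hnet
  replace hnet : ∀ k : ℕ, (∀ x ∈ N k, ∀ y ∈ N k, x ≠ y → (2:ℝ)^(-(k:ℤ)) ≤ dist x y) ∧
      ∀ z : X, ∃ x ∈ N k, dist z x < (2:ℝ)^(-(k:ℤ)) := hIsNet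
  obtain ⟨hμ0, hfin, hdb⟩ : μ ≠ 0 ∧ (∀ (x : X) (r : ℝ), μ (Metric.closedBall x r) < ⊤) ∧
    ∀ (x : X) (r : ℝ), μ (Metric.closedBall x (2 * r)) ≤ ENNReal.ofReal C * μ (Metric.closedBall x r) := hdbl
  have hdb' : ∀ (x : X) (r : ℝ), μ (closedBall x (2*r)) ≤ ENNReal.ofReal C' * μ (closedBall x r) :=
    fun x r => (hdb x r).trans
      (mul_le_mul_left (ENNReal.ofReal_le_ofReal (le_max_left _ _)) _)
  -- basic facts
  have hXne : Nonempty X := by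
    by_contra h
    rw [not_nonempty_iff] at h
    rw [Set.univ_eq_empty_iff.mpr h, measure_empty] at hμ1
    exact zero_ne_one hμ1
  have hbd : Bornology.IsBounded (Set.univ : Set X) := by
    rw [Metric.isBounded_iff_ediam_ne_top]
    intro h
    rw [Metric.diam, h] at hdiam
    simp at hdiam
  have hdist1 : ∀ x y : X, dist x y ≤ 1 := fun x y =>
    hdiam ▸ Metric.dist_le_diam_of_mem hbd trivial trivial
  have hpos : ∀ (x : X) (r : ℝ), 0 < r → 0 < μ (closedBall x r) := by
    intro x r hr
    obtain ⟨j, hj⟩ := pow_unbounded_of_one_lt (1/r) (one_lt_two (α := ℝ))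
    have h1r : (1:ℝ) ≤ 2^j * r := by
      rw [div_lt_iff₀ hr] at hj; linarith
    have huniv : (Set.univ : Set X) ⊆ closedBall x (2^j * r) := fun y _ =>
      mem_closedBall.mpr ((hdist1 y x).trans h1r)
    have h1 : (1:ℝ≥0∞) ≤ μ (closedBall x (2^j*r)) := hμ1 ▸ measure_mono huniv
    have h2 := doubling_iter μ hdb' j x r
    rcases eq_or_lt_of_le (zero_le (a := μ (closedBall x r))) with h | h
    · rw [← h, mul_zero] at h2
      exact absurd (h1.trans h2) (by simp)
    · exact h
  -- radius and notation
  set r : ℕ → ℝ := fun k => A * 2 ^ (-(k:ℤ)) with hrdef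
  have hrpos : ∀ k, 0 < r k := fun k => by positivity
  set g : ℕ → X → ℝ≥0∞ := fun k =>
    Set.indicator {y : X | infDist y E ≤ 2 * r k} (fun y => ENNReal.ofReal (infDist y E))
    with hgdef
  have hgmeas : ∀ k, Measurable (g k) := by
    intro k
    exact Measurable.indicator
      ((Metric.continuous_infDist_pt E).measurable).ennreal_ofReal
      (measurableSet_le (Metric.continuous_infDist_pt E).measurable measurable_const)
  -- Step A
  have stepA : ∀ (k : ℕ) (c : X), (closedBall c (r k) ∩ E).Nonempty →
      ENNReal.ofReal (dE μ E c (r k)) * μ (closedBall c (r k)) ≤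
        (ENNReal.ofReal (r k))⁻¹ * ∫⁻ x in closedBall c (r k), g k x ∂μ := by
    intro k c hne
    set B : Set X := closedBall c (r k) with hB
    have hd2 : ∀ x ∈ B, infDist x E ≤ 2 * r k := by
      intro x hx
      obtain ⟨y, hyB, hyE⟩ := hne
      calc infDist x E ≤ dist x y := infDist_le_dist_of_mem hyE
        _ ≤ dist x c + dist y c := by rw [dist_comm y c]; exact dist_triangle x c y
        _ ≤ r k + r k := add_le_add (mem_closedBall.mp hx) (mem_closedBall.mp hyB)
        _ = 2 * r k := by ring
    have hgB : ∀ x ∈ B, ENNReal.ofReal (infDist x E) = g k x := by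
      intro x hx
      exact (Set.indicator_of_mem
        (show x ∈ {y : X | infDist y E ≤ 2 * r k} from hd2 x hx)
        (fun y => ENNReal.ofReal (infDist y E))).symm
    have hL : (∫⁻ x in B, ENNReal.ofReal (infDist x E) ∂μ) = ∫⁻ x in B, g k x ∂μ := by
      apply setLIntegral_congr_fun measurableSet_closedBall
      exact hgB
    have hInt : (∫ x in B, infDist x E ∂μ)
        = (∫⁻ x in B, ENNReal.ofReal (infDist x E) ∂μ).toReal := by
      apply integral_eq_lintegral_of_nonneg_ae
      · exact ae_of_all _ (fun x => infDist_nonneg)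
      · exact (Metric.continuous_infDist_pt E).aestronglyMeasurable
    by_cases hB0 : μ B = 0
    · rw [hB0, mul_zero]; exact zero_le
    · have hBt : μ B ≠ ⊤ := (hfin c (r k)).ne
      have ht : 0 < (μ B).toReal := ENNReal.toReal_pos hB0 hBt
      set L : ℝ≥0∞ := ∫⁻ x in B, ENNReal.ofReal (infDist x E) ∂μ with hLdef
      have hLne : L ≠ ⊤ := by
        have : L ≤ ENNReal.ofReal (2 * r k) * μ B := by
          rw [hLdef]
          calc (∫⁻ x in B, ENNReal.ofReal (infDist x E) ∂μ)
              ≤ ∫⁻ _x in B, ENNReal.ofReal (2 * r k) ∂μ := by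
                apply setLIntegral_mono' measurableSet_closedBall
                exact fun x hx => ENNReal.ofReal_le_ofReal (hd2 x hx)
            _ = ENNReal.ofReal (2 * r k) * μ B := by rw [setLIntegral_const]
        exact (this.trans_lt (ENNReal.mul_lt_top ENNReal.ofReal_lt_top (hfin c (r k)))).ne
      have hdE : dE μ E c (r k) = L.toReal / (r k * (μ B).toReal) := by
        rw [dE, ← hB, hInt, hLdef]
      rw [hdE]
      have hrt : 0 < r k * (μ B).toReal := by positivity
      rw [ENNReal.ofReal_div_of_pos hrt, ENNReal.ofReal_toReal hLne,
        ENNReal.ofReal_mul (hrpos k).le, ENNReal.ofReal_toReal hBt]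
      have ha0 : ENNReal.ofReal (r k) ≠ 0 := by
        simp [ENNReal.ofReal_eq_zero, not_le, hrpos k]
      have hat : ENNReal.ofReal (r k) ≠ ⊤ := ENNReal.ofReal_ne_top
      rw [div_eq_mul_inv, ENNReal.mul_inv (Or.inl ha0) (Or.inl hat)]
      apply le_of_eq
      calc L * ((ENNReal.ofReal (r k))⁻¹ * (μ B)⁻¹) * μ B
          = (ENNReal.ofReal (r k))⁻¹ * L * ((μ B)⁻¹ * μ B) := by ring
        _ = (ENNReal.ofReal (r k))⁻¹ * L := by
            rw [ENNReal.inv_mul_cancel hB0 hBt, mul_one]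
        _ = (ENNReal.ofReal (r k))⁻¹ * ∫⁻ x in B, g k x ∂μ := by rw [hL]
  -- finiteness of nets
  have hNfin : ∀ k, (N k).Finite := by
    intro k
    obtain ⟨x0⟩ := hXne
    exact sep_finite μ hC1 hfin hdb' hpos (by positivity : (0:ℝ) < 2^(-(k:ℤ)))
      zero_le_one x0 (hnet k).1 (fun c _ => hdist1 c x0)
  -- overlap bound
  have hover : ∀ (k : ℕ) (x : X),
      (∑' (c : N k), (closedBall (c:X) (r k)).indicator (fun _ => (1:ℝ≥0∞)) x) ≤
        (ENNReal.ofReal C')^m := by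
    intro k x
    haveI := (hNfin k).fintype
    rw [tsum_fintype]
    have hsb : ∀ c : N k, (closedBall (c:X) (r k)).indicator (fun _ => (1:ℝ≥0∞)) x
        = if x ∈ closedBall (c:X) (r k) then (1:ℝ≥0∞) else 0 := fun c =>
      Set.indicator_apply _ _ _
    rw [Finset.sum_congr rfl (fun c _ => hsb c), Finset.sum_boole]
    set F : Finset X := (Finset.univ.filter
      (fun c : N k => x ∈ closedBall (c:X) (r k))).image Subtype.val with hF
    have hcard : (Finset.univ.filter
        (fun c : N k => x ∈ closedBall (c:X) (r k))).card = F.card := by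
      rw [hF, Finset.card_image_of_injective _ Subtype.val_injective]
    rw [hcard]
    have hmemF : ∀ c ∈ F, c ∈ N k ∧ dist x c ≤ r k := by
      intro c hc
      rw [hF] at hc
      simp only [Finset.mem_image, Finset.mem_filter, Finset.mem_univ, true_and,
        mem_closedBall] at hc
      obtain ⟨c0, hc0, rfl⟩ := hc
      exact ⟨c0.2, hc0⟩
    have h2k : (0:ℝ) < 2^(-(k:ℤ)) := by positivity
    apply sep_card μ hC1 hfin hdb' hpos h2k (hrpos k).le (j := m) ?_ x F
    · intro c hc c' hc' hne
      exact (hnet k).1 c (hmemF c hc).1 c' (hmemF c' hc').1 hne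
    · intro c hc
      rw [dist_comm]
      exact (hmemF c hc).2
    · have hz : r k = A * 2^(-(k:ℤ)) := rfl
      have h4 : 8*A + 4 ≤ 2^m := by linarith
      have h2m : ((2:ℝ)^m) * (2^(-(k:ℤ))/4) = (2^m / 4) * 2^(-(k:ℤ)) := by ring
      rw [hz, h2m]
      have : (2*A + 1) * 2^(-(k:ℤ)) ≤ (2^m/4) * 2^(-(k:ℤ)) := by
        apply mul_le_mul_of_nonneg_right _ h2k.le
        linarith
      linarith [this]
  -- Step B
  have stepB : ∀ k : ℕ,
      (∑' (c : N k),
        if (closedBall (c:X) (r k) ∩ E).Nonempty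
          then ENNReal.ofReal (dE μ E (c:X) (r k)) * μ (closedBall (c:X) (r k)) else 0) ≤
      (ENNReal.ofReal (r k))⁻¹ * ((ENNReal.ofReal C')^m * ∫⁻ x, g k x ∂μ) := by
    intro k
    haveI : Countable (N k) := (hNfin k).to_subtype.to_countable
    calc (∑' (c : N k),
        if (closedBall (c:X) (r k) ∩ E).Nonempty
          then ENNReal.ofReal (dE μ E (c:X) (r k)) * μ (closedBall (c:X) (r k)) else 0)
        ≤ ∑' (c : N k), (ENNReal.ofReal (r k))⁻¹ * ∫⁻ x in closedBall (c:X) (r k), g k x ∂μ := by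
          apply ENNReal.tsum_le_tsum
          intro c
          by_cases hc : (closedBall (c:X) (r k) ∩ E).Nonempty
          · rw [if_pos hc]; exact stepA k c hc
          · rw [if_neg hc]; exact zero_le
      _ = (ENNReal.ofReal (r k))⁻¹ * ∑' (c : N k), ∫⁻ x in closedBall (c:X) (r k), g k x ∂μ :=
          ENNReal.tsum_mul_left
      _ ≤ (ENNReal.ofReal (r k))⁻¹ * ((ENNReal.ofReal C')^m * ∫⁻ x, g k x ∂μ) := by
          apply mul_le_mul_right
          have heq : ∀ c : N k, (∫⁻ x in closedBall (c:X) (r k), g k x ∂μ)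
              = ∫⁻ x, (closedBall (c:X) (r k)).indicator (g k) x ∂μ := by
            intro c
            rw [lintegral_indicator measurableSet_closedBall]
          calc (∑' (c : N k), ∫⁻ x in closedBall (c:X) (r k), g k x ∂μ)
              = ∑' (c : N k), ∫⁻ x, (closedBall (c:X) (r k)).indicator (g k) x ∂μ :=
                tsum_congr heq
            _ = ∫⁻ x, ∑' (c : N k), (closedBall (c:X) (r k)).indicator (g k) x ∂μ :=
                (lintegral_tsum (fun c =>
                  ((hgmeas k).indicator measurableSet_closedBall).aemeasurable)).symm
            _ ≤ ∫⁻ x, (ENNReal.ofReal C')^m * g k x ∂μ := by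
                apply lintegral_mono
                intro x
                have hindeq : ∀ c : N k, (closedBall (c:X) (r k)).indicator (g k) x
                    = (closedBall (c:X) (r k)).indicator (fun _ => (1:ℝ≥0∞)) x * g k x := by
                  intro c
                  by_cases hx : x ∈ closedBall (c:X) (r k)
                  · rw [Set.indicator_of_mem hx, Set.indicator_of_mem hx, one_mul]
                  · rw [Set.indicator_of_notMem hx, Set.indicator_of_notMem hx, zero_mul]
                calc (∑' (c : N k), (closedBall (c:X) (r k)).indicator (g k) x)
                    = (∑' (c : N k), (closedBall (c:X) (r k)).indicator (fun _ => (1:ℝ≥0∞)) x)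
                        * g k x := by rw [← ENNReal.tsum_mul_right]; exact tsum_congr hindeq
                  _ ≤ (ENNReal.ofReal C')^m * g k x := mul_le_mul_left (hover k x) _
            _ = (ENNReal.ofReal C')^m * ∫⁻ x, g k x ∂μ := lintegral_const_mul _ (hgmeas k)
  -- Step D : pointwise bound
  have hpow : ∀ n : ℕ, (2:ℝ)^(-(n:ℤ)) = (1/2)^n := fun n => by
    rw [zpow_neg, zpow_natCast, ← inv_pow, one_div]
  have stepD : ∀ x : X, (∑' k : ℕ, (ENNReal.ofReal (r k))⁻¹ * g k x) ≤ 4 := by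
    intro x
    set d : ℝ := infDist x E with hd
    have hd0 : 0 ≤ d := infDist_nonneg
    have hterm : ∀ k : ℕ, (ENNReal.ofReal (r k))⁻¹ * g k x
        = if d ≤ 2 * r k then (ENNReal.ofReal (r k))⁻¹ * ENNReal.ofReal d else 0 := by
      intro k
      by_cases hk : d ≤ 2 * r k
      · rw [if_pos hk]
        congr 1
        exact Set.indicator_of_mem (show x ∈ {y : X | infDist y E ≤ 2 * r k} from hk) _
      · rw [if_neg hk]
        have : g k x = 0 :=
          Set.indicator_of_notMem (show x ∉ {y : X | infDist y E ≤ 2 * r k} from hk) _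
        rw [this, mul_zero]
    rcases eq_or_lt_of_le hd0 with h0 | hdpos
    · have hz : ∀ k : ℕ, (ENNReal.ofReal (r k))⁻¹ * g k x = 0 := by
        intro k
        rw [hterm k]
        split
        · rw [← h0, ENNReal.ofReal_zero, mul_zero]
        · rfl
      rw [tsum_congr hz, tsum_zero]
      norm_num
    · have hex : ∃ k : ℕ, 2 * r k < d := by
        obtain ⟨n, hn⟩ := exists_pow_lt_of_lt_one
          (show (0:ℝ) < d/(2*A) by positivity) (show (1:ℝ)/2 < 1 by norm_num)
        refine ⟨n, ?_⟩
        have : r n = A * (1/2)^n := by rw [← hpow n]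
        rw [this]
        rw [lt_div_iff₀ (by positivity : (0:ℝ) < 2*A)] at hn
        linarith [hn]
      set k0 := Nat.find hex with hk0def
      have hk0 := Nat.find_spec hex
      have hzero : ∀ k ∉ Finset.range k0, (ENNReal.ofReal (r k))⁻¹ * g k x = 0 := by
        intro k hk
        rw [Finset.mem_range, not_lt] at hk
        rw [hterm k, if_neg]
        have hrk : r k ≤ r k0 := by
          have h1 : ((1:ℝ)/2)^k ≤ (1/2)^k0 :=
            pow_le_pow_of_le_one (by norm_num) (by norm_num) hk
          have e1 : r k = A * (1/2)^k := by rw [← hpow k]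
          have e2 : r k0 = A * (1/2)^k0 := by rw [← hpow k0]
          rw [e1, e2]
          exact mul_le_mul_of_nonneg_left h1 hA0.le
        push_neg
        linarith
      rw [tsum_eq_sum hzero]
      have hval : ∀ k ∈ Finset.range k0, (ENNReal.ofReal (r k))⁻¹ * g k x
          = ENNReal.ofReal (d / r k) := by
        intro k hk
        have hk' : ¬ (2 * r k < d) := Nat.find_min hex (Finset.mem_range.mp hk)
        rw [hterm k, if_pos (by linarith [not_lt.mp hk'])]
        rw [ENNReal.ofReal_div_of_pos (hrpos k), div_eq_mul_inv, mul_comm]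
      rw [Finset.sum_congr rfl hval,
        ← ENNReal.ofReal_sum_of_nonneg (fun k _ => div_nonneg hd0 (hrpos k).le)]
      have hreal : (∑ k ∈ Finset.range k0, d / r k) ≤ 4 := by
        have er : ∀ k : ℕ, r k = A * ((2:ℝ)^k)⁻¹ := by
          intro k
          rw [show r k = A * 2^(-(k:ℤ)) from rfl, zpow_neg, zpow_natCast]
        have e1 : ∀ k : ℕ, d / r k = d * 2^k / A := by
          intro k
          rw [er k]
          have h2 : ((2:ℝ)^k) ≠ 0 := by positivity
          field_simp
        have geom : (∑ i ∈ Finset.range k0, (2:ℝ)^i) = 2^k0 - 1 := by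
          have := geom_sum_eq (by norm_num : (2:ℝ) ≠ 1) k0
          rw [this]
          norm_num
        have hsum : (∑ k ∈ Finset.range k0, d / r k) = d * (2^k0 - 1) / A := by
          rw [Finset.sum_congr rfl (fun k _ => e1 k), ← Finset.sum_div, ← Finset.mul_sum, geom]
        rw [hsum]
        rcases Nat.eq_zero_or_eq_succ_pred k0 with h0' | hsucc
        · rw [h0']
          norm_num
        · set j := k0 - 1 with hjdef
          have hjlt : j < k0 := by omega
          have hd2A : d ≤ 2 * r j := not_lt.mp (Nat.find_min hex hjlt)
          set p : ℝ := (2:ℝ)^j with hpdef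
          have hp : (0:ℝ) < p := by positivity
          have hdp : d * p ≤ 2 * A := by
            rw [er j] at hd2A
            have := mul_le_mul_of_nonneg_right hd2A hp.le
            calc d * p ≤ 2 * (A * p⁻¹) * p := this
              _ = 2 * A := by field_simp
          have h2k0 : (2:ℝ)^k0 = 2 * p := by
            rw [hsucc, pow_succ, Nat.pred_eq_sub_one, hpdef, hjdef]
            ring
          rw [h2k0, div_le_iff₀ hA0]
          nlinarith [hd0, hp.le, hdp, hA0]
      calc ENNReal.ofReal (∑ k ∈ Finset.range k0, d / r k) ≤ ENNReal.ofReal 4 :=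
            ENNReal.ofReal_le_ofReal hreal
        _ = 4 := by norm_num
  -- conclusion
  have hre : ∀ k : ℕ, A * 2 ^ (-(k:ℤ)) = r k := fun k => rfl
  calc (∑' (k : ℕ) (c : N k),
        if (closedBall (c:X) (A * 2 ^ (-(k:ℤ))) ∩ E).Nonempty
          then ENNReal.ofReal (dE μ E (c:X) (A * 2 ^ (-(k:ℤ)))) *
            μ (closedBall (c:X) (A * 2 ^ (-(k:ℤ)))) else 0)
      ≤ ∑' k : ℕ, (ENNReal.ofReal (r k))⁻¹ * ((ENNReal.ofReal C')^m * ∫⁻ x, g k x ∂μ) := by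
        apply ENNReal.tsum_le_tsum
        intro k
        rw [hre k] at *
        exact stepB k
    _ = ∑' k : ℕ, (ENNReal.ofReal C')^m * ((ENNReal.ofReal (r k))⁻¹ * ∫⁻ x, g k x ∂μ) :=
        tsum_congr (fun k => by ring)
    _ = (ENNReal.ofReal C')^m * ∑' k : ℕ, (ENNReal.ofReal (r k))⁻¹ * ∫⁻ x, g k x ∂μ :=
        ENNReal.tsum_mul_left
    _ = (ENNReal.ofReal C')^m * ∑' k : ℕ, ∫⁻ x, (ENNReal.ofReal (r k))⁻¹ * g k x ∂μ := by
        congr 1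
        exact tsum_congr (fun k => (lintegral_const_mul _ (hgmeas k)).symm)
    _ = (ENNReal.ofReal C')^m * ∫⁻ x, ∑' k : ℕ, (ENNReal.ofReal (r k))⁻¹ * g k x ∂μ := by
        congr 1
        exact (lintegral_tsum (fun k => ((hgmeas k).const_mul _).aemeasurable)).symm
    _ ≤ (ENNReal.ofReal C')^m * ∫⁻ _x, (4:ℝ≥0∞) ∂μ := mul_le_mul_right (lintegral_mono stepD) _
    _ = (ENNReal.ofReal C')^m * 4 := by rw [lintegral_const, hμ1, mul_one]
    _ = ENNReal.ofReal (4 * C'^m) := by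
        rw [ENNReal.ofReal_mul (by norm_num : (0:ℝ) ≤ 4),
          ENNReal.ofReal_pow (by linarith : (0:ℝ) ≤ C'), ENNReal.ofReal_ofNat, mul_comm]
end
end

section
/- Let (X,d,μ) be a complete, geodesic metric measure space with μ a C-doubling measure. For every ε > 0 there exists δ > 0, depending only on ε and C, such that for every set E ⊆ X and every closed ball B of radius r with B ∩ E ≠ ∅: if d_E(B) < δ then sparse(E,B) < ε. Explicitly, one may take δ = (ε/8)·C^{−N}, where N is the smallest integer with 2^N·(ε/8) ≥ 2. -/
open Metric MeasureTheory
open scoped ENNReal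

noncomputable section

/-- Iterated doubling. -/
lemma doubling_iterate {X : Type*} [MetricSpace X] [MeasurableSpace X]
    (μ : MeasureTheory.Measure X) (C : ℝ) (hdbl : IsDoubling μ C) (x : X) (s : ℝ) :
    ∀ n : ℕ, μ (Metric.closedBall x ((2:ℝ) ^ n * s)) ≤
      (ENNReal.ofReal C) ^ n * μ (Metric.closedBall x s) := by
  intro n
  induction n with
  | zero => simp
  | succ k ih =>
      have h2 : (2:ℝ) ^ (k+1) * s = 2 * ((2:ℝ) ^ k * s) := by ring
      rw [h2]
      calc μ (Metric.closedBall x (2 * ((2:ℝ) ^ k * s)))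
          ≤ ENNReal.ofReal C * μ (Metric.closedBall x ((2:ℝ) ^ k * s)) := hdbl.2.2 x _
        _ ≤ ENNReal.ofReal C * ((ENNReal.ofReal C) ^ k * μ (Metric.closedBall x s)) := by
            exact mul_le_mul_right ih _
        _ = (ENNReal.ofReal C) ^ (k+1) * μ (Metric.closedBall x s) := by ring

/-- Doubling measures give positive measure to balls of positive radius. -/
lemma doubling_ball_pos {X : Type*} [MetricSpace X] [MeasurableSpace X]
    (μ : MeasureTheory.Measure X) (C : ℝ) (hC : 0 < C) (hdbl : IsDoubling μ C)
    (x : X) (s : ℝ) (hs : 0 < s) : 0 < μ (Metric.closedBall x s) := by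
  by_contra h
  push_neg at h
  have h0 : μ (Metric.closedBall x s) = 0 := le_antisymm h zero_le
  have hall : ∀ n : ℕ, μ (Metric.closedBall x ((2:ℝ) ^ n * s)) = 0 := by
    intro n
    have := doubling_iterate μ C hdbl x s n
    rw [h0, mul_zero] at this
    exact le_antisymm this zero_le
  have huniv : (Set.univ : Set X) ⊆ ⋃ n : ℕ, Metric.closedBall x ((2:ℝ) ^ n * s) := by
    intro w _
    obtain ⟨n, hn⟩ := pow_unbounded_of_one_lt (dist w x / s) (one_lt_two (α := ℝ))
    refine Set.mem_iUnion.mpr ⟨n, ?_⟩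
    rw [Metric.mem_closedBall]
    rw [div_lt_iff₀ hs] at hn
    linarith
  have : μ Set.univ = 0 := by
    refine le_antisymm ?_ zero_le
    calc μ Set.univ ≤ μ (⋃ n : ℕ, Metric.closedBall x ((2:ℝ) ^ n * s)) :=
          measure_mono huniv
      _ ≤ ∑' n : ℕ, μ (Metric.closedBall x ((2:ℝ) ^ n * s)) := measure_iUnion_le _
      _ = 0 := by simp [hall]
  exact hdbl.1 (MeasureTheory.Measure.measure_univ_eq_zero.mp this)

/-- In a complete geodesic metric measure space with a `C`-doubling measure, for every
`ε > 0` the explicit constant `δ = (ε/8)·C^{-N} > 0`, where `N` is the smallest integer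
with `2^N·(ε/8) ≥ 2`, is such that for every set `E` and closed ball `B` meeting `E`:
`d_E(B) < δ` implies `sparse(E,B) < ε`. -/
theorem sparse_lt_of_dE_lt (X : Type*) [MetricSpace X] [CompleteSpace X]
    [MeasurableSpace X] [BorelSpace X] (μ : MeasureTheory.Measure X) (C : ℝ) (hC : 0 < C)
    (hgeo : IsGeodesicSpace X) (hdbl : IsDoubling μ C)
    (ε : ℝ) (hε : 0 < ε) (N : ℤ)
    (hN : 2 ≤ (2 : ℝ) ^ N * (ε / 8))
    (hNmin : ∀ m : ℤ, m < N → (2 : ℝ) ^ m * (ε / 8) < 2) :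
    ∀ (E : Set X) (c : X) (r : ℝ), (Metric.closedBall c r ∩ E).Nonempty →
      dE μ E c r < ε / 8 * C ^ (-N) → sparseIn E c r < ε := by
  intro E c r hne hdE
  obtain ⟨e, heB, heE⟩ := hne
  by_contra hcon
  push_neg at hcon
  -- r must be nonnegative since the ball is nonempty
  have hr0 : 0 ≤ r := by
    by_contra hr
    push_neg at hr
    rw [Metric.closedBall_eq_empty.mpr hr] at heB
    exact heB
  rcases eq_or_lt_of_le hr0 with hr | hr
  · -- r = 0 : sparseIn is 0 by division by zero
    rw [sparseIn, ← hr, div_zero] at hcon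
    linarith
  -- main case r > 0
  have hEB : (E ∩ Metric.closedBall c r).Nonempty := ⟨e, heE, heB⟩
  haveI : Nonempty (Metric.closedBall c r) := ⟨⟨c, Metric.mem_closedBall_self hr.le⟩⟩
  -- the sup is at most 2r, so if ε > 2 we are done
  have hsup2 : (⨆ x : (Metric.closedBall c r),
      Metric.infDist (x : X) (E ∩ Metric.closedBall c r)) ≤ 2 * r := by
    refine ciSup_le fun x => ?_
    calc Metric.infDist (x : X) (E ∩ Metric.closedBall c r) ≤ dist (x : X) e :=
          Metric.infDist_le_dist_of_mem ⟨heE, heB⟩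
      _ ≤ dist (x : X) c + dist c e := dist_triangle _ _ _
      _ ≤ r + r := by
          have h1 := Metric.mem_closedBall.mp x.2
          have h2 := Metric.mem_closedBall.mp heB
          rw [dist_comm c e]; linarith
      _ = 2 * r := by ring
  have hε2 : ε ≤ 2 := by
    by_contra hε2
    push_neg at hε2
    have : sparseIn E c r ≤ 2 := by
      rw [sparseIn, div_le_iff₀ hr]
      linarith
    linarith
  -- N ≥ 1
  have hNpos : 0 < N := by
    by_contra hNp
    push_neg at hNp
    have h2N : (2:ℝ) ^ N ≤ 1 := zpow_le_one_of_nonpos₀ one_le_two hNp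
    nlinarith [hN]
  set n : ℕ := N.toNat with hn
  have hnN : (n : ℤ) = N := Int.toNat_of_nonneg hNpos.le
  have h2n : (2:ℝ) ^ n = (2:ℝ) ^ N := by
    rw [← hnN]; exact (zpow_natCast 2 n).symm
  -- from negation, the sup is at least ε r
  have hsup : ε * r ≤ ⨆ x : (Metric.closedBall c r),
      Metric.infDist (x : X) (E ∩ Metric.closedBall c r) := by
    rw [sparseIn, le_div_iff₀ hr] at hcon
    linarith
  set s : ℝ := ε * r / 8 with hs
  have hs0 : 0 < s := by positivity
  -- find a point almost realizing the sup
  have hlt : 7 * s < ⨆ x : (Metric.closedBall c r),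
      Metric.infDist (x : X) (E ∩ Metric.closedBall c r) := by
    have : 7 * s < ε * r := by rw [hs]; nlinarith
    linarith
  obtain ⟨x, hx⟩ := exists_lt_of_lt_ciSup hlt
  have hxB : dist (x : X) c ≤ r := Metric.mem_closedBall.mp x.2
  -- construct y with dist y x ≤ 2s and dist y c ≤ r - 2s
  obtain ⟨y, hyx, hyc⟩ : ∃ y : X, dist y (x : X) ≤ 2 * s ∧ dist y c ≤ r - 2 * s := by
    by_cases hxc : dist (x : X) c ≤ r - 2 * s
    · refine ⟨x, ?_, hxc⟩
      rw [dist_self]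
      positivity
    · push_neg at hxc
      obtain ⟨f, hf0, hf1, hfiso⟩ := hgeo (x : X) c
      have ht1 : (0:ℝ) ≤ 2 * s := by positivity
      have ht2 : 2 * s ≤ dist (x : X) c := by
        have : r - 2 * s ≥ 2 * s := by rw [hs]; nlinarith
        linarith
      refine ⟨f (2 * s), ?_, ?_⟩
      · have := hfiso (2 * s) ⟨ht1, ht2⟩ 0 ⟨le_refl 0, dist_nonneg⟩
        rw [hf0] at this
        rw [this]
        rw [abs_of_nonneg (by linarith)]
        linarith
      · have := hfiso (2 * s) ⟨ht1, ht2⟩ (dist (x : X) c)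
          ⟨dist_nonneg, le_refl _⟩
        rw [hf1] at this
        rw [this, abs_of_nonpos (by linarith)]
        linarith
  -- on the ball B(y, s), dist to E is at least s
  have hlow : ∀ z ∈ Metric.closedBall y s, s ≤ Metric.infDist z E := by
    intro z hz
    have hzy : dist z y ≤ s := Metric.mem_closedBall.mp hz
    have hEne : E.Nonempty := ⟨e, heE⟩
    haveI : Nonempty E := hEne.to_subtype
    rw [Metric.infDist_eq_iInf]
    refine le_ciInf fun e'' => ?_
    obtain ⟨e', he'⟩ := e''
    show s ≤ dist z e'
    by_cases he'B : e' ∈ Metric.closedBall c r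
    · -- e' in the ball: far from x hence from z
      have h1 : 7 * s < dist (x : X) e' := by
        calc 7 * s < Metric.infDist (x : X) (E ∩ Metric.closedBall c r) := hx
          _ ≤ dist (x : X) e' := Metric.infDist_le_dist_of_mem ⟨he', he'B⟩
      have h2 : dist (x : X) e' ≤ dist (x : X) z + dist z e' := dist_triangle _ _ _
      have h3 : dist (x : X) z ≤ dist (x : X) y + dist y z := dist_triangle _ _ _
      rw [dist_comm (x : X) y] at h3
      rw [dist_comm y z] at h3
      linarith
    · -- e' outside the ball: z is deep inside
      rw [Metric.mem_closedBall, not_le] at he'B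
      have h1 : dist e' c ≤ dist e' z + dist z c := dist_triangle _ _ _
      have h2 : dist z c ≤ dist z y + dist y c := dist_triangle _ _ _
      rw [dist_comm e' z] at h1
      linarith
  -- measure comparison
  have hsub1 : Metric.closedBall y s ⊆ Metric.closedBall c r := by
    intro z hz
    have hzy : dist z y ≤ s := Metric.mem_closedBall.mp hz
    rw [Metric.mem_closedBall]
    calc dist z c ≤ dist z y + dist y c := dist_triangle _ _ _
      _ ≤ s + (r - 2 * s) := by linarith
      _ ≤ r := by linarith
  have hsub2 : Metric.closedBall c r ⊆ Metric.closedBall y ((2:ℝ) ^ n * s) := by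
    intro w hw
    rw [Metric.mem_closedBall]
    have hw' : dist w c ≤ r := Metric.mem_closedBall.mp hw
    have h2r : 2 * r ≤ (2:ℝ) ^ n * s := by
      rw [h2n, hs]
      have : (2:ℝ) ^ N * (ε * r / 8) = ((2:ℝ) ^ N * (ε / 8)) * r := by ring
      rw [this]
      nlinarith
    calc dist w y ≤ dist w c + dist c y := dist_triangle _ _ _
      _ ≤ r + r := by rw [dist_comm c y]; linarith
      _ = 2 * r := by ring
      _ ≤ (2:ℝ) ^ n * s := h2r
  have hmeas : μ (Metric.closedBall c r) ≤
      (ENNReal.ofReal C) ^ n * μ (Metric.closedBall y s) :=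
    le_trans (measure_mono hsub2) (doubling_iterate μ C hdbl y s n)
  -- positive and finite measures
  have hμB : 0 < μ (Metric.closedBall c r) := doubling_ball_pos μ C hC hdbl c r hr
  have hμBfin : μ (Metric.closedBall c r) < ⊤ := hdbl.2.1 c r
  have hμy : 0 < μ (Metric.closedBall y s) := doubling_ball_pos μ C hC hdbl y s hs0
  have hμyfin : μ (Metric.closedBall y s) < ⊤ := hdbl.2.1 y s
  -- real versions
  set m : ℝ := (μ (Metric.closedBall c r)).toReal with hm
  set m' : ℝ := (μ (Metric.closedBall y s)).toReal with hm'
  have hm0 : 0 < m := ENNReal.toReal_pos hμB.ne' hμBfin.ne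
  have hm'0 : 0 < m' := ENNReal.toReal_pos hμy.ne' hμyfin.ne
  have hmm' : m ≤ C ^ n * m' := by
    have hfin : ((ENNReal.ofReal C) ^ n * μ (Metric.closedBall y s)) ≠ ⊤ := by
      exact ENNReal.mul_ne_top (by simp [ENNReal.pow_ne_top, ENNReal.ofReal_ne_top])
        hμyfin.ne
    have := ENNReal.toReal_mono hfin hmeas
    rwa [ENNReal.toReal_mul, ENNReal.toReal_pow, ENNReal.toReal_ofReal hC.le] at this
  -- integrability of dist to E on the big ball
  have hcont : Continuous fun z : X => Metric.infDist z E :=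
    Metric.continuous_infDist_pt E
  have hint : IntegrableOn (fun z : X => Metric.infDist z E)
      (Metric.closedBall c r) μ := by
    refine Measure.integrableOn_of_bounded hμBfin.ne hcont.aestronglyMeasurable
      (M := 2 * r) ?_
    filter_upwards [MeasureTheory.ae_restrict_mem measurableSet_closedBall]
      with z hz
    rw [Real.norm_eq_abs, abs_of_nonneg Metric.infDist_nonneg]
    calc Metric.infDist z E ≤ dist z e := Metric.infDist_le_dist_of_mem heE
      _ ≤ dist z c + dist c e := dist_triangle _ _ _
      _ ≤ r + r := by
          have := Metric.mem_closedBall.mp hz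
          have := Metric.mem_closedBall.mp heB
          rw [dist_comm c e]; linarith
      _ = 2 * r := by ring
  -- lower bound for the integral
  have hint' : IntegrableOn (fun z : X => Metric.infDist z E)
      (Metric.closedBall y s) μ := hint.mono_set hsub1
  have hI1 : s * m' ≤ ∫ z in Metric.closedBall y s, Metric.infDist z E ∂μ :=
    by
      have := setIntegral_ge_of_const_le_real measurableSet_closedBall hμyfin.ne hlow hint'
      exact this
  have hI2 : (∫ z in Metric.closedBall y s, Metric.infDist z E ∂μ) ≤
      ∫ z in Metric.closedBall c r, Metric.infDist z E ∂μ := by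
    refine setIntegral_mono_set hint ?_ (Filter.Eventually.of_forall hsub1)
    filter_upwards with z using Metric.infDist_nonneg
  -- conclude
  have hdElow : ε / 8 * C ^ (-N) ≤ dE μ E c r := by
    rw [dE]
    rw [le_div_iff₀ (by positivity)]
    have hCn : C ^ (-N) = (C ^ n)⁻¹ := by
      rw [← hnN, zpow_neg, zpow_natCast]
    rw [hCn]
    have key : ε / 8 * (C ^ n)⁻¹ * (r * m) ≤ s * m' := by
      have hCn0 : (0:ℝ) < C ^ n := by positivity
      rw [hs]
      calc ε / 8 * (C ^ n)⁻¹ * (r * m)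
          ≤ ε / 8 * (C ^ n)⁻¹ * (r * (C ^ n * m')) :=
            mul_le_mul_of_nonneg_left (mul_le_mul_of_nonneg_left hmm' hr.le)
              (by positivity)
        _ = ε * r / 8 * m' := by field_simp
    linarith [le_trans key (le_trans hI1 hI2)]
  linarith
end
end
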